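/- arXiv:2003.10832 — 9 statements merged into one kernel-verified Lean document; each statement's English description precedes it below -/
import Mathlib

section
/- Let a ∈ (0,∞), let P be a finite subset of (0,a), and let S : ℝ → ℝ satisfy: (S1) S(−x) = −S(x) and S(a+x) = −S(x) for all x ∈ [0,∞); (S2) 0 < S(x) < x for all x ∈ (0,a); (S3) S is continuous on [0,a], continuously differentiable on [0,a), and twice continuously differentiable on [0,a) \ P; (S4) S'(x)² − S''(x)·S(x) ≥ 1 for all x ∈ [0,a) \ P. Then for all real x ≠ 0, (a² − x²)/(a² + x²) ≤ S(x)/x. -/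
open Real Set Filter Topology

set_option maxHeartbeats 1000000

/-- Generalized Redheffer inequality: if `S : ℝ → ℝ` satisfies (S1)–(S4) with
anti-period `a > 0` and exceptional finite set `P ⊆ (0,a)`, then
`(a² − x²)/(a² + x²) ≤ S(x)/x` for all `x ≠ 0`. -/
theorem generalized_redheffer (a : ℝ) (ha : 0 < a) (P : Set ℝ) (hPfin : P.Finite)
    (hPsub : P ⊆ Ioo 0 a) (S : ℝ → ℝ)
    (hS1 : ∀ x ∈ Ici (0:ℝ), S (-x) = -S x ∧ S (a + x) = -S x)
    (hS2 : ∀ x ∈ Ioo 0 a, 0 < S x ∧ S x < x)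
    (hS3 : ContinuousOn S (Icc 0 a) ∧ ContDiffOn ℝ 1 S (Ico 0 a) ∧
      ContDiffOn ℝ 2 S (Ico 0 a \ P))
    (hS4 : ∀ x ∈ Ico 0 a \ P, (deriv S x) ^ 2 - deriv (deriv S) x * S x ≥ 1) :
    ∀ x : ℝ, x ≠ 0 → (a ^ 2 - x ^ 2) / (a ^ 2 + x ^ 2) ≤ S x / x := by
  obtain ⟨hScont, hC1, hC2⟩ := hS3
  -- basic values
  have hS0 : S 0 = 0 := by
    have h := (hS1 0 (by simp)).1
    simp at h; linarith
  have hSa : S a = 0 := by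
    have h := (hS1 0 (by simp)).2
    simpa [hS0] using h
  have hSnonneg : ∀ t ∈ Icc (0:ℝ) a, 0 ≤ S t := by
    intro t ht
    rcases eq_or_lt_of_le ht.1 with h0 | h0
    · simp [← h0, hS0]
    rcases eq_or_lt_of_le ht.2 with h1 | h1
    · simp [h1, hSa]
    · exact (hS2 t ⟨h0, h1⟩).1.le
  have hSle : ∀ t ∈ Icc (0:ℝ) a, S t ≤ t := by
    intro t ht
    rcases eq_or_lt_of_le ht.1 with h0 | h0
    · simp [← h0, hS0]
    rcases eq_or_lt_of_le ht.2 with h1 | h1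
    · rw [h1, hSa]; exact ha.le
    · exact (hS2 t ⟨h0, h1⟩).2.le
  -- differentiability of S at interior points
  have hSdiff : ∀ y ∈ Ioo (0:ℝ) a, HasDerivAt S (deriv S y) y := by
    intro y hy
    exact ((hC1.contDiffAt (Ico_mem_nhds hy.1 hy.2)).differentiableAt one_ne_zero).hasDerivAt
  have hDScont : ContinuousOn (deriv S) (Ioo 0 a) :=
    (hC1.mono Ioo_subset_Ico_self).continuousOn_deriv_of_isOpen isOpen_Ioo le_rfl
  have hScont' : ContinuousOn S (Ioo 0 a) := hScont.mono Ioo_subset_Icc_self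
  have cont1 : Continuous (fun x : ℝ => a^2 + x^2) := continuous_const.add (continuous_pow 2)
  have cont2 : Continuous (fun x : ℝ => x*(a^2 - x^2)) :=
    continuous_id.mul (continuous_const.sub (continuous_pow 2))
  have cont3 : Continuous (fun x : ℝ => a^2 - 3*x^2) :=
    continuous_const.sub (continuous_const.mul (continuous_pow 2))
  have cont4 : ∀ b : ℝ, Continuous (fun x : ℝ => b*x) :=
    fun b => continuous_const.mul continuous_id
  -- THE KEY INEQUALITY on (0,a)
  have key : ∀ x ∈ Ioo (0:ℝ) a, 0 ≤ (a^2 + x^2) * S x - x * (a^2 - x^2) := by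
    set G : ℝ → ℝ := fun x => (a^2 + x^2) * S x - x * (a^2 - x^2) with hGdef
    have hGcont : ContinuousOn G (Icc 0 a) := by
      rw [hGdef]
      exact (cont1.continuousOn.mul hScont).sub cont2.continuousOn
    obtain ⟨c, hcmem, hmin⟩ :=
      isCompact_Icc.exists_isMinOn (nonempty_Icc.2 ha.le) hGcont
    intro x hx
    by_contra hneg'
    push_neg at hneg'
    have hGx : G x < 0 := by simpa [hGdef] using hneg'
    have hGc : G c < 0 :=
      lt_of_le_of_lt (isMinOn_iff.1 hmin x (Ioo_subset_Icc_self hx)) hGx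
    have hG0 : G 0 = 0 := by simp [hGdef, hS0]
    have hGa : G a = 0 := by simp [hGdef, hSa]
    have hc0 : c ≠ 0 := by intro h; rw [h, hG0] at hGc; exact absurd hGc (lt_irrefl 0)
    have hca : c ≠ a := by intro h; rw [h, hGa] at hGc; exact absurd hGc (lt_irrefl 0)
    have hcI : c ∈ Ioo (0:ℝ) a :=
      ⟨lt_of_le_of_ne hcmem.1 (Ne.symm hc0), lt_of_le_of_ne hcmem.2 hca⟩
    have hs0 : 0 < S c := (hS2 c hcI).1
    have hsc : (a^2 + c^2) * S c < c * (a^2 - c^2) := by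
      have h : (a^2 + c^2) * S c - c * (a^2 - c^2) < 0 := by simpa [hGdef] using hGc
      linarith
    -- first derivative of G
    set H : ℝ → ℝ := fun y => 2*y*S y + (a^2+y^2)*deriv S y - (a^2 - 3*y^2) with hHdef
    have hGderiv : ∀ y ∈ Ioo (0:ℝ) a, HasDerivAt G (H y) y := by
      intro y hy
      have hp : HasDerivAt (fun z : ℝ => a^2 + z^2) (2*y) y := by
        have h := (hasDerivAt_pow 2 y).const_add (a^2)
        refine h.congr_deriv ?_
        norm_num
      have hq : HasDerivAt (fun z : ℝ => z*(a^2 - z^2)) (a^2 - 3*y^2) y := by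
        have h := (hasDerivAt_id y).mul ((hasDerivAt_pow 2 y).const_sub (a^2))
        refine h.congr_deriv ?_
        norm_num; ring
      exact (hp.mul (hSdiff y hy)).sub hq
    have hlocal : IsLocalMin G c := hmin.isLocalMin (Icc_mem_nhds hcI.1 hcI.2)
    have hHc0 : H c = 0 := by
      rw [← (hGderiv c hcI).deriv]; exact hlocal.deriv_eq_zero
    have hp : (a^2+c^2) * deriv S c = a^2 - 3*c^2 - 2*c*S c := by
      have h : 2*c*S c + (a^2+c^2)*deriv S c - (a^2 - 3*c^2) = 0 := hHc0
      linarith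
    -- the comparison function Φ
    set Φ : ℝ → ℝ :=
      fun y => 2*S y + 4*y*deriv S y + 6*y + (a^2+y^2)*((deriv S y)^2 - 1)/S y with hΦdef
    have hacpos : (0:ℝ) < a^2 + c^2 := by positivity
    have hslt : S c < c := by
      nlinarith [hsc, hacpos, mul_pos (mul_pos hcI.1 hcI.1) hcI.1]
    have hE0 : 2*(S c)^2*(a^2-c^2) + 6*c*(S c)*(a^2+c^2) - 8*c^2*(a^2-c^2) < 0 := by
      have hD : 0 < c*(a^2-c^2) - (a^2+c^2)*S c := by linarith
      have ha2c : 0 ≤ a^2 - c^2 := by nlinarith [hcI.2, hcI.1]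
      have hc2s : 0 ≤ c^2 - (S c)^2 := by nlinarith [hslt, hs0]
      nlinarith [mul_pos hD hcI.1, mul_nonneg ha2c hc2s]
    have hnum : (2*S c + 4*c*deriv S c + 6*c) * S c + (a^2+c^2)*((deriv S c)^2 - 1) < 0 := by
      have expand : ((2*S c + 4*c*deriv S c + 6*c) * S c + (a^2+c^2)*((deriv S c)^2 - 1))
          * (a^2+c^2)
          = 2*(S c)^2*(a^2-c^2) + 6*c*(S c)*(a^2+c^2) - 8*c^2*(a^2-c^2) := by
        linear_combination ((a^2+c^2)*deriv S c + (a^2-3*c^2-2*c*S c) + 4*c*S c) * hp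
      nlinarith [expand, hE0, hacpos]
    have hΦc : Φ c < 0 := by
      have heq : Φ c = ((2*S c + 4*c*deriv S c + 6*c) * S c
          + (a^2+c^2)*((deriv S c)^2 - 1))/S c := by
        simp only [hΦdef]
        field_simp
      rw [heq]; exact div_neg_of_neg_of_pos hnum hs0
    have hΦcont : ContinuousOn Φ (Ioo 0 a) := by
      rw [hΦdef]
      apply ContinuousOn.add
      · exact ((continuousOn_const.mul hScont').add
          (((cont4 4).continuousOn).mul hDScont)).add ((cont4 6).continuousOn)
      · exact ContinuousOn.div (cont1.continuousOn.mul
            ((hDScont.pow 2).sub continuousOn_const)) hScont'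
            (fun y hy => ne_of_gt (hS2 y hy).1)
    have hΦat : ContinuousAt Φ c :=
      (hΦcont.continuousWithinAt hcI).continuousAt (Ioo_mem_nhds hcI.1 hcI.2)
    have hev : ∀ᶠ y in 𝓝 c, Φ y < 0 ∧ y ∈ Ioo (0:ℝ) a ∧ y ∉ P \ {c} := by
      have h1 : ∀ᶠ y in 𝓝 c, Φ y < 0 := by
        have h := hΦat.preimage_mem_nhds (Iio_mem_nhds hΦc)
        filter_upwards [h] with y hy using hy
      have h2 : Ioo (0:ℝ) a ∈ 𝓝 c := Ioo_mem_nhds hcI.1 hcI.2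
      have h3 : (P \ {c})ᶜ ∈ 𝓝 c := by
        refine ((hPfin.subset diff_subset).isClosed).isOpen_compl.mem_nhds ?_
        simp
      filter_upwards [h1, h2, h3] with y hy1 hy2 hy3
      exact ⟨hy1, hy2, hy3⟩
    obtain ⟨ε, hε, hball⟩ := Metric.eventually_nhds_iff.1 hev
    set δ := ε/2 with hδdef
    have hδ0 : 0 < δ := by positivity
    have hprop : ∀ y ∈ Icc c (c+δ), Φ y < 0 ∧ y ∈ Ioo (0:ℝ) a ∧ y ∉ P \ {c} := by
      intro y hy
      apply hball
      rw [Real.dist_eq, abs_lt]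
      constructor
      · linarith [hy.1]
      · linarith [hy.2]
    -- second derivative bound off P
    have hVopen : IsOpen (Ioo (0:ℝ) a \ P) := isOpen_Ioo.sdiff hPfin.isClosed
    have hC2' : ContDiffOn ℝ 2 S (Ioo (0:ℝ) a \ P) :=
      hC2.mono (diff_subset_diff_left Ioo_subset_Ico_self)
    have hD1C1 : ContDiffOn ℝ 1 (deriv S) (Ioo (0:ℝ) a \ P) :=
      hC2'.deriv_of_isOpen hVopen (by norm_num)
    set K : ℝ → ℝ :=
      fun y => 2*S y + 4*y*deriv S y + (a^2+y^2)*deriv (deriv S) y + 6*y with hKdef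
    have hHderiv : ∀ y ∈ Ioo c (c+δ), HasDerivAt H (K y) y ∧ K y < 0 := by
      intro y hy
      obtain ⟨hΦy, hyI, hyP⟩ := hprop y ⟨hy.1.le, hy.2.le⟩
      have hyne : y ≠ c := ne_of_gt hy.1
      have hyV : y ∈ Ioo (0:ℝ) a \ P := ⟨hyI, fun hp' => hyP ⟨hp', hyne⟩⟩
      have hsy : 0 < S y := (hS2 y hyI).1
      have hd2 : HasDerivAt (deriv S) (deriv (deriv S) y) y :=
        ((hD1C1.contDiffAt (hVopen.mem_nhds hyV)).differentiableAt one_ne_zero).hasDerivAt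
      have hpoly : HasDerivAt (fun z : ℝ => a^2 + z^2) (2*y) y := by
        have h := (hasDerivAt_pow 2 y).const_add (a^2)
        refine h.congr_deriv ?_
        norm_num
      constructor
      · have h1 : HasDerivAt (fun z : ℝ => 2*z*S z) (2*S y + 2*y*deriv S y) y := by
          have h := ((hasDerivAt_id y).const_mul (2:ℝ)).mul (hSdiff y hyI)
          refine h.congr_deriv ?_
          simp only [id_eq]; ring
        have h2 : HasDerivAt (fun z : ℝ => (a^2+z^2)*deriv S z)
            (2*y*deriv S y + (a^2+y^2)*deriv (deriv S) y) y := hpoly.mul hd2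
        have h3 : HasDerivAt (fun z : ℝ => a^2 - 3*z^2) (-(6*y)) y := by
          have h := ((hasDerivAt_pow 2 y).const_mul (3:ℝ)).const_sub (a^2)
          refine h.congr_deriv ?_
          norm_num [pow_one]; ring
        have h4 := (h1.add h2).sub h3
        have hHeq : H = fun z : ℝ => 2*z*S z + (a^2+z^2)*deriv S z - (a^2 - 3*z^2) := hHdef
        rw [hHeq]
        refine h4.congr_deriv ?_
        simp only [hKdef]
        ring
      · have h4 := hS4 y ⟨Ioo_subset_Ico_self hyI, hyV.2⟩
        have hd2le : deriv (deriv S) y ≤ ((deriv S y)^2 - 1)/S y := by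
          rw [le_div_iff₀ hsy]; nlinarith [h4]
        have h5 : (a^2+y^2)*deriv (deriv S) y ≤ (a^2+y^2)*((deriv S y)^2 - 1)/S y := by
          rw [mul_div_assoc]
          exact mul_le_mul_of_nonneg_left hd2le (by positivity)
        have hKΦ : K y ≤ Φ y := by
          simp only [hKdef, hΦdef]
          linarith
        linarith
    -- H is strictly decreasing on [c, c+δ], so G' = H < 0 there
    have hIccsub : Icc c (c+δ) ⊆ Ioo (0:ℝ) a := fun y hy => (hprop y hy).2.1
    have hHcont : ContinuousOn H (Ioo 0 a) := by
      rw [hHdef]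
      exact ((((cont4 2).continuousOn).mul hScont').add
        (cont1.continuousOn.mul hDScont)).sub cont3.continuousOn
    have hHanti : StrictAntiOn H (Icc c (c+δ)) := by
      apply strictAntiOn_of_deriv_neg (convex_Icc _ _) (hHcont.mono hIccsub)
      intro y hy
      rw [interior_Icc] at hy
      rw [(hHderiv y hy).1.deriv]
      exact (hHderiv y hy).2
    have hGanti : StrictAntiOn G (Icc c (c+δ)) := by
      apply strictAntiOn_of_deriv_neg (convex_Icc _ _)
        (hGcont.mono (hIccsub.trans Ioo_subset_Icc_self))
      intro y hy
      rw [interior_Icc] at hy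
      rw [(hGderiv y (hIccsub (Ioo_subset_Icc_self hy))).deriv]
      have h := hHanti (left_mem_Icc.2 (by linarith [hy.2])) (Ioo_subset_Icc_self hy) hy.1
      rw [hHc0] at h
      exact h
    have hend : c + δ ∈ Icc (0:ℝ) a :=
      Ioo_subset_Icc_self (hIccsub (right_mem_Icc.2 (by linarith)))
    have hlt : G (c+δ) < G c :=
      hGanti (left_mem_Icc.2 (by linarith)) (right_mem_Icc.2 (by linarith)) (by linarith)
    exact absurd (isMinOn_iff.1 hmin _ hend) (not_le.2 hlt)
  -- the inequality for positive x
  have main_pos : ∀ x : ℝ, 0 < x → (a ^ 2 - x ^ 2) / (a ^ 2 + x ^ 2) ≤ S x / x := by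
    intro x hx
    rw [div_le_div_iff₀ (by positivity) hx]
    rcases lt_or_ge x a with hxa | hxa
    · have hk := key x ⟨hx, hxa⟩
      nlinarith [hk]
    · -- anti-periodicity: S x ≥ a - x
      have hper : ∀ y : ℝ, 0 ≤ y → S (y + 2*a) = S y := by
        intro y hy
        have h1 := (hS1 (a+y) (by simp; linarith)).2
        have h2 := (hS1 y hy).2
        have he : y + 2*a = a + (a + y) := by ring
        rw [he, h1, h2, neg_neg]
      have hperN : ∀ n : ℕ, ∀ y : ℝ, 0 ≤ y → S (y + 2*a*n) = S y := by
        intro n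
        induction n with
        | zero => intro y hy; simp
        | succ m ih =>
          intro y hy
          have hmn : (0:ℝ) ≤ (m:ℝ) := Nat.cast_nonneg m
          have he : y + 2*a*((m:ℕ)+1 : ℕ) = (y + 2*a*m) + 2*a := by push_cast; ring
          rw [he, hper (y + 2*a*m) (by nlinarith), ih y hy]
      have h2a : (0:ℝ) < 2*a := by linarith
      set n := ⌊x/(2*a)⌋₊ with hn
      have hxdiv : (0:ℝ) ≤ x/(2*a) := by positivity
      have hfl : (n:ℝ) ≤ x/(2*a) := Nat.floor_le hxdiv
      have hfl2 : x/(2*a) < n + 1 := Nat.lt_floor_add_one _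
      have hn2a : (n:ℝ)*(2*a) ≤ x := (le_div_iff₀ h2a).1 hfl
      have hx2a : x < ((n:ℝ)+1)*(2*a) := by
        have := (div_lt_iff₀ h2a).1 hfl2
        linarith
      set t := x - 2*a*(n:ℝ) with htdef
      have ht0 : 0 ≤ t := by rw [htdef]; nlinarith [hn2a]
      have htlt : t < 2*a := by rw [htdef]; nlinarith [hx2a]
      have htx : t ≤ x := by
        have hmn : (0:ℝ) ≤ (n:ℝ) := Nat.cast_nonneg n
        rw [htdef]; nlinarith
      have hst : S x = S t := by
        have h := hperN n t ht0
        rw [show t + 2*a*(n:ℝ) = x from by rw [htdef]; ring] at h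
        exact h
      have hlow : a - x ≤ S x := by
        rw [hst]
        rcases le_or_gt t a with hta | hta
        · have := hSnonneg t ⟨ht0, hta⟩; linarith
        · have hu1 : 0 ≤ t - a := by linarith
          have hu2 : t - a ≤ a := by linarith
          have he : S t = -S (t-a) := by
            have h := (hS1 (t-a) hu1).2
            rw [show a + (t-a) = t from by ring] at h
            exact h
          have := hSle (t-a) ⟨hu1, hu2⟩
          rw [he]; linarith
      nlinarith [hlow, mul_nonneg ha.le (sq_nonneg (a-x)),
        mul_le_mul_of_nonneg_right hlow (by positivity : (0:ℝ) ≤ a^2+x^2)]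
  -- conclusion
  intro x hx
  rcases lt_trichotomy x 0 with hneg | h0 | hpos
  · have hxpos : 0 < -x := by linarith
    have h1 : S x = -S (-x) := by
      have h := (hS1 (-x) hxpos.le).1
      rw [neg_neg] at h; exact h
    have h2 := main_pos (-x) hxpos
    have e : -S (-x) / x = S (-x) / (-x) := by
      rw [neg_div, div_neg]
    rw [h1, e]
    have hsq : (-x:ℝ)^2 = x^2 := by ring
    rw [hsq] at h2
    exact h2
  · exact absurd h0 hx
  · exact main_pos x hpos
end

section
/- For all real x ≠ 0, (π² − x²)/(π² + x²) ≤ (sin x)/x (Redheffer's inequality). -/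
open Real Filter Finset Topology

lemma redheffer_prod_bound (y : ℝ) (hy0 : 0 ≤ y) (hy1 : y ≤ 1) :
    ∀ n : ℕ, (1 - y) * ((n : ℝ) + 1 + y) / (((n : ℝ) + 1) * (1 + y))
      ≤ ∏ j ∈ Finset.range (n + 1), (1 - y / ((j : ℝ) + 1) ^ 2) := by
  intro n
  induction n with
  | zero =>
    simp only [Nat.cast_zero, Nat.zero_add, zero_add, Finset.prod_range_one]
    rw [div_le_iff₀ (by positivity)]
    nlinarith
  | succ n ih =>
    rw [Finset.prod_range_succ]
    have hN : (0:ℝ) ≤ (n : ℝ) := Nat.cast_nonneg n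
    push_cast
    have hfac : 0 ≤ 1 - y / ((n:ℝ) + 1 + 1) ^ 2 := by
      have h1 : y / ((n:ℝ)+1+1)^2 ≤ 1 := by
        rw [div_le_one (by positivity)]
        nlinarith
      linarith
    have key : (1 - y) * ((n : ℝ) + 1 + 1 + y) / (((n : ℝ) + 1 + 1) * (1 + y))
        ≤ ((1 - y) * ((n : ℝ) + 1 + y) / (((n : ℝ) + 1) * (1 + y)))
          * (1 - y / ((n:ℝ) + 1 + 1) ^ 2) := by
      have heq : 1 - y / ((n:ℝ) + 1 + 1) ^ 2
          = (((n:ℝ)+1+1)^2 - y) / ((n:ℝ)+1+1)^2 := by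
        field_simp
      rw [heq, div_mul_div_comm, div_le_div_iff₀ (by positivity) (by positivity)]
      nlinarith [mul_nonneg (mul_nonneg hy0 (by linarith : (0:ℝ) ≤ 1 - y)) (by linarith : (0:ℝ) ≤ 1 + y),
        mul_nonneg (mul_nonneg (mul_nonneg hy0 (by linarith : (0:ℝ) ≤ 1 - y)) (by linarith : (0:ℝ) ≤ 1 + y)) hN,
        mul_nonneg (mul_nonneg (mul_nonneg (mul_nonneg hy0 (by linarith : (0:ℝ) ≤ 1 - y)) (by linarith : (0:ℝ) ≤ 1 + y)) hN) hN]
    calc (1 - y) * ((n : ℝ) + 1 + 1 + y) / (((n : ℝ) + 1 + 1) * (1 + y))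
        ≤ ((1 - y) * ((n : ℝ) + 1 + y) / (((n : ℝ) + 1) * (1 + y)))
          * (1 - y / ((n:ℝ) + 1 + 1) ^ 2) := key
      _ ≤ _ := mul_le_mul_of_nonneg_right ih hfac

lemma redheffer_sin_ge (x : ℝ) (hx : 0 < x) (hxpi : x ≤ π) :
    x * (π ^ 2 - x ^ 2) / (π ^ 2 + x ^ 2) ≤ Real.sin x := by
  set y : ℝ := (x / π) ^ 2 with hy
  have hpi : (0:ℝ) < π := pi_pos
  have hy0 : 0 ≤ y := sq_nonneg _
  have hy1 : y ≤ 1 := by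
    rw [hy, sq_le_one_iff_abs_le_one, abs_div, abs_of_pos hx, abs_of_pos hpi,
      div_le_one hpi]
    exact hxpi
  have h1y : (0:ℝ) < 1 + y := by linarith
  have hf : Tendsto (fun n : ℕ => π * (x / π) *
      ∏ j ∈ Finset.range n, ((1 : ℝ) - (x / π) ^ 2 / ((j : ℝ) + 1) ^ 2))
      atTop (𝓝 (Real.sin (π * (x / π)))) := Real.tendsto_euler_sin_prod (x / π)
  have hxπ : π * (x / π) = x := by field_simp
  rw [hxπ] at hf
  -- lower bound sequence tends to x * (1 - y) / (1 + y)
  have hg : Tendsto (fun n : ℕ => x * ((1 - y) * ((n : ℝ) + y) / ((n : ℝ) * (1 + y))))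
      atTop (𝓝 (x * ((1 - y) / (1 + y)))) := by
    have h0 : Tendsto (fun n : ℕ => (1 : ℝ) + y * (1 / (n:ℝ))) atTop (𝓝 (1 + y * 0)) :=
      tendsto_const_nhds.add (tendsto_const_nhds.mul tendsto_one_div_atTop_nhds_zero_nat)
    have h0' : Tendsto (fun n : ℕ => x * ((1 - y) / (1 + y)) * ((1 : ℝ) + y * (1 / (n:ℝ))))
        atTop (𝓝 (x * ((1 - y) / (1 + y)) * (1 + y * 0))) := tendsto_const_nhds.mul h0
    rw [show (1:ℝ) + y * 0 = 1 by ring, mul_one] at h0'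
    apply h0'.congr'
    filter_upwards [eventually_ge_atTop 1] with n hn
    have hn' : (0:ℝ) < (n:ℝ) := by exact_mod_cast hn
    field_simp
  have hle : x * ((1 - y) / (1 + y)) ≤ Real.sin x := by
    refine le_of_tendsto_of_tendsto hg hf ?_
    filter_upwards [eventually_ge_atTop 1] with n hn
    obtain ⟨m, rfl⟩ := Nat.exists_eq_add_of_le hn
    have hb := redheffer_prod_bound y hy0 hy1 m
    have hxnn : (0:ℝ) ≤ x := hx.le
    calc x * ((1 - y) * ((1 + m : ℕ) + y) / (((1 + m : ℕ) : ℝ) * (1 + y)))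
        = x * ((1 - y) * ((m : ℝ) + 1 + y) / (((m : ℝ) + 1) * (1 + y))) := by
          push_cast; ring_nf
      _ ≤ x * ∏ j ∈ Finset.range (m + 1), (1 - y / ((j : ℝ) + 1) ^ 2) :=
          mul_le_mul_of_nonneg_left hb hxnn
      _ = x * ∏ j ∈ Finset.range (1 + m), ((1 : ℝ) - (x / π) ^ 2 / ((j : ℝ) + 1) ^ 2) := by
          rw [Nat.add_comm 1 m]
  have heq : x * ((1 - y) / (1 + y)) = x * (π ^ 2 - x ^ 2) / (π ^ 2 + x ^ 2) := by
    rw [hy]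
    have hπ0 : π ≠ 0 := hpi.ne'
    field_simp
  linarith [hle, heq.symm.le]

lemma redheffer_pos (x : ℝ) (hx : 0 < x) :
    (π ^ 2 - x ^ 2) / (π ^ 2 + x ^ 2) ≤ Real.sin x / x := by
  have hpi : (0:ℝ) < π := pi_pos
  have hden : (0:ℝ) < π ^ 2 + x ^ 2 := by positivity
  rw [div_le_div_iff₀ hden hx]
  rcases le_or_gt x π with h | h
  · have := redheffer_sin_ge x hx h
    rw [div_le_iff₀ hden] at this
    nlinarith
  · -- x ≥ π : sin x ≥ π - x
    have h1 : Real.sin (x - π) ≤ x - π := Real.sin_le (by linarith)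
    have h2 : Real.sin x = -Real.sin (x - π) := by
      rw [← Real.sin_add_pi, sub_add_cancel]
    have h3 : π - x ≤ Real.sin x := by rw [h2]; linarith
    nlinarith [sq_nonneg (x - π)]

/-- Redheffer's inequality: `(π² − x²)/(π² + x²) ≤ sin x / x` for all `x ≠ 0`. -/
theorem redheffer (x : ℝ) (hx : x ≠ 0) :
    (π ^ 2 - x ^ 2) / (π ^ 2 + x ^ 2) ≤ Real.sin x / x := by
  rcases hx.lt_or_gt with h | h
  · have := redheffer_pos (-x) (by linarith)
    rw [Real.sin_neg, neg_pow, neg_div_neg_eq] at this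
    simpa using this
  · exact redheffer_pos x h
end

section
/- Let 2 ≤ p < ∞ and set sin_p := sin_{p,p} and π_p := π_{p,p}. Then for all real x ≠ 0, (π_p² − x²)/(π_p² + x²) ≤ (sin_p x)/x. -/
set_option maxHeartbeats 1000000

open Real Set

/-- `F_{p,q}(x) = ∫₀ˣ (1 - t^q)^{-1/p} dt`. -/
noncomputable def genF (p q : ℝ) (x : ℝ) : ℝ :=
  ∫ t in (0:ℝ)..x, (1 - t ^ q) ^ (-(1 / p))

/-- The generalized π: `π_{p,q} = 2 F_{p,q}(1)`. -/
noncomputable def genPi (p q : ℝ) : ℝ := 2 * genF p q 1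

/-- The inverse function of `F_{p,q} : [0,1] → [0, π_{p,q}/2]`;
for `x ∈ [0, π_{p,q}/2]` this is exactly `F_{p,q}⁻¹(x)` since `F_{p,q}`
is a continuous strictly increasing bijection of `[0,1]` onto `[0, π_{p,q}/2]`. -/
noncomputable def sinBase (p q : ℝ) (x : ℝ) : ℝ :=
  sSup {s : ℝ | s ∈ Icc (0:ℝ) 1 ∧ genF p q s ≤ x}

/-- `sin_{p,q}` on `[0, π_{p,q}]`: equals `F_{p,q}⁻¹` on `[0, π_{p,q}/2]` and is
extended to `(π_{p,q}/2, π_{p,q}]` by `sin_{p,q}(π_{p,q} - x)`. -/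
noncomputable def sinHalf (p q : ℝ) (x : ℝ) : ℝ :=
  if x ≤ genPi p q / 2 then sinBase p q x else sinBase p q (genPi p q - x)

/-- `sin_{p,q}` on all of `ℝ`: the odd `2π_{p,q}`-periodic continuation. -/
noncomputable def genSin (p q : ℝ) (x : ℝ) : ℝ :=
  let a := genPi p q
  let y := x - 2 * a * (⌊x / (2 * a)⌋ : ℝ)
  if y ≤ a then sinHalf p q y else -(sinHalf p q (2 * a - y))

/-- `cos_{p,q} x = (sin_{p,q} x)'`. -/
noncomputable def genCos (p q : ℝ) (x : ℝ) : ℝ := deriv (genSin p q) x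

/-! ### Taylor-type bounds for `Real.sin` -/

private lemma aux_mono {f f' : ℝ → ℝ} (hf : ∀ x, HasDerivAt f (f' x) x)
    (h0 : ∀ x, 0 ≤ x → 0 ≤ f' x) {x : ℝ} (hx : 0 ≤ x) : f 0 ≤ f x := by
  have hm : MonotoneOn f (Ici 0) := by
    apply monotoneOn_of_deriv_nonneg (convex_Ici 0)
    · exact fun y _ => (hf y).differentiableAt.continuousAt.continuousWithinAt
    · intro y _; exact (hf y).differentiableAt.differentiableWithinAt
    · intro y hy
      rw [(hf y).deriv]
      exact h0 y (le_of_lt (by simpa [interior_Ici] using hy))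
  exact hm self_mem_Ici hx hx

private lemma sin_ge_t3 {x : ℝ} (hx : 0 ≤ x) : x - x^3/6 ≤ Real.sin x := by
  have hd : ∀ y : ℝ, HasDerivAt (fun z => Real.sin z - z + z^3/6)
      (Real.cos y - 1 + y^2/2) y := by
    intro y
    have h := ((Real.hasDerivAt_sin y).sub (hasDerivAt_id y)).add
      ((hasDerivAt_pow 3 y).div_const 6)
    refine h.congr_deriv ?_
    push_cast
    ring
  have := aux_mono hd (fun y _ => by nlinarith [Real.one_sub_sq_div_two_le_cos (x := y)]) hx
  simp at this
  linarith

private lemma cos_le_t4 {x : ℝ} (hx : 0 ≤ x) : Real.cos x ≤ 1 - x^2/2 + x^4/24 := by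
  have hd : ∀ y : ℝ, HasDerivAt (fun z => 1 - z^2/2 + z^4/24 - Real.cos z)
      (-y + y^3/6 + Real.sin y) y := by
    intro y
    have h := (((hasDerivAt_const y (1:ℝ)).sub ((hasDerivAt_pow 2 y).div_const 2)).add
      ((hasDerivAt_pow 4 y).div_const 24)).sub (Real.hasDerivAt_cos y)
    refine h.congr_deriv ?_
    push_cast
    ring
  have := aux_mono hd (fun y hy => by nlinarith [sin_ge_t3 hy]) hx
  simp at this
  linarith

private lemma sin_le_t5 {x : ℝ} (hx : 0 ≤ x) : Real.sin x ≤ x - x^3/6 + x^5/120 := by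
  have hd : ∀ y : ℝ, HasDerivAt (fun z => z - z^3/6 + z^5/120 - Real.sin z)
      (1 - y^2/2 + y^4/24 - Real.cos y) y := by
    intro y
    have h := (((hasDerivAt_id y).sub ((hasDerivAt_pow 3 y).div_const 6)).add
      ((hasDerivAt_pow 5 y).div_const 120)).sub (Real.hasDerivAt_sin y)
    refine h.congr_deriv ?_
    push_cast
    ring
  have := aux_mono hd (fun y hy => by nlinarith [cos_le_t4 hy]) hx
  simp at this
  linarith

private lemma cos_ge_t6 {x : ℝ} (hx : 0 ≤ x) : 1 - x^2/2 + x^4/24 - x^6/720 ≤ Real.cos x := by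
  have hd : ∀ y : ℝ, HasDerivAt (fun z => Real.cos z - (1 - z^2/2 + z^4/24 - z^6/720))
      (-Real.sin y + y - y^3/6 + y^5/120) y := by
    intro y
    have h := (Real.hasDerivAt_cos y).sub
      ((((hasDerivAt_const y (1:ℝ)).sub ((hasDerivAt_pow 2 y).div_const 2)).add
      ((hasDerivAt_pow 4 y).div_const 24)).sub ((hasDerivAt_pow 6 y).div_const 720))
    refine h.congr_deriv ?_
    push_cast
    ring
  have := aux_mono hd (fun y hy => by nlinarith [sin_le_t5 hy]) hx
  simp at this
  linarith

private lemma sin_ge_t7 {x : ℝ} (hx : 0 ≤ x) :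
    x - x^3/6 + x^5/120 - x^7/5040 ≤ Real.sin x := by
  have hd : ∀ y : ℝ, HasDerivAt (fun z => Real.sin z - (z - z^3/6 + z^5/120 - z^7/5040))
      (Real.cos y - (1 - y^2/2 + y^4/24 - y^6/720)) y := by
    intro y
    have h := (Real.hasDerivAt_sin y).sub
      ((((hasDerivAt_id y).sub ((hasDerivAt_pow 3 y).div_const 6)).add
      ((hasDerivAt_pow 5 y).div_const 120)).sub ((hasDerivAt_pow 7 y).div_const 5040))
    refine h.congr_deriv ?_
    push_cast
    ring
  have := aux_mono hd (fun y hy => by nlinarith [cos_ge_t6 hy]) hx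
  simp at this
  linarith

/-! ### Integrability and bounds for `genF` -/

private lemma f_le_g {p : ℝ} (hp : 2 ≤ p) {t : ℝ} (ht0 : 0 ≤ t) (ht1 : t ≤ 1) :
    (1 - t ^ p) ^ (-(1 / p)) ≤ (Real.sqrt (1 - t ^ 2))⁻¹ := by
  have hp0 : (0:ℝ) < p := by linarith
  rcases eq_or_lt_of_le ht1 with rfl | ht1
  · rw [Real.one_rpow, sub_self,
      Real.zero_rpow (neg_ne_zero.2 (one_div_ne_zero (ne_of_gt hp0)))]
    simp
  · have ht2 : t ^ (2:ℕ) < 1 := by nlinarith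
    have htp : t ^ p ≤ t ^ (2:ℕ) := by
      rcases eq_or_lt_of_le ht0 with rfl | ht0'
      · rw [Real.zero_rpow (ne_of_gt hp0)]; positivity
      · rw [show ((t:ℝ) ^ (2:ℕ)) = t ^ ((2:ℕ):ℝ) by rw [Real.rpow_natCast]]
        exact Real.rpow_le_rpow_of_exponent_ge ht0' ht1.le (by exact_mod_cast hp)
    have hb0 : 0 < 1 - t ^ p := by linarith
    have hb1 : 1 - t ^ p ≤ 1 := by
      have : 0 ≤ t ^ p := Real.rpow_nonneg ht0 p
      linarith
    have key1 : (1 - t ^ (2:ℕ)) ^ ((1:ℝ)/2) ≤ (1 - t ^ p) ^ ((1:ℝ)/p) := by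
      calc (1 - t ^ (2:ℕ)) ^ ((1:ℝ)/2) ≤ (1 - t ^ p) ^ ((1:ℝ)/2) :=
            Real.rpow_le_rpow (by linarith) (by linarith) (by norm_num)
        _ ≤ (1 - t ^ p) ^ ((1:ℝ)/p) := by
            apply Real.rpow_le_rpow_of_exponent_ge hb0 hb1
            rw [div_le_div_iff₀ hp0 (by norm_num)]
            linarith
    rw [show -(1/p) = -(1/p) from rfl, Real.rpow_neg hb0.le,
      Real.sqrt_eq_rpow]
    have hA : (0:ℝ) < (1 - t ^ (2:ℕ)) ^ ((1:ℝ)/2) := by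
      apply Real.rpow_pos_of_pos; linarith
    rw [show (1:ℝ)/2 = 1/2 from rfl]
    exact inv_anti₀ hA key1

private lemma g_int : IntervalIntegrable (fun t => (Real.sqrt (1 - t ^ (2:ℕ)))⁻¹)
    MeasureTheory.volume 0 1 := by
  have h1 : IntervalIntegrable (fun x : ℝ => x ^ (-(1/2) : ℝ)) MeasureTheory.volume 0 1 :=
    intervalIntegral.intervalIntegrable_rpow' (by norm_num)
  have h2 := (h1.comp_sub_left 1).symm
  simp only [sub_zero, sub_self] at h2
  apply h2.mono_fun
  · apply Measurable.aestronglyMeasurable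
    exact ((continuous_const.sub (continuous_pow 2)).sqrt).measurable.inv
  · rw [Filter.EventuallyLE, MeasureTheory.ae_restrict_iff' measurableSet_uIoc]
    apply Filter.Eventually.of_forall
    intro t ht
    rw [Set.uIoc_of_le (by norm_num : (0:ℝ) ≤ 1)] at ht
    obtain ⟨ht0, ht1⟩ := ht
    have h1t : 0 ≤ 1 - t := by linarith
    have hmono : Real.sqrt (1 - t) ≤ Real.sqrt (1 - t ^ 2) := by
      apply Real.sqrt_le_sqrt; nlinarith
    have hg0 : 0 ≤ (Real.sqrt (1 - t ^ 2))⁻¹ := by positivity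
    simp only [Real.norm_eq_abs, abs_of_nonneg hg0,
      abs_of_nonneg (Real.rpow_nonneg h1t _)]
    rw [Real.rpow_neg h1t, show ((1:ℝ)/2) = (1/2 : ℝ) from rfl, ← Real.sqrt_eq_rpow]
    rcases eq_or_lt_of_le ht1 with rfl | htlt
    · simp
    · apply inv_anti₀
      · apply Real.sqrt_pos.2; linarith
      · exact hmono

private lemma f_int {p : ℝ} (hp : 2 ≤ p) :
    IntervalIntegrable (fun t : ℝ => (1 - t ^ p) ^ (-(1 / p)))
      MeasureTheory.volume 0 1 := by
  have hp0 : (0:ℝ) < p := by linarith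
  apply g_int.mono_fun
  · have hcont : ContinuousOn (fun t : ℝ => (1 - t ^ p) ^ (-(1 / p))) (Ioo 0 1) := by
      intro t ht
      apply ContinuousAt.continuousWithinAt
      have hb0 : 0 < 1 - t ^ p := by
        have : t ^ p < 1 := Real.rpow_lt_one ht.1.le ht.2 hp0
        linarith
      have inner : ContinuousAt (fun t : ℝ => 1 - t ^ p) t :=
        continuousAt_const.sub (Real.continuousAt_rpow_const t p (Or.inr hp0.le))
      exact inner.rpow_const (Or.inl (ne_of_gt hb0))
    have h1 : Set.uIoc (0:ℝ) 1 = Ioc 0 1 := Set.uIoc_of_le (by norm_num)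
    rw [h1, ← MeasureTheory.Measure.restrict_congr_set MeasureTheory.Ioo_ae_eq_Ioc]
    exact hcont.aestronglyMeasurable measurableSet_Ioo
  · rw [Filter.EventuallyLE, MeasureTheory.ae_restrict_iff' measurableSet_uIoc]
    apply Filter.Eventually.of_forall
    intro t ht
    rw [Set.uIoc_of_le (by norm_num : (0:ℝ) ≤ 1)] at ht
    have hb : 0 ≤ 1 - t ^ p := by
      have : t ^ p ≤ 1 := Real.rpow_le_one ht.1.le ht.2 hp0.le
      linarith
    have hg0 : 0 ≤ (Real.sqrt (1 - t ^ 2))⁻¹ := by positivity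
    simp only [Real.norm_eq_abs, abs_of_nonneg (Real.rpow_nonneg hb _),
      abs_of_nonneg hg0]
    exact f_le_g hp ht.1.le ht.2

private lemma genF_le_arcsin {p : ℝ} (hp : 2 ≤ p) {s : ℝ} (hs0 : 0 ≤ s) (hs1 : s ≤ 1) :
    genF p p s ≤ Real.arcsin s := by
  have hfi : IntervalIntegrable (fun t : ℝ => (1 - t ^ p) ^ (-(1 / p)))
      MeasureTheory.volume 0 s :=
    (f_int hp).mono_set (by
      rw [Set.uIcc_of_le hs0, Set.uIcc_of_le (by norm_num : (0:ℝ) ≤ 1)]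
      exact Set.Icc_subset_Icc le_rfl hs1)
  have hgi : IntervalIntegrable (fun t => (Real.sqrt (1 - t ^ (2:ℕ)))⁻¹)
      MeasureTheory.volume 0 s :=
    g_int.mono_set (by
      rw [Set.uIcc_of_le hs0, Set.uIcc_of_le (by norm_num : (0:ℝ) ≤ 1)]
      exact Set.Icc_subset_Icc le_rfl hs1)
  have harc : (∫ t in (0:ℝ)..s, (Real.sqrt (1 - t ^ (2:ℕ)))⁻¹) = Real.arcsin s := by
    have := intervalIntegral.integral_eq_sub_of_hasDeriv_right_of_le hs0
      (Real.continuous_arcsin.continuousOn)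
      (f' := fun t => (Real.sqrt (1 - t ^ (2:ℕ)))⁻¹) ?_ hgi
    · rw [this, Real.arcsin_zero, sub_zero]
    · intro x hx
      have h1 : x ≠ -1 := by intro h; rw [h] at hx; exact absurd hx.1 (by norm_num)
      have h2 : x ≠ 1 := ne_of_lt (lt_of_lt_of_le hx.2 hs1)
      have := Real.hasDerivAt_arcsin h1 h2
      rw [one_div] at this
      exact this.hasDerivWithinAt
  rw [← harc]
  unfold genF
  apply intervalIntegral.integral_mono_on hs0 hfi hgi
  intro t ht
  exact f_le_g hp ht.1 (le_trans ht.2 hs1)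

private lemma genF_ge_self {p : ℝ} (hp : 2 ≤ p) {s : ℝ} (hs0 : 0 ≤ s) (hs1 : s ≤ 1) :
    s ≤ genF p p s := by
  have hp0 : (0:ℝ) < p := by linarith
  have hfi : IntervalIntegrable (fun t : ℝ => (1 - t ^ p) ^ (-(1 / p)))
      MeasureTheory.volume 0 s :=
    (f_int hp).mono_set (by
      rw [Set.uIcc_of_le hs0, Set.uIcc_of_le (by norm_num : (0:ℝ) ≤ 1)]
      exact Set.Icc_subset_Icc le_rfl hs1)
  have h1 : (∫ t in (0:ℝ)..s, (1:ℝ)) = s := by simp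
  conv_lhs => rw [← h1]
  unfold genF
  apply intervalIntegral.integral_mono_ae_restrict hs0 intervalIntegrable_const hfi
  have hne : ∀ᵐ t : ℝ, t ≠ 1 := by
    rw [MeasureTheory.ae_iff]
    have hset : {x : ℝ | ¬ x ≠ 1} = {1} := by ext x; simp [not_not]
    rw [hset]
    exact MeasureTheory.measure_singleton 1
  have hmem : ∀ᵐ t ∂(MeasureTheory.volume.restrict (Icc (0:ℝ) s)), t ∈ Icc (0:ℝ) s :=
    MeasureTheory.ae_restrict_mem measurableSet_Icc
  filter_upwards [hmem, MeasureTheory.ae_restrict_of_ae hne] with t ht htne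
  have ht1 : t < 1 := lt_of_le_of_ne (le_trans ht.2 hs1) htne
  have hb0 : 0 < 1 - t ^ p := by
    have : t ^ p < 1 := by
      rcases eq_or_lt_of_le ht.1 with rfl | ht0'
      · rw [Real.zero_rpow (ne_of_gt hp0)]; norm_num
      · exact Real.rpow_lt_one ht.1 ht1 hp0
    linarith
  have hb1 : 1 - t ^ p ≤ 1 := by
    have : 0 ≤ t ^ p := Real.rpow_nonneg ht.1 p
    linarith
  exact Real.one_le_rpow_of_pos_of_le_one_of_nonpos hb0 hb1 (neg_nonpos.2 (by positivity))

/-! ### `genPi` bounds -/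

private lemma genPi_ge_two {p : ℝ} (hp : 2 ≤ p) : 2 ≤ genPi p p := by
  have := genF_ge_self hp zero_le_one le_rfl
  unfold genPi
  linarith

private lemma genPi_le_pi {p : ℝ} (hp : 2 ≤ p) : genPi p p ≤ π := by
  have h := genF_le_arcsin hp zero_le_one le_rfl
  rw [Real.arcsin_one] at h
  unfold genPi
  linarith

/-! ### `sinBase` facts -/

private lemma sb_le_one (p q x : ℝ) : sinBase p q x ≤ 1 :=
  Real.sSup_le (fun _ hs => hs.1.2) zero_le_one

private lemma sb_nonneg (p q x : ℝ) : 0 ≤ sinBase p q x :=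
  Real.sSup_nonneg (fun _ hs => hs.1.1)

private lemma sb_ge {p : ℝ} {s x : ℝ} (hs0 : 0 ≤ s) (hs1 : s ≤ 1)
    (h : genF p p s ≤ x) : s ≤ sinBase p p x :=
  le_csSup ⟨1, fun _ hr => hr.1.2⟩ ⟨⟨hs0, hs1⟩, h⟩

private lemma sb_le_self {p : ℝ} (hp : 2 ≤ p) {x : ℝ} (hx : 0 ≤ x) :
    sinBase p p x ≤ x :=
  Real.sSup_le (fun _ hs => le_trans (genF_ge_self hp hs.1.1 hs.1.2) hs.2) hx

private lemma sb_zero {p : ℝ} (hp : 2 ≤ p) : sinBase p p 0 = 0 :=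
  le_antisymm (sb_le_self hp le_rfl) (sb_nonneg p p 0)

private lemma sb_ge_sin {p : ℝ} (hp : 2 ≤ p) {x : ℝ} (hx0 : 0 ≤ x) (hxpi : x ≤ π/2) :
    Real.sin x ≤ sinBase p p x := by
  have h1 : 0 ≤ Real.sin x :=
    Real.sin_nonneg_of_nonneg_of_le_pi hx0 (by linarith [Real.pi_pos])
  have h2 : Real.sin x ≤ 1 := Real.sin_le_one x
  apply sb_ge h1 h2
  calc genF p p (Real.sin x) ≤ Real.arcsin (Real.sin x) := genF_le_arcsin hp h1 h2
    _ = x := Real.arcsin_sin (by linarith) hxpi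

/-! ### `sinHalf` facts -/

private lemma sh_nonneg (p q w : ℝ) : 0 ≤ sinHalf p q w := by
  unfold sinHalf; split_ifs <;> exact sb_nonneg _ _ _

private lemma sh_le_one (p q w : ℝ) : sinHalf p q w ≤ 1 := by
  unfold sinHalf; split_ifs <;> exact sb_le_one _ _ _

private lemma sh_le_sub {p : ℝ} (hp : 2 ≤ p) {w : ℝ} (hw0 : 0 ≤ w)
    (hw1 : w ≤ genPi p p) : sinHalf p p w ≤ genPi p p - w := by
  have ha2 := genPi_ge_two hp
  unfold sinHalf
  split_ifs with h
  · exact le_trans (sb_le_one _ _ _) (by linarith)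
  · exact sb_le_self hp (by linarith)

/-! ### `genSin` structure -/

private lemma genSin_def (p q x : ℝ) : genSin p q x =
    if x - 2*genPi p q*(⌊x/(2*genPi p q)⌋:ℝ) ≤ genPi p q
    then sinHalf p q (x - 2*genPi p q*(⌊x/(2*genPi p q)⌋:ℝ))
    else -(sinHalf p q (2*genPi p q - (x - 2*genPi p q*(⌊x/(2*genPi p q)⌋:ℝ)))) := rfl

private lemma gs_fract {p : ℝ} (hp : 2 ≤ p) (x : ℝ) : genSin p p x =
    if 2*genPi p p*Int.fract (x/(2*genPi p p)) ≤ genPi p p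
    then sinHalf p p (2*genPi p p*Int.fract (x/(2*genPi p p)))
    else -(sinHalf p p (2*genPi p p - 2*genPi p p*Int.fract (x/(2*genPi p p)))) := by
  have ha : (0:ℝ) < genPi p p := by linarith [genPi_ge_two hp]
  have key : x - 2*genPi p p*(⌊x/(2*genPi p p)⌋:ℝ)
      = 2*genPi p p*Int.fract (x/(2*genPi p p)) := by
    rw [Int.fract]
    field_simp
  rw [genSin_def, key]

private lemma gs_bdd {p : ℝ} (hp : 2 ≤ p) (x : ℝ) :
    -1 ≤ genSin p p x ∧ genSin p p x ≤ 1 := by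
  rw [genSin_def]
  split_ifs
  · exact ⟨le_trans (by norm_num) (sh_nonneg _ _ _), sh_le_one _ _ _⟩
  · constructor
    · simpa using neg_le_neg (sh_le_one p p _)
    · exact le_trans (neg_nonpos.2 (sh_nonneg _ _ _)) zero_le_one

private lemma gs_eqA {p : ℝ} (hp : 2 ≤ p) {x : ℝ} (hx0 : 0 ≤ x) (hx1 : x ≤ genPi p p) :
    genSin p p x = sinHalf p p x := by
  have ha : (0:ℝ) < genPi p p := by linarith [genPi_ge_two hp]
  have hfl : ⌊x/(2*genPi p p)⌋ = 0 := by
    rw [Int.floor_eq_zero_iff]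
    constructor
    · exact div_nonneg hx0 (by linarith)
    · rw [div_lt_one (by linarith)]; linarith
  rw [genSin_def, hfl]
  push_cast
  rw [mul_zero, sub_zero, if_pos hx1]

private lemma gs_eqB {p : ℝ} (hp : 2 ≤ p) {x : ℝ} (hx0 : genPi p p < x)
    (hx1 : x < 2*genPi p p) : genSin p p x = -(sinHalf p p (2*genPi p p - x)) := by
  have ha : (0:ℝ) < genPi p p := by linarith [genPi_ge_two hp]
  have hfl : ⌊x/(2*genPi p p)⌋ = 0 := by
    rw [Int.floor_eq_zero_iff]
    constructor
    · exact div_nonneg (by linarith) (by linarith)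
    · rw [div_lt_one (by linarith)]; linarith
  rw [genSin_def, hfl]
  push_cast
  rw [mul_zero, sub_zero, if_neg (by linarith)]

private lemma sh_at_pi {p : ℝ} (hp : 2 ≤ p) : sinHalf p p (genPi p p) = 0 := by
  have ha : (0:ℝ) < genPi p p := by linarith [genPi_ge_two hp]
  unfold sinHalf
  rw [if_neg (by linarith), sub_self, sb_zero hp]

private lemma gs_odd {p : ℝ} (hp : 2 ≤ p) (x : ℝ) :
    genSin p p (-x) = -(genSin p p x) := by
  have ha : (0:ℝ) < genPi p p := by linarith [genPi_ge_two hp]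
  have hsh0 : sinHalf p p (genPi p p) = 0 := sh_at_pi hp
  have hsb0 : sinHalf p p 0 = 0 := by
    unfold sinHalf
    rw [if_pos (by linarith), sb_zero hp]
  rw [gs_fract hp, gs_fract hp,
    show (-x)/(2*genPi p p) = -(x/(2*genPi p p)) by ring]
  by_cases hz : Int.fract (x/(2*genPi p p)) = 0
  · rw [Int.fract_neg_eq_zero.2 hz, hz]
    rw [mul_zero, if_pos (by linarith : (0:ℝ) ≤ genPi p p), hsb0]
    norm_num
  · rw [Int.fract_neg hz]
    set u := Int.fract (x/(2*genPi p p)) with hu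
    have hu0 : 0 < u := lt_of_le_of_ne (Int.fract_nonneg _) (Ne.symm hz)
    have hu1 : u < 1 := Int.fract_lt_one _
    split_ifs with h1 h2 h2
    · -- both halves in the first branch: forces u = 1/2
      have e2 : 2*genPi p p*u = genPi p p := by nlinarith
      have e1 : 2*genPi p p*(1-u) = genPi p p := by nlinarith
      rw [e1, e2, hsh0]
      norm_num
    · rw [neg_neg]
      congr 1
      ring
    · have e : 2*genPi p p - 2*genPi p p*(1-u) = 2*genPi p p*u := by ring
      rw [e]
    · exfalso
      push_neg at h1 h2
      nlinarith

/-! ### The two key polynomial inequalities -/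

private lemma key1 (x a : ℝ) (hx : 0 ≤ x) (hxa : x ≤ a/2) (ha : 2 ≤ a)
    (hapi : a ≤ (63/20 : ℝ)) :
    (a^2 - x^2)*x ≤ (x - x^3/6 + x^5/120 - x^7/5040) * (a^2 + x^2) := by
  have hv : x^2 ≤ a^2/4 := by nlinarith
  have hu1 : a^2 ≤ (3969/400 : ℝ) := by nlinarith
  have hc1 : (0:ℝ) ≤ 1/6 - a^2/120 := by nlinarith
  have prod1 : 0 ≤ (a^2/4 - x^2)*(1/6 - a^2/120) := mul_nonneg (by linarith) hc1
  have h6 : x^6 ≤ (a^2/4)^3 := by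
    calc x^6 = (x^2)^3 := by ring
      _ ≤ (a^2/4)^3 := pow_le_pow_left₀ (sq_nonneg x) hv 3
  have h4 : 0 ≤ x^4*(1/120 - a^2/5040) := mul_nonneg (pow_nonneg hx 4) (by nlinarith)
  have hphi : 0 ≤ 2 - a^2/6 - (a^2/4)*(1/6 - a^2/120) - (a^2/4)^3/5040 := by
    nlinarith [sq_nonneg a, sq_nonneg (a^2),
      mul_nonneg (mul_nonneg (sq_nonneg a) (sq_nonneg a)) (sq_nonneg a)]
  have hB : 0 ≤ (2 - a^2/6) + x^2*(a^2/120 - 1/6) + x^4*(1/120 - a^2/5040) - x^6/5040 := by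
    nlinarith [prod1, h6, h4, hphi]
  nlinarith [mul_nonneg (mul_nonneg (mul_nonneg hx hx) hx) hB]

private lemma key2 (t a : ℝ) (ht : 0 ≤ t) (hta : t ≤ a/2) (ha : 2 ≤ a)
    (hapi : a ≤ (63/20 : ℝ)) :
    (a^2 - (a-t)^2)*(a-t) ≤ (t - t^3/6 + t^5/120 - t^7/5040) * (a^2 + (a-t)^2) := by
  have ht2 : t ≤ (63/40 : ℝ) := by linarith
  have h1 : (7/1000) * t^3 ≤ t^3/120 - t^5/5040 := by
    have hq : (0:ℝ) ≤ (3969/1600 : ℝ) - t^2 := by nlinarith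
    nlinarith [mul_nonneg (pow_nonneg ht 3) hq]
  have h2a : (0:ℝ) ≤ t^3/120 - t^5/5040 := by
    have hq : (0:ℝ) ≤ (3969/1600 : ℝ) - t^2 := by nlinarith
    nlinarith [mul_nonneg (pow_nonneg ht 3) hq]
  have h2b : a^2 ≤ a^2 + (a-t)^2 := by nlinarith [sq_nonneg (a-t)]
  have h3 : (7/1000) * t^3 * a^2 ≤ (t^3/120 - t^5/5040)*(a^2+(a-t)^2) := by
    have := mul_le_mul h1 h2b (by positivity) h2a
    linarith [this]
  have h4 : 0 ≤ a - (t/6)*(2*a^2-2*a*t+t^2) + (7/1000)*t^3*a^2 := by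
    have ha0 : (0:ℝ) < a := by linarith
    have c1 : 0 ≤ a/2 - t := by linarith
    have hta2 : t*a ≤ a^2/2 := by nlinarith
    have ht2a : t^2 ≤ a^2/4 := by nlinarith
    have hu : a^2 ≤ (3969/400 : ℝ) := by nlinarith
    have c2 : 0 ≤ (5/8)*a^2 - (3/4)*a*t + t^2/2 - (21/1000)*a^2*(a^2/4 + a*t/2 + t^2) := by
      nlinarith [mul_nonneg (sq_nonneg a) (sub_nonneg.2 ht2a),
        mul_nonneg (sq_nonneg a) (sub_nonneg.2 hta2),
        mul_nonneg (sq_nonneg a) (sub_nonneg.2 hu), sq_nonneg a, sq_nonneg t]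
    have c3 : (5/16)*a^3 - (21/8000)*a^5 ≤ 3*a := by
      nlinarith [mul_nonneg (sub_nonneg.2 (show (4:ℝ) ≤ a^2 by nlinarith)) (sq_nonneg a),
        mul_nonneg (sub_nonneg.2 hu) ha0.le, sq_nonneg a]
    nlinarith [mul_nonneg c1 c2, c3]
  have hE : 0 ≤ a - (t/6)*(2*a^2-2*a*t+t^2) + (t^3/120 - t^5/5040)*(a^2+(a-t)^2) := by
    linarith
  nlinarith [mul_nonneg (mul_nonneg ht ht) hE]

/-! ### Main inequality, positive case -/

private lemma key_pos {p : ℝ} (hp : 2 ≤ p) {x : ℝ} (hx : 0 < x) :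
    (genPi p p^2 - x^2)*x ≤ genSin p p x * (genPi p p^2 + x^2) := by
  set a := genPi p p with hadef
  have ha2 : 2 ≤ a := genPi_ge_two hp
  have hapi : a ≤ π := genPi_le_pi hp
  have ha315 : a ≤ (63/20 : ℝ) := by
    have := Real.pi_lt_d2
    norm_num at this ⊢
    linarith
  have ha0 : (0:ℝ) < a := by linarith
  have hpos : (0:ℝ) < a^2 + x^2 := by positivity
  rcases le_or_gt x (a/2) with hA | hA'
  · -- 0 < x ≤ a/2
    have e1 : genSin p p x = sinHalf p p x := gs_eqA hp hx.le (by linarith)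
    have e2 : sinHalf p p x = sinBase p p x := by unfold sinHalf; rw [if_pos hA]
    have hxpi2 : x ≤ π/2 := by linarith
    have hsin : Real.sin x ≤ sinBase p p x := sb_ge_sin hp hx.le hxpi2
    have htay : x - x^3/6 + x^5/120 - x^7/5040 ≤ Real.sin x := sin_ge_t7 hx.le
    have hk := key1 x a hx.le hA ha2 ha315
    have hchain : x - x^3/6 + x^5/120 - x^7/5040 ≤ sinBase p p x := le_trans htay hsin
    rw [e1, e2]
    nlinarith [mul_le_mul_of_nonneg_right hchain hpos.le]
  · rcases le_or_gt x a with hB | hB'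
    · -- a/2 < x ≤ a
      have e1 : genSin p p x = sinHalf p p x := gs_eqA hp hx.le hB
      have e2 : sinHalf p p x = sinBase p p (a - x) := by
        unfold sinHalf; rw [if_neg (by push_neg; exact hA')]
      set t := a - x with htdef
      have ht0 : 0 ≤ t := by simp [htdef]; linarith
      have hta : t ≤ a/2 := by simp [htdef]; linarith
      have htpi2 : t ≤ π/2 := by linarith
      have hsin : Real.sin t ≤ sinBase p p t := sb_ge_sin hp ht0 htpi2
      have htay : t - t^3/6 + t^5/120 - t^7/5040 ≤ Real.sin t := sin_ge_t7 ht0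
      have hk := key2 t a ht0 hta ha2 ha315
      have hchain : t - t^3/6 + t^5/120 - t^7/5040 ≤ sinBase p p t := le_trans htay hsin
      have hax : a - t = x := by simp [htdef]
      rw [e1, e2]
      rw [hax] at hk
      nlinarith [mul_le_mul_of_nonneg_right hchain hpos.le]
    · rcases lt_or_ge x (2*a) with hC | hD
      · -- a < x < 2a
        have e1 : genSin p p x = -(sinHalf p p (2*a - x)) := gs_eqB hp hB' hC
        set s := sinHalf p p (2*a - x) with hsdef
        have hs0 : 0 ≤ s := sh_nonneg _ _ _
        have hs1 : s ≤ 1 := sh_le_one _ _ _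
        have hs2 : s ≤ x - a := by
          have := sh_le_sub hp (show (0:ℝ) ≤ 2*a - x by linarith)
            (show 2*a - x ≤ a by linarith)
          rw [← hsdef] at this
          linarith
        rw [e1]
        rcases le_or_gt x (a + 1) with hx1 | hx1
        · nlinarith [mul_le_mul_of_nonneg_right hs2 hpos.le, sq_nonneg (x - a),
            mul_nonneg (mul_nonneg (sub_nonneg.2 hB'.le) (sub_nonneg.2 hB'.le)) ha0.le]
        · nlinarith [mul_le_mul_of_nonneg_right hs1 hpos.le,
            mul_nonneg (sub_nonneg.2 (show a + 1 ≤ x by linarith))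
              (sub_nonneg.2 (show a ≤ x by linarith)),
            mul_nonneg (mul_nonneg (sub_nonneg.2 (show a + 1 ≤ x by linarith)) hx.le) hx.le]
      · -- x ≥ 2a
        have hb := (gs_bdd hp x).1
        have hsuff : (a^2 - x^2)*x ≤ -(a^2 + x^2) := by
          nlinarith [mul_nonneg (sub_nonneg.2 hD) hx.le,
            mul_nonneg (mul_nonneg (sub_nonneg.2 hD) hx.le) hx.le,
            mul_nonneg (sub_nonneg.2 hD) ha0.le, sq_nonneg x, sq_nonneg a]
        calc (a^2 - x^2)*x ≤ -(a^2 + x^2) := hsuff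
          _ = (-1) * (a^2 + x^2) := by ring
          _ ≤ genSin p p x * (a^2 + x^2) := by
              apply mul_le_mul_of_nonneg_right hb hpos.le

/-- Redheffer-type inequality for `sin_p := sin_{p,p}` and `π_p := π_{p,p}`:
for `2 ≤ p < ∞`, `(π_p² − x²)/(π_p² + x²) ≤ sin_p x / x` for all `x ≠ 0`. -/
theorem redheffer_sinp (p : ℝ) (hp : 2 ≤ p) :
    ∀ x : ℝ, x ≠ 0 →
      (genPi p p ^ 2 - x ^ 2) / (genPi p p ^ 2 + x ^ 2) ≤ genSin p p x / x := by
  intro x hx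
  have ha2 : 2 ≤ genPi p p := genPi_ge_two hp
  have hpos : (0:ℝ) < genPi p p ^ 2 + x ^ 2 := by positivity
  rcases hx.lt_or_gt with hneg | hposx
  · have hx' : (0:ℝ) < -x := by linarith
    have h := key_pos hp hx'
    have hodd : genSin p p (-x) = -(genSin p p x) := gs_odd hp x
    rw [hodd] at h
    have hgoal : (genPi p p ^ 2 - x ^ 2) * (-x) ≤ (-(genSin p p x)) * (genPi p p ^ 2 + x ^ 2) := by
      nlinarith [h]
    rw [show genSin p p x / x = (-(genSin p p x)) / (-x) by rw [neg_div_neg_eq],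
      div_le_div_iff₀ hpos hx']
    linarith [hgoal]
  · rw [div_le_div_iff₀ hpos hposx]
    exact key_pos hp hposx
end

section
/- Let a ∈ (0,∞) and let S : ℝ → ℝ satisfy S(−x) = −S(x) and S(a+x) = −S(x) for all x ∈ [0,∞), together with S(t) < t for all t ∈ (0,∞). Then for all x ∈ (a,∞), the strict inequality (a² − x²)/(a² + x²) < S(x)/x holds. -/
open Real Set

/-- If `S` is odd, anti-periodic with period `a > 0` on `[0,∞)`, and `S(t) < t`
for all `t > 0`, then `(a² − x²)/(a² + x²) < S(x)/x` for all `x > a`. -/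
theorem redheffer_beyond_period (a : ℝ) (ha : 0 < a) (S : ℝ → ℝ)
    (hodd : ∀ x ∈ Ici (0:ℝ), S (-x) = -S x)
    (hanti : ∀ x ∈ Ici (0:ℝ), S (a + x) = -S x)
    (hlt : ∀ t : ℝ, 0 < t → S t < t) :
    ∀ x ∈ Ioi a, (a ^ 2 - x ^ 2) / (a ^ 2 + x ^ 2) < S x / x := by
  intro x hx
  have hxa : a < x := hx
  have hx0 : 0 < x := ha.trans hxa
  have h1 : S x = -S (x - a) := by
    have := hanti (x - a) (by simp [le_of_lt, sub_nonneg.mpr hxa.le])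
    simpa [add_sub_cancel] using this
  have h2 : S (x - a) < x - a := hlt _ (by linarith)
  have hS : a - x < S x := by linarith [h1 ▸ (neg_lt_neg h2)]
  have hB : 0 < a ^ 2 + x ^ 2 := by positivity
  rw [div_lt_div_iff₀ hB hx0]
  nlinarith [sq_nonneg (a - x), mul_pos hB hx0]
end

section
/- Let a ∈ (0,∞), let P be a finite subset of (0,a), and let S : ℝ → ℝ satisfy conditions (S1)–(S4): (S1) S(−x) = −S(x) and S(a+x) = −S(x) for x ∈ [0,∞); (S2) 0 < S(x) < x for x ∈ (0,a); (S3) S ∈ C([0,a]) ∩ C¹([0,a)) ∩ C²([0,a) \ P); (S4) S'(x)² − S''(x)·S(x) ≥ 1 for x ∈ [0,a) \ P. Then the function f(x) := x²(x + S(x))/(x − S(x)) is strictly decreasing on (0,a), and consequently f(x) > f(a) = a², i.e. a² < x²(x + S(x))/(x − S(x)) for all x ∈ (0,a). -/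
open Real Set MeasureTheory intervalIntegral Filter Topology

lemma glue_strictMonoOn {P : Set ℝ} (hP : P.Finite) :
    ∀ (g : ℝ → ℝ) (u v : ℝ), u < v → ContinuousOn g (Icc u v) →
      (∀ x ∈ Ioo u v, x ∉ P → 0 < deriv g x) → StrictMonoOn g (Icc u v) := by
  refine Set.Finite.induction_on P hP ?_ ?_
  · intro g u v huv hc hd
    refine strictMonoOn_of_deriv_pos (convex_Icc u v) hc ?_
    rw [interior_Icc]
    exact fun x hx => hd x hx (notMem_empty x)
  · intro p Q hpQ hQfin ih g u v huv hc hd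
    by_cases hp : p ∈ Ioo u v
    · have h1 : StrictMonoOn g (Icc u p) := by
        refine ih g u p hp.1 (hc.mono (Icc_subset_Icc le_rfl hp.2.le)) ?_
        intro x hx hxQ
        exact hd x ⟨hx.1, hx.2.trans hp.2⟩ (by
          simp only [mem_insert_iff, not_or]
          exact ⟨ne_of_lt hx.2, hxQ⟩)
      have h2 : StrictMonoOn g (Icc p v) := by
        refine ih g p v hp.2 (hc.mono (Icc_subset_Icc hp.1.le le_rfl)) ?_
        intro x hx hxQ
        exact hd x ⟨hp.1.trans hx.1, hx.2⟩ (by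
          simp only [mem_insert_iff, not_or]
          exact ⟨ne_of_gt hx.1, hxQ⟩)
      intro x hx y hy hxy
      rcases le_or_gt y p with h | h
      · exact h1 ⟨hx.1, hxy.le.trans h⟩ ⟨hx.1.trans hxy.le, h⟩ hxy
      rcases le_or_gt p x with h' | h'
      · exact h2 ⟨h', hx.2⟩ ⟨h'.trans hxy.le, hy.2⟩ hxy
      · calc g x ≤ g p := (h1 ⟨hx.1, h'.le⟩ ⟨hx.1.trans h'.le, le_rfl⟩ h').le
          _ < g y := h2 ⟨le_rfl, hp.2.le⟩ ⟨h.le, hy.2⟩ h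
    · refine ih g u v huv hc ?_
      intro x hx hxQ
      refine hd x hx ?_
      simp only [mem_insert_iff, not_or]
      exact ⟨fun hxp => hp (hxp ▸ hx), hxQ⟩

set_option maxHeartbeats 1000000 in
/-- Under (S1)–(S4), the function `f(x) = x²(x + S(x))/(x − S(x))` is strictly
decreasing on `(0,a)`, `f(a) = a²`, and consequently `a² < f(x)` on `(0,a)`. -/
theorem f_strictAnti_and_lower_bound (a : ℝ) (ha : 0 < a) (P : Set ℝ)
    (hPfin : P.Finite) (hPsub : P ⊆ Ioo 0 a) (S : ℝ → ℝ)
    (hS1 : ∀ x ∈ Ici (0:ℝ), S (-x) = -S x ∧ S (a + x) = -S x)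
    (hS2 : ∀ x ∈ Ioo 0 a, 0 < S x ∧ S x < x)
    (hS3 : ContinuousOn S (Icc 0 a) ∧ ContDiffOn ℝ 1 S (Ico 0 a) ∧
      ContDiffOn ℝ 2 S (Ico 0 a \ P))
    (hS4 : ∀ x ∈ Ico 0 a \ P, (deriv S x) ^ 2 - deriv (deriv S) x * S x ≥ 1) :
    StrictAntiOn (fun x => x ^ 2 * (x + S x) / (x - S x)) (Ioo 0 a) ∧
      a ^ 2 * (a + S a) / (a - S a) = a ^ 2 ∧
      ∀ x ∈ Ioo 0 a, a ^ 2 < x ^ 2 * (x + S x) / (x - S x) := by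
  have hC1 : ContDiffOn ℝ 1 S (Ico 0 a) := hS3.2.1
  have S0 : S 0 = 0 := by
    have := (hS1 0 (mem_Ici.2 le_rfl)).1
    simp only [neg_zero] at this
    linarith
  have Sa : S a = 0 := by
    have := (hS1 0 (mem_Ici.2 le_rfl)).2
    simp only [add_zero, S0, neg_zero] at this
    exact this
  set U : Set ℝ := Ioo 0 a \ P with hU
  have hUopen : IsOpen U := isOpen_Ioo.sdiff hPfin.isClosed
  have hUsub : U ⊆ Ico 0 a \ P := fun x hx => ⟨⟨hx.1.1.le, hx.1.2⟩, hx.2⟩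
  -- differentiability of S on Ioo
  have hmemIco : ∀ x ∈ Ioo 0 a, Ico 0 a ∈ 𝓝 x := fun x hx =>
    mem_nhds_iff.2 ⟨Ioo 0 a, Ioo_subset_Ico_self, isOpen_Ioo, hx⟩
  have hd1 : ∀ x ∈ Ioo 0 a, HasDerivAt S (deriv S x) x := by
    intro x hx
    exact ((hC1.differentiableOn one_ne_zero).differentiableAt (hmemIco x hx)).hasDerivAt
  -- continuity of deriv S on Ioo
  have hdc : ContinuousOn (deriv S) (Ioo 0 a) := by
    have h1 := hC1.continuousOn_derivWithin (uniqueDiffOn_Ico 0 a) le_rfl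
    refine (h1.mono Ioo_subset_Ico_self).congr ?_
    intro x hx
    exact (derivWithin_of_mem_nhds (hmemIco x hx)).symm
  -- second derivative on U
  have hd2 : ∀ x ∈ U, HasDerivAt (deriv S) (deriv (deriv S) x) x := by
    intro x hx
    have h2 : ContDiffOn ℝ 2 S U := hS3.2.2.mono hUsub
    have h3 : ContDiffOn ℝ 1 (deriv S) U :=
      h2.deriv_of_isOpen (m := 1) hUopen (by norm_num)
    exact ((h3.differentiableOn one_ne_zero).differentiableAt (hUopen.mem_nhds hx)).hasDerivAt
  have sp : ∀ x ∈ Ioo 0 a, 0 < S x := fun x hx => (hS2 x hx).1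
  have slt : ∀ x ∈ Ioo 0 a, S x < x := fun x hx => (hS2 x hx).2
  -- the key quantity n
  set nn : ℝ → ℝ := fun x => S x ^ 2 + x * S x - x ^ 2 - x ^ 2 * deriv S x with hnn
  have nncont : ContinuousOn nn (Ioo 0 a) := by
    have hSc : ContinuousOn S (Ioo 0 a) := hS3.1.mono (Ioo_subset_Icc_self)
    exact ((hSc.pow 2).add ((continuousOn_id.mul hSc))).sub
      ((continuousOn_pow 2)) |>.sub ((continuousOn_pow 2).mul hdc)
  have hnd : ∀ x ∈ U, HasDerivAt nn
      (2 * S x * deriv S x + S x - x * deriv S x - 2 * x - x ^ 2 * deriv (deriv S) x) x := by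
    intro x hx
    have hS := hd1 x hx.1
    have hq := hd2 x hx
    have H : HasDerivAt (fun x => S x ^ 2 + x * S x - x ^ 2 - x ^ 2 * deriv S x)
        ((2 * S x ^ 1 * deriv S x + (1 * S x + x * deriv S x) - (↑2 * x ^ 1))
          - (↑2 * x ^ 1 * deriv S x + x ^ 2 * deriv (deriv S) x)) x := by
      exact (((hS.pow 2).add ((hasDerivAt_id' x).mul hS)).sub (hasDerivAt_pow 2 x)).sub
        ((hasDerivAt_pow 2 x).mul hq)
    rw [hnn]
    convert H using 1
    push_cast
    ring
  -- the key differential inequality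
  have hkey : ∀ x ∈ U,
      (S x + x) * (x - S x) ^ 2 / x ^ 2
        + (deriv S x / S x - (x - S x) ^ 2 / (x ^ 2 * S x)) * nn x
      ≤ 2 * S x * deriv S x + S x - x * deriv S x - 2 * x - x ^ 2 * deriv (deriv S) x := by
    intro x hx
    have hx' : x ∈ Ioo 0 a := hx.1
    have hs := sp x hx'
    have hsx := slt x hx'
    have hxp : 0 < x := hx'.1
    have h4 := hS4 x (hUsub hx)
    have hnx : nn x = S x ^ 2 + x * S x - x ^ 2 - x ^ 2 * deriv S x := rfl
    rw [hnx, ← sub_nonneg]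
    have expand : 2 * S x * deriv S x + S x - x * deriv S x - 2 * x - x ^ 2 * deriv (deriv S) x
        - ((S x + x) * (x - S x) ^ 2 / x ^ 2
          + (deriv S x / S x - (x - S x) ^ 2 / (x ^ 2 * S x))
            * (S x ^ 2 + x * S x - x ^ 2 - x ^ 2 * deriv S x))
        = x ^ 4 * (deriv S x ^ 2 - 1 - deriv (deriv S) x * S x) / (S x * x ^ 2) := by
      field_simp
      ring
    rw [expand]
    apply div_nonneg
    · apply mul_nonneg (by positivity)
      linarith
    · positivity
  -- slope and derivative limits at 0
  have hnhds0 : 𝓝[Ioo (0:ℝ) a] (0:ℝ) = 𝓝[>] (0:ℝ) := nhdsWithin_Ioo_eq_nhdsGT ha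
  set L₀ := derivWithin S (Ico 0 a) 0 with hL₀def
  have hdw : HasDerivWithinAt S L₀ (Ico 0 a) 0 :=
    ((hC1.differentiableOn one_ne_zero) 0 ⟨le_rfl, ha⟩).hasDerivWithinAt
  have hslope : Tendsto (fun y => S y / y) (𝓝[>] (0:ℝ)) (𝓝 L₀) := by
    have h1 := hasDerivWithinAt_iff_tendsto_slope.1 hdw
    have h2 : 𝓝[>] (0:ℝ) ≤ 𝓝[Ico 0 a \ {0}] (0:ℝ) := by
      rw [← hnhds0]
      apply nhdsWithin_mono
      intro y hy
      exact ⟨⟨hy.1.le, hy.2⟩, ne_of_gt hy.1⟩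
    refine (h1.mono_left h2).congr fun y => ?_
    simp [slope_def_field, S0]
  have hder0 : Tendsto (deriv S) (𝓝[>] (0:ℝ)) (𝓝 L₀) := by
    have hcd : Tendsto (derivWithin S (Ico 0 a)) (𝓝[Ico 0 a] 0) (𝓝 L₀) :=
      (hC1.continuousOn_derivWithin (uniqueDiffOn_Ico 0 a) le_rfl) 0 ⟨le_rfl, ha⟩
    have h2 : Tendsto (derivWithin S (Ico 0 a)) (𝓝[Ioo 0 a] 0) (𝓝 L₀) :=
      hcd.mono_left (nhdsWithin_mono _ Ioo_subset_Ico_self)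
    rw [← hnhds0]
    refine h2.congr' ?_
    filter_upwards [self_mem_nhdsWithin] with y hy
    exact derivWithin_of_mem_nhds (hmemIco y hy)
  have hmemev : ∀ᶠ y in 𝓝[>] (0:ℝ), y ∈ Ioo 0 a := by
    rw [← hnhds0]; exact self_mem_nhdsWithin
  have hle1 : L₀ ≤ 1 := by
    refine le_of_tendsto hslope ?_
    filter_upwards [hmemev] with y hy
    exact le_of_lt ((div_lt_one hy.1).2 (slt y hy))
  have h0le : 0 ≤ L₀ := by
    refine ge_of_tendsto hslope ?_
    filter_upwards [hmemev] with y hy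
    exact (div_pos (sp y hy) hy.1).le
  have hge1 : 1 ≤ L₀ := by
    by_contra hlt
    push_neg at hlt
    set c₁ := (L₀ + 1) / 2 with hc₁def
    set K := 1 - c₁ ^ 2 with hKdef
    have hc₁pos : 0 < c₁ := by rw [hc₁def]; linarith
    have hc₁lt : c₁ < 1 := by rw [hc₁def]; linarith
    have hKpos : 0 < K := by rw [hKdef]; nlinarith
    have hev : ∀ᶠ y in 𝓝[>] (0:ℝ), y ∈ Ioo 0 a ∧ |deriv S y - L₀| < (1 - L₀) / 2 := by
      have h2 : ∀ᶠ y in 𝓝[>] (0:ℝ), deriv S y ∈ Metric.ball L₀ ((1 - L₀) / 2) :=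
        hder0 (Metric.ball_mem_nhds L₀ (by linarith : (0:ℝ) < (1 - L₀) / 2))
      exact hmemev.and (h2.mono fun y hy => by simpa [Real.dist_eq] using hy)
    obtain ⟨δ', hδ'mem, hδ'⟩ := mem_nhdsGT_iff_exists_Ioo_subset.1 hev
    have hδ'pos : 0 < δ' := hδ'mem
    have hreg : ∀ y, y ∈ Ioo 0 δ' → y ∈ Ioo 0 a ∧ |deriv S y| < c₁ := by
      intro y hy
      obtain ⟨h1, h2⟩ := hδ' hy
      refine ⟨h1, ?_⟩
      rw [abs_lt] at h2 ⊢
      constructor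
      · nlinarith [h2.1]
      · nlinarith [h2.2]
    have hδ₀pos : 0 < δ' / 2 := by linarith
    have hδ₀lt : δ' / 2 < δ' := by linarith
    have hφanti : ∀ η, 0 < η → η < δ' / 2 →
        deriv S (δ' / 2) + K * Real.log (δ' / 2) ≤ deriv S η + K * Real.log η := by
      intro η hη1 hη2
      by_contra hcon
      push_neg at hcon
      set A := deriv S η + K * Real.log η with hA
      set B := deriv S (δ' / 2) + K * Real.log (δ' / 2) with hB
      have hBA : 0 < B - A := by linarith only [hcon]
      have hgap : 0 < δ' / 2 - η := by linarith only [hη2]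
      set t := (B - A) / (2 * (δ' / 2 - η)) with htdef
      have htpos : 0 < t := div_pos hBA (by linarith only [hgap])
      have hmono := glue_strictMonoOn hPfin
        (fun y => -(deriv S y) - K * Real.log y + t * y) η (δ' / 2) hη2 ?_ ?_
      · have h5 := hmono (left_mem_Icc.2 hη2.le) (right_mem_Icc.2 hη2.le) hη2
        simp only at h5
        have hgen : ∀ c g : ℝ, g ≠ 0 → c / (2 * g) * g = c / 2 := by
          intro c g hg
          field_simp
        have ht2 : t * (δ' / 2 - η) = (B - A) / 2 := by
          rw [htdef]
          exact hgen _ _ hgap.ne'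
        have h6 : -A + t * η < -B + t * (δ' / 2) := by
          rw [hA, hB]; linarith only [h5]
        nlinarith only [h6, ht2, hBA, hgap, htpos]
      · -- continuity
        have hsub : Icc η (δ' / 2) ⊆ Ioo 0 a := fun y hy =>
          (hreg y ⟨lt_of_lt_of_le hη1 hy.1, lt_of_le_of_lt hy.2 hδ₀lt⟩).1
        refine (((hdc.mono hsub).neg.sub ?_).add (continuousOn_const.mul continuousOn_id))
        exact continuousOn_const.mul (fun y hy =>
          (Real.continuousAt_log (ne_of_gt (lt_of_lt_of_le hη1 hy.1))).continuousWithinAt)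
      · -- derivative positive off P
        intro y hy hyP
        have hy0 : 0 < y := lt_trans hη1 hy.1
        have hyδ' : y ∈ Ioo 0 δ' := ⟨hy0, lt_trans hy.2 hδ₀lt⟩
        obtain ⟨hyIoo, hyc₁⟩ := hreg y hyδ'
        have hyU : y ∈ U := ⟨hyIoo, hyP⟩
        have hq := hd2 y hyU
        have hlog : HasDerivAt Real.log y⁻¹ y := Real.hasDerivAt_log (ne_of_gt hy0)
        have hD : HasDerivAt (fun y => -(deriv S y) - K * Real.log y + t * y)
            (-(deriv (deriv S) y) - K * y⁻¹ + t * 1) y :=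
          ((hq.neg).sub (hlog.const_mul K)).add ((hasDerivAt_id' y).const_mul t)
        rw [hD.deriv]
        have h4 := hS4 y (hUsub hyU)
        have hs := sp y hyIoo
        have hsy := slt y hyIoo
        have habs : deriv S y ^ 2 ≤ c₁ ^ 2 := by
          have h7 := abs_le.1 hyc₁.le
          nlinarith only [h7.1, h7.2]
        have hq1 : deriv (deriv S) y * S y ≤ c₁ ^ 2 - 1 := by
          linarith only [h4, habs]
        have hq2 : deriv (deriv S) y ≤ (c₁ ^ 2 - 1) / S y := (le_div_iff₀ hs).2 hq1
        have hq3 : (c₁ ^ 2 - 1) / S y ≤ (c₁ ^ 2 - 1) / y := by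
          rw [div_le_div_iff₀ hs hy0]
          have hc2 : c₁ ^ 2 - 1 ≤ 0 := by nlinarith only [hc₁lt, hc₁pos]
          have h9 := mul_nonneg (neg_nonneg.2 hc2) (sub_nonneg.2 hsy.le)
          nlinarith only [h9]
        have e1 : (c₁ ^ 2 - 1) / y = -(K * y⁻¹) := by
          rw [hKdef]
          field_simp
          ring
        have e2 : deriv (deriv S) y ≤ -(K * y⁻¹) := by
          rw [← e1]; exact hq2.trans hq3
        linarith only [e2, htpos]
    -- choose η small enough, contradiction
    set B := deriv S (δ' / 2) + K * Real.log (δ' / 2) with hB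
    set η := min (δ' / 4) (Real.exp ((B - c₁ - 1) / K)) with hηdef
    have hηpos : 0 < η := lt_min (by linarith) (Real.exp_pos _)
    have hηlt : η < δ' / 2 := lt_of_le_of_lt (min_le_left _ _) (by linarith)
    have hlogη : K * Real.log η ≤ B - c₁ - 1 := by
      have h1 : Real.log η ≤ (B - c₁ - 1) / K := by
        calc Real.log η ≤ Real.log (Real.exp ((B - c₁ - 1) / K)) :=
              Real.log_le_log hηpos (min_le_right _ _)
          _ = (B - c₁ - 1) / K := Real.log_exp _
      calc K * Real.log η ≤ K * ((B - c₁ - 1) / K) :=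
            mul_le_mul_of_nonneg_left h1 hKpos.le
        _ = B - c₁ - 1 := by field_simp
    have hφη := hφanti η hηpos hηlt
    have hderη : c₁ + 1 ≤ deriv S η := by linarith only [hφη, hlogη]
    have hηδ' : η ∈ Ioo 0 δ' := ⟨hηpos, by linarith only [hηlt, hδ'pos]⟩
    have h8 := (hreg η hηδ').2
    rw [abs_lt] at h8
    linarith only [h8.2, hderη, hc₁pos]
  have hL₀1 : L₀ = 1 := le_antisymm hle1 hge1
  have hL : Tendsto (fun y => S y / y) (𝓝[>] (0:ℝ)) (𝓝 1) := hL₀1 ▸ hslope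
  have hL' : Tendsto (deriv S) (𝓝[>] (0:ℝ)) (𝓝 1) := hL₀1 ▸ hder0
  -- n/S tends to 0 at 0+
  have hn0 : Tendsto (fun y => nn y / S y) (𝓝[>] (0:ℝ)) (𝓝 0) := by
    have hyS : Tendsto (fun y => y / S y) (𝓝[>] (0:ℝ)) (𝓝 1) := by
      have h1 := hL.inv₀ one_ne_zero
      rw [inv_one] at h1
      refine h1.congr fun y => ?_
      rw [inv_div]
    have hS0' : Tendsto S (𝓝[>] (0:ℝ)) (𝓝 0) := by
      have h1 : ContinuousWithinAt S (Icc 0 a) 0 := hS3.1 0 ⟨le_rfl, ha.le⟩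
      have h2 : Tendsto S (𝓝[>] (0:ℝ)) (𝓝 (S 0)) := by
        rw [← hnhds0]
        exact h1.tendsto.mono_left (nhdsWithin_mono _ Ioo_subset_Icc_self)
      rwa [S0] at h2
    have hy0 : Tendsto (fun y : ℝ => y) (𝓝[>] (0:ℝ)) (𝓝 0) :=
      tendsto_id.mono_left nhdsWithin_le_nhds
    have hmain : Tendsto (fun y => S y + y - y * (y / S y) * (1 + deriv S y))
        (𝓝[>] (0:ℝ)) (𝓝 0) := by
      have h9 : Tendsto (fun _ : ℝ => (1:ℝ)) (𝓝[>] (0:ℝ)) (𝓝 1) := tendsto_const_nhds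
      have := ((hS0'.add hy0).sub (((hy0.mul hyS)).mul (h9.add hL')))
      simpa using this
    refine hmain.congr' ?_
    filter_upwards [hmemev] with y hy
    have hs := (sp y hy).ne'
    have hy' := hy.1.ne'
    have hnx : nn y = S y ^ 2 + y * S y - y ^ 2 - y ^ 2 * deriv S y := rfl
    rw [hnx]
    field_simp
    ring
  -- positivity of n
  have npos : ∀ x₀ ∈ Ioo 0 a, 0 < nn x₀ := by
    intro x₀ hx₀
    set ψ : ℝ → ℝ := fun t => (t - S t) ^ 2 / (t ^ 2 * S t) with hψ
    have hScIoo : ContinuousOn S (Ioo 0 a) := hS3.1.mono Ioo_subset_Icc_self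
    have ψcont : ContinuousOn ψ (Ioo 0 a) := by
      refine ContinuousOn.div ?_ ?_ ?_
      · exact (continuousOn_id.sub hScIoo).pow 2
      · exact (continuousOn_pow 2).mul hScIoo
      · intro t ht
        have := sp t ht
        have := ht.1
        positivity
    have ψnonneg : ∀ t ∈ Ioo 0 a, 0 ≤ ψ t := by
      intro t ht
      have h1 := sp t ht
      have h2 := ht.1
      positivity
    have ψint : ∀ y ∈ Ioo 0 a, IntervalIntegrable ψ volume y x₀ := by
      intro y hy
      exact (ψcont.mono ((ordConnected_Ioo).uIcc_subset hy hx₀)).intervalIntegrable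
    set F : ℝ → ℝ := fun y => ∫ t in y..x₀, ψ t with hF
    have hFd : ∀ y ∈ Ioo 0 a, HasDerivAt F (-ψ y) y := fun y hy =>
      intervalIntegral.integral_hasDerivAt_left (ψint y hy)
        ((ψcont.stronglyMeasurableAtFilter isOpen_Ioo) y hy)
        (ψcont.continuousAt (isOpen_Ioo.mem_nhds hy))
    set W : ℝ → ℝ := fun y => nn y / S y * Real.exp (-F y) with hW
    have Wcont : ContinuousOn W (Ioo 0 a) := by
      refine ((nncont.div hScIoo (fun y hy => (sp y hy).ne')).mul ?_)
      refine Real.continuous_exp.comp_continuousOn ?_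
      exact (ContinuousOn.neg (fun y hy => ((hFd y hy).continuousAt).continuousWithinAt))
    have Wpos : ∀ y ∈ U, 0 < deriv W y := by
      intro y hy
      have hy' : y ∈ Ioo 0 a := hy.1
      have hs := sp y hy'
      have hsy := slt y hy'
      have hy0 : 0 < y := hy'.1
      have hDn := hnd y hy
      have hDS := hd1 y hy'
      have hDF := hFd y hy'
      have hdiv : HasDerivAt (fun z => nn z / S z)
          (((2 * S y * deriv S y + S y - y * deriv S y - 2 * y
              - y ^ 2 * deriv (deriv S) y) * S y - nn y * deriv S y) / S y ^ 2) y :=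
        hDn.div hDS (ne_of_gt hs)
      have hexp : HasDerivAt (fun z => Real.exp (-F z)) (Real.exp (-F y) * ψ y) y := by
        have h1 := (hDF.neg).exp
        simpa using h1
      have hprod := hdiv.mul hexp
      rw [hW]
      rw [show (fun y => nn y / S y * Real.exp (-F y)) = ((fun z => nn z / S z) * fun z => Real.exp (-F z)) from rfl, hprod.deriv]
      have hge := hkey y hy
      have hA : 0 < (S y + y) * (y - S y) ^ 2 / y ^ 2 := by
        have h2 : 0 < (y - S y) ^ 2 := pow_pos (sub_pos.2 hsy) 2
        positivity
      have hB : (S y + y) * (y - S y) ^ 2 / y ^ 2 ≤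
          (2 * S y * deriv S y + S y - y * deriv S y - 2 * y - y ^ 2 * deriv (deriv S) y)
          - (deriv S y / S y - (y - S y) ^ 2 / (y ^ 2 * S y)) * nn y := by linarith only [hge]
      have heq : ((2 * S y * deriv S y + S y - y * deriv S y - 2 * y
              - y ^ 2 * deriv (deriv S) y) * S y - nn y * deriv S y) / S y ^ 2
            * Real.exp (-F y) + nn y / S y * (Real.exp (-F y) * ψ y)
          = Real.exp (-F y) *
            (((2 * S y * deriv S y + S y - y * deriv S y - 2 * y
              - y ^ 2 * deriv (deriv S) y)
              - (deriv S y / S y - (y - S y) ^ 2 / (y ^ 2 * S y)) * nn y) / S y) := by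
        rw [hψ]
        field_simp
        ring
      rw [heq]
      refine mul_pos (Real.exp_pos _) (div_pos (lt_of_lt_of_le hA hB) hs)
    -- W is strictly monotone on subintervals of (0, x₀]
    have Wmono : ∀ u v : ℝ, 0 < u → u < v → v ≤ x₀ → W u < W v := by
      intro u v hu huv hv
      have hsub : Icc u v ⊆ Ioo 0 a := by
        intro y hy
        exact ⟨lt_of_lt_of_le hu hy.1, lt_of_le_of_lt (hy.2.trans hv) hx₀.2⟩
      have hmono := glue_strictMonoOn hPfin W u v huv (Wcont.mono hsub) ?_
      · exact hmono (left_mem_Icc.2 huv.le) (right_mem_Icc.2 huv.le) huv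
      · intro y hy hyP
        exact Wpos y ⟨hsub ⟨hy.1.le, hy.2.le⟩, hyP⟩
    -- W tends to 0 at 0+
    have Wlim : Tendsto W (𝓝[>] (0:ℝ)) (𝓝 0) := by
      have hgn : Tendsto (fun y => ‖nn y / S y‖) (𝓝[>] (0:ℝ)) (𝓝 0) := by
        have := hn0.norm
        rwa [norm_zero] at this
      refine squeeze_zero_norm' ?_ hgn
      have hev2 : ∀ᶠ y in 𝓝[>] (0:ℝ), y ∈ Ioo 0 x₀ :=
        Ioo_mem_nhdsGT_of_mem ⟨le_rfl, hx₀.1⟩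
      filter_upwards [hev2] with y hy
      have hFnn : 0 ≤ F y := by
        rw [hF]
        refine intervalIntegral.integral_nonneg hy.2.le ?_
        intro t ht
        exact ψnonneg t ⟨lt_of_lt_of_le hy.1 ht.1, lt_of_le_of_lt ht.2 hx₀.2⟩
      have hexple : ‖Real.exp (-F y)‖ ≤ 1 := by
        rw [Real.norm_eq_abs, abs_of_pos (Real.exp_pos _)]
        exact Real.exp_le_one_iff.2 (neg_nonpos.2 hFnn)
      have : ‖W y‖ = ‖nn y / S y‖ * ‖Real.exp (-F y)‖ := by
        rw [hW]
        exact norm_mul _ _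
      rw [this]
      exact mul_le_of_le_one_right (norm_nonneg _) hexple
    -- conclude
    have Wu : 0 ≤ W (x₀ / 2) := by
      refine le_of_tendsto Wlim ?_
      have hev3 : ∀ᶠ y in 𝓝[>] (0:ℝ), y ∈ Ioo 0 (x₀ / 2) :=
        Ioo_mem_nhdsGT_of_mem ⟨le_rfl, by linarith [hx₀.1]⟩
      filter_upwards [hev3] with y hy
      exact (Wmono y (x₀ / 2) hy.1 hy.2 (by linarith [hx₀.1])).le
    have Wx₀ : 0 < W x₀ :=
      lt_of_le_of_lt Wu (Wmono (x₀ / 2) x₀ (by linarith [hx₀.1]) (by linarith [hx₀.1]) le_rfl)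
    have hW0 : W x₀ = nn x₀ / S x₀ := by
      rw [hW]
      simp only [hF, intervalIntegral.integral_same, neg_zero, Real.exp_zero, mul_one]
    rw [hW0] at Wx₀
    have hs := sp x₀ hx₀
    rcases div_pos_iff.1 Wx₀ with ⟨h1, _⟩ | ⟨_, h2⟩
    · exact h1
    · linarith
  -- derivative of f
  have fder : ∀ x ∈ Ioo 0 a,
      HasDerivAt (fun x => x ^ 2 * (x + S x) / (x - S x))
        (-2 * x * nn x / (x - S x) ^ 2) x := by
    intro x hx
    have hS := hd1 x hx
    have hden : x - S x ≠ 0 := ne_of_gt (sub_pos.2 (slt x hx))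
    have hNum : HasDerivAt (fun x => x ^ 2 * (x + S x))
        (↑2 * x ^ 1 * (x + S x) + x ^ 2 * (1 + deriv S x)) x :=
      (hasDerivAt_pow 2 x).mul ((hasDerivAt_id' x).add hS)
    have hDen : HasDerivAt (fun x => x - S x) (1 - deriv S x) x := (hasDerivAt_id' x).sub hS
    have H := hNum.div hDen hden
    refine H.congr_deriv ?_
    have hnx : nn x = S x ^ 2 + x * S x - x ^ 2 - x ^ 2 * deriv S x := rfl
    rw [hnx]
    field_simp
    ring
  have fanti : StrictAntiOn (fun x => x ^ 2 * (x + S x) / (x - S x)) (Ioo 0 a) := by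
    refine strictAntiOn_of_deriv_neg (convex_Ioo 0 a)
      (fun x hx => ((fder x hx).differentiableAt).continuousAt.continuousWithinAt) ?_
    rw [interior_Ioo]
    intro x hx
    rw [(fder x hx).deriv]
    have h1 := npos x hx
    have h2 : 0 < (x - S x) ^ 2 := pow_pos (sub_pos.2 (slt x hx)) 2
    have h3 : 0 < x := hx.1
    rw [div_neg_iff]
    right
    constructor
    · nlinarith
    · exact h2
  have fa : a ^ 2 * (a + S a) / (a - S a) = a ^ 2 := by
    rw [Sa]
    field_simp
    simp [ha.ne']
  refine ⟨fanti, fa, ?_⟩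
  -- lower bound
  intro x hx
  have hx₁ : (x + a) / 2 ∈ Ioo 0 a := ⟨by linarith [hx.1], by linarith [hx.2]⟩
  have hxx₁ : x < (x + a) / 2 := by linarith [hx.2]
  have h1 : (fun x => x ^ 2 * (x + S x) / (x - S x)) ((x + a) / 2)
      < (fun x => x ^ 2 * (x + S x) / (x - S x)) x := fanti hx hx₁ hxx₁
  have h2 : a ^ 2 ≤ (fun x => x ^ 2 * (x + S x) / (x - S x)) ((x + a) / 2) := by
    set x₁ := (x + a) / 2 with hx₁def
    have hSc : ContinuousWithinAt S (Ioo x₁ a) a := by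
      have := hS3.1 a ⟨ha.le, le_rfl⟩
      exact this.mono (fun y hy => ⟨le_of_lt (lt_trans hx₁.1 hy.1), hy.2.le⟩)
    have hfc : Tendsto (fun y => y ^ 2 * (y + S y) / (y - S y)) (𝓝[Ioo x₁ a] a)
        (𝓝 (a ^ 2)) := by
      have hden : a - S a ≠ 0 := by rw [Sa]; simpa using ne_of_gt ha
      have hT := (((continuousWithinAt_id.pow 2).mul
        (continuousWithinAt_id.add hSc)).div (continuousWithinAt_id.sub hSc) hden)
      have : (a:ℝ) ^ 2 * (a + S a) / (a - S a) = a ^ 2 := fa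
      rw [← this]
      exact hT
    haveI : (𝓝[Ioo x₁ a] a).NeBot := right_nhdsWithin_Ioo_neBot hx₁.2
    refine le_of_tendsto hfc ?_
    filter_upwards [self_mem_nhdsWithin] with y hy
    exact (fanti hx₁ ⟨lt_trans hx₁.1 hy.1, hy.2⟩ hy.1).le
  simp only at h1 h2
  linarith
end

section
/- Let a ∈ (0,∞), let P be a finite subset of (0,a), and let S : ℝ → ℝ satisfy conditions (S1)–(S4): (S1) S(−x) = −S(x) and S(a+x) = −S(x) for x ∈ [0,∞); (S2) 0 < S(x) < x for x ∈ (0,a); (S3) S ∈ C([0,a]) ∩ C¹([0,a)) ∩ C²([0,a) \ P); (S4) S'(x)² − S''(x)·S(x) ≥ 1 for x ∈ [0,a) \ P. Define g(x) := x + S(x) − x²(1 + S'(x))/S(x) for x ∈ (0,a). Then g(b) > 0 for every b ∈ (0,a). -/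
open Real Set Filter Topology

private lemma key_alg (u d : ℝ) (hu0 : 0 < u) (hu1 : u < 1)
    (hw0 : 0 ≤ d + 1 - u^2) (hw1 : d + 1 - u^2 < 1) :
    u*(d*(1-2*u)) + d^2 - (1-u^2) < 0 := by
  nlinarith [mul_pos hu0 (mul_pos (by nlinarith : (0:ℝ) < 1-u^2) (by linarith : (0:ℝ) < 1-u)),
    mul_nonneg hw0 (by nlinarith : (0:ℝ) ≤ 2 - ((d+1-u^2)+u))]

/-- Under (S1)–(S4), the auxiliary function
`g(x) = x + S(x) − x²(1 + S'(x))/S(x)` is positive on `(0,a)`. -/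
theorem g_pos (a : ℝ) (ha : 0 < a) (P : Set ℝ) (hPfin : P.Finite)
    (hPsub : P ⊆ Ioo 0 a) (S : ℝ → ℝ)
    (hS1 : ∀ x ∈ Ici (0:ℝ), S (-x) = -S x ∧ S (a + x) = -S x)
    (hS2 : ∀ x ∈ Ioo 0 a, 0 < S x ∧ S x < x)
    (hS3 : ContinuousOn S (Icc 0 a) ∧ ContDiffOn ℝ 1 S (Ico 0 a) ∧
      ContDiffOn ℝ 2 S (Ico 0 a \ P))
    (hS4 : ∀ x ∈ Ico 0 a \ P, (deriv S x) ^ 2 - deriv (deriv S) x * S x ≥ 1) :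
    ∀ b ∈ Ioo 0 a, 0 < b + S b - b ^ 2 * (1 + deriv S b) / S b := by
  obtain ⟨hScont, hd1, hd2⟩ := hS3
  -- basic facts
  have hS0 : S 0 = 0 := by
    have h := (hS1 0 self_mem_Ici).1
    rw [neg_zero] at h; linarith
  have hUD : UniqueDiffOn ℝ (Ico (0:ℝ) a) := uniqueDiffOn_Ico 0 a
  have hP0 : (0:ℝ) ∉ P := fun hp => lt_irrefl 0 (hPsub hp).1
  -- differentiability on Ioo
  have hdiff : ∀ x ∈ Ioo 0 a, HasDerivAt S (deriv S x) x := by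
    intro x hx
    exact (((hd1.differentiableOn one_ne_zero).differentiableAt
      (Ico_mem_nhds hx.1 hx.2))).hasDerivAt
  -- continuity of deriv S on Ioo
  have hdWcont : ContinuousOn (derivWithin S (Ico 0 a)) (Ico 0 a) :=
    hd1.continuousOn_derivWithin hUD le_rfl
  have hDeq : ∀ x ∈ Ioo 0 a, deriv S x = derivWithin S (Ico 0 a) x := by
    intro x hx
    exact (derivWithin_of_mem_nhds (Ico_mem_nhds hx.1 hx.2)).symm
  have hDcont : ContinuousOn (deriv S) (Ioo 0 a) :=
    (hdWcont.mono Ioo_subset_Ico_self).congr hDeq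
  -- the derivative at 0 equals 1
  have h40 : (deriv S 0) ^ 2 ≥ 1 := by
    have h := hS4 0 ⟨⟨le_refl 0, ha⟩, hP0⟩
    rw [hS0] at h; linarith
  have hdiff0 : DifferentiableAt ℝ S 0 := by
    by_contra h
    rw [deriv_zero_of_not_differentiableAt h] at h40
    norm_num at h40
  have hslope0 : Tendsto (fun x => S x / x) (𝓝[>] (0:ℝ)) (𝓝 (deriv S 0)) := by
    have h := hasDerivAt_iff_tendsto_slope.mp hdiff0.hasDerivAt
    have h2 := h.mono_left (nhdsWithin_mono 0 (fun x hx => ne_of_gt hx))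
    refine h2.congr (fun x => ?_)
    simp [slope, hS0, div_eq_inv_mul]
  have hmemIoo : ∀ᶠ x in 𝓝[>] (0:ℝ), x ∈ Ioo (0:ℝ) a := by
    filter_upwards [Ioo_mem_nhdsGT ha] with x hx using hx
  have hD0 : deriv S 0 = 1 := by
    have hle : deriv S 0 ≤ 1 := by
      refine le_of_tendsto hslope0 ?_
      filter_upwards [hmemIoo] with x hx
      have := (hS2 x hx).2
      exact le_of_lt ((div_lt_one hx.1).mpr this)
    have hge : 0 ≤ deriv S 0 := by
      refine ge_of_tendsto hslope0 ?_
      filter_upwards [hmemIoo] with x hx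
      exact le_of_lt (div_pos (hS2 x hx).1 hx.1)
    nlinarith
  rw [hD0] at hslope0
  -- deriv S tends to 1 at 0+
  have hDtend : Tendsto (deriv S) (𝓝[>] (0:ℝ)) (𝓝 1) := by
    have h0 : derivWithin S (Ico 0 a) 0 = 1 := by
      rw [hdiff0.hasDerivAt.hasDerivWithinAt.derivWithin (hUD 0 ⟨le_refl 0, ha⟩), hD0]
    have h1 : Tendsto (derivWithin S (Ico 0 a)) (𝓝[Ico 0 a] (0:ℝ)) (𝓝 1) := by
      have := (hdWcont 0 ⟨le_refl 0, ha⟩).tendsto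
      rwa [h0] at this
    have h2 : 𝓝[>] (0:ℝ) ≤ 𝓝[Ico 0 a] (0:ℝ) :=
      le_trans (nhdsWithin_le_of_mem (Ioo_mem_nhdsGT ha))
        (nhdsWithin_mono 0 Ioo_subset_Ico_self)
    refine (h1.mono_left h2).congr' ?_
    filter_upwards [hmemIoo] with x hx
    exact (hDeq x hx).symm
  -- the function w and its properties
  set w : ℝ → ℝ := fun x => deriv S x + 1 - S x / x - (S x / x)^2 with hw_def
  set w' : ℝ → ℝ := fun x =>
    deriv (deriv S) x - (deriv S x * x - S x) / x ^ 2
      - 2 * (S x / x) * ((deriv S x * x - S x) / x ^ 2) with hw'_def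
  set ρ : ℝ → ℝ := fun x =>
    ((deriv S x - S x / x) * (1 - 2 * (S x / x))
      + ((deriv S x - S x / x)^2 - (1 - (S x / x)^2)) / (S x / x)) / x with hρ_def
  -- w tends to 0 at 0+
  have hwtend : Tendsto w (𝓝[>] (0:ℝ)) (𝓝 0) := by
    have h : Tendsto w (𝓝[>] (0:ℝ)) (𝓝 (1 + 1 - 1 - 1^2)) :=
      ((hDtend.add tendsto_const_nhds).sub hslope0).sub (hslope0.pow 2)
    norm_num at h; exact h
  -- continuity of w and ρ on Ioo
  have hScontIoo : ContinuousOn S (Ioo 0 a) :=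
    hScont.mono (fun x hx => ⟨le_of_lt hx.1, le_of_lt hx.2⟩)
  have hxne : ∀ x ∈ Ioo (0:ℝ) a, x ≠ 0 := fun x hx => ne_of_gt hx.1
  have hucont : ContinuousOn (fun x => S x / x) (Ioo 0 a) :=
    hScontIoo.div continuousOn_id hxne
  have hwcont : ContinuousOn w (Ioo 0 a) :=
    ((hDcont.add continuousOn_const).sub hucont).sub (hucont.pow 2)
  have hune : ∀ x ∈ Ioo (0:ℝ) a, S x / x ≠ 0 :=
    fun x hx => ne_of_gt (div_pos (hS2 x hx).1 hx.1)
  have hρcont : ContinuousOn ρ (Ioo 0 a) := by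
    refine ContinuousOn.div ?_ continuousOn_id hxne
    exact (((hDcont.sub hucont).mul
      (continuousOn_const.sub (continuousOn_const.mul hucont))).add
      ((((hDcont.sub hucont).pow 2).sub
        (continuousOn_const.sub (hucont.pow 2))).div hucont hune))
  -- derivative of w off P, and the differential inequality
  have hUopen : IsOpen (Ioo 0 a \ P) := isOpen_Ioo.sdiff hPfin.isClosed
  have hDdiff : DifferentiableOn ℝ (deriv S) (Ioo 0 a \ P) := by
    have h2 : ContDiffOn ℝ 2 S (Ioo 0 a \ P) :=
      hd2.mono (diff_subset_diff_left Ioo_subset_Ico_self)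
    exact (h2.deriv_of_isOpen (m := 1) hUopen (by norm_num)).differentiableOn one_ne_zero
  have hwderiv : ∀ x ∈ Ioo 0 a, x ∉ P → HasDerivAt w (w' x) x ∧ w' x ≤ ρ x := by
    intro x hx hxP
    have hx0 : x ≠ 0 := ne_of_gt hx.1
    have hSx : 0 < S x := (hS2 x hx).1
    have hS' : HasDerivAt S (deriv S x) x := hdiff x hx
    have hD' : HasDerivAt (deriv S) (deriv (deriv S) x) x :=
      (hDdiff.differentiableAt (hUopen.mem_nhds ⟨hx, hxP⟩)).hasDerivAt
    have h1 : HasDerivAt (fun y => S y / y)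
        ((deriv S x * x - S x * 1) / x ^ 2) x := hS'.div (hasDerivAt_id x) hx0
    have h2 : HasDerivAt (fun y => (S y / y)^2)
        ((2:ℕ) * (S x / x) ^ (2-1) * ((deriv S x * x - S x * 1) / x ^ 2)) x := h1.pow 2
    have hw : HasDerivAt w (w' x) x := by
      have := ((hD'.add_const 1).sub h1).sub h2
      refine this.congr_deriv ?_
      simp only [hw'_def]
      push_cast
      ring
    refine ⟨hw, ?_⟩
    have h4 := hS4 x ⟨⟨le_of_lt hx.1, hx.2⟩, hxP⟩
    have hid : ρ x - w' x =
        ((deriv S x) ^ 2 - 1 - deriv (deriv S) x * S x) / (S x) := by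
      simp only [hρ_def, hw'_def]
      have hSne : S x ≠ 0 := hSx.ne'
      field_simp
      ring
    have : 0 ≤ ρ x - w' x := by
      rw [hid]
      apply div_nonneg (by linarith) hSx.le
    linarith
  -- ρ is negative wherever 0 ≤ w < 1
  have hρneg : ∀ x ∈ Ioo 0 a, 0 ≤ w x → w x < 1 → ρ x < 0 := by
    intro x hx hw0 hw1
    have hx0 : 0 < x := hx.1
    set u : ℝ := S x / x with hu_def
    set d : ℝ := deriv S x - u with hd_def
    have hu0 : 0 < u := div_pos (hS2 x hx).1 hx0
    have hu1 : u < 1 := (div_lt_one hx0).mpr (hS2 x hx).2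
    have hwx : w x = d + 1 - u^2 := by simp [hw_def, hd_def]; ring
    have hN : u*(d*(1-2*u)) + d^2 - (1-u^2) < 0 :=
      key_alg u d hu0 hu1 (by rw [hwx] at hw0; exact hw0) (by rw [hwx] at hw1; exact hw1)
    have hρx : ρ x = (u*(d*(1-2*u)) + d^2 - (1-u^2)) / (u * x) := by
      simp only [hρ_def, ← hu_def, ← hd_def]
      field_simp
      ring
    rw [hρx]
    exact div_neg_of_neg_of_pos hN (mul_pos hu0 hx0)
  -- Claim A : w ≤ 0 on (0,a)
  have hA : ∀ x ∈ Ioo 0 a, w x ≤ 0 := by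
    intro x₀ hx₀
    by_contra hpos
    push_neg at hpos
    set M : ℝ := min (w x₀) (1/2) with hM_def
    have hM : 0 < M := lt_min hpos (by norm_num)
    obtain ⟨c, hcmem, hcim⟩ := ((Set.Ioo_infinite hM).diff (hPfin.image w)).nonempty
    have hc0 : 0 < c := hcmem.1
    have hcM : c < M := hcmem.2
    have hchalf : c < 1/2 := lt_of_lt_of_le hcM (min_le_right _ _)
    have hcx₀ : c < w x₀ := lt_of_lt_of_le hcM (min_le_left _ _)
    -- a point x₁ close to 0 with w x₁ < c
    obtain ⟨x₁, hx₁w, hx₁mem⟩ :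
        ∃ x₁, w x₁ < c ∧ x₁ ∈ Ioo 0 x₀ := by
      have h1 : ∀ᶠ x in 𝓝[>] (0:ℝ), w x < c := hwtend.eventually_lt_const hc0
      have h2 : ∀ᶠ x in 𝓝[>] (0:ℝ), x ∈ Ioo 0 x₀ := by
        filter_upwards [Ioo_mem_nhdsGT hx₀.1] with x hx using hx
      exact (h1.and h2).exists
    have hx₁a : x₁ ∈ Ioo 0 a := ⟨hx₁mem.1, lt_trans hx₁mem.2 hx₀.2⟩
    set A : Set ℝ := Icc x₁ x₀ ∩ w ⁻¹' (Ici c) with hA_def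
    have hIccsub : Icc x₁ x₀ ⊆ Ioo 0 a :=
      fun y hy => ⟨lt_of_lt_of_le hx₁mem.1 hy.1, lt_of_le_of_lt hy.2 hx₀.2⟩
    have hAclosed : IsClosed A :=
      (hwcont.mono hIccsub).preimage_isClosed_of_isClosed isClosed_Icc isClosed_Ici
    have hAx₀ : x₀ ∈ A := ⟨⟨le_of_lt hx₁mem.2, le_refl _⟩, le_of_lt hcx₀⟩
    have hAbdd : BddBelow A := ⟨x₁, fun y hy => hy.1.1⟩
    set t : ℝ := sInf A with ht_def
    have htA : t ∈ A := hAclosed.csInf_mem ⟨x₀, hAx₀⟩ hAbdd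
    have htIoo : t ∈ Ioo 0 a := hIccsub htA.1
    have hleft : ∀ y, x₁ ≤ y → y < t → w y < c := by
      intro y hy1 hyt
      by_contra hge
      push_neg at hge
      have : y ∈ A := ⟨⟨hy1, le_trans (le_of_lt hyt) htA.1.2⟩, hge⟩
      exact absurd (csInf_le hAbdd this) (not_le.mpr hyt)
    have hx₁t : x₁ < t := by
      rcases lt_or_eq_of_le htA.1.1 with h | h
      · exact h
      · exfalso; rw [← h] at htA; exact absurd htA.2 (not_le.mpr hx₁w)
    have hwt : w t = c := by
      refine le_antisymm ?_ htA.2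
      have hcw : ContinuousAt w t := (hwcont t htIoo).continuousAt (isOpen_Ioo.mem_nhds htIoo)
      have htt : Tendsto w (𝓝[<] t) (𝓝 (w t)) := hcw.tendsto.mono_left nhdsWithin_le_nhds
      refine le_of_tendsto htt ?_
      filter_upwards [Ioo_mem_nhdsLT_of_mem (⟨hx₁t, le_refl t⟩ : t ∈ Ioc x₁ t)] with y hy
      exact le_of_lt (hleft y (le_of_lt hy.1) hy.2)
    have htP : t ∉ P := fun hp => hcim ⟨t, hp, hwt⟩
    obtain ⟨hder, hle⟩ := hwderiv t htIoo htP
    have hρt : ρ t < 0 := hρneg t htIoo (hwt ▸ le_of_lt hc0) (hwt ▸ (by linarith))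
    -- slope from the left is nonnegative
    have hs := hasDerivAt_iff_tendsto_slope.mp hder
    have hs' : Tendsto (slope w t) (𝓝[<] t) (𝓝 (w' t)) :=
      hs.mono_left (nhdsWithin_mono t (fun y hy => ne_of_lt hy))
    have hnn : 0 ≤ w' t := by
      refine ge_of_tendsto hs' ?_
      filter_upwards [Ioo_mem_nhdsLT_of_mem (⟨hx₁t, le_refl t⟩ : t ∈ Ioc x₁ t)] with y hy
      have hwy : w y < w t := by rw [hwt]; exact hleft y (le_of_lt hy.1) hy.2
      have : 0 < slope w t y := by
        rw [slope_def_field]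
        exact div_pos_iff.mpr (Or.inr ⟨sub_neg.mpr hwy, sub_neg.mpr hy.2⟩)
      exact le_of_lt this
    linarith
  -- Claim B : w < 0 on (0,a)
  have hB : ∀ b ∈ Ioo 0 a, w b < 0 := by
    intro b hb
    rcases lt_or_eq_of_le (hA b hb) with h | h
    · exact h
    · exfalso
      have hwb : w b = 0 := h
      have hρb : ρ b < 0 := hρneg b hb (le_of_eq hwb.symm) (by rw [hwb]; norm_num)
      -- find a good interval to the left of b
      have hV1 : ∀ᶠ x in 𝓝 b, ρ x < ρ b / 2 := by
        have hcρ : ContinuousAt ρ b := (hρcont b hb).continuousAt (isOpen_Ioo.mem_nhds hb)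
        exact hcρ.tendsto.eventually_lt_const (by linarith)
      have hV2 : ∀ᶠ x in 𝓝 b, x ∈ Ioo 0 a := isOpen_Ioo.eventually_mem hb
      have hV3 : ∀ᶠ x in 𝓝 b, x ∉ P \ {b} := by
        have hcl : IsClosed (P \ {b}) := (hPfin.subset diff_subset).isClosed
        have hbn : b ∈ (P \ {b})ᶜ := fun hmem => hmem.2 rfl
        exact hcl.isOpen_compl.eventually_mem hbn
      obtain ⟨ε, hε, hball⟩ := Metric.eventually_nhds_iff.mp ((hV1.and hV2).and hV3)
      set δ : ℝ := ε/2 with hδ_def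
      have hδ0 : 0 < δ := by positivity
      have hmem : ∀ y, b - δ ≤ y → y ≤ b → (ρ y < ρ b / 2 ∧ y ∈ Ioo 0 a) ∧ y ∉ P \ {b} := by
        intro y hy1 hy2
        apply hball
        rw [Real.dist_eq, abs_lt]
        constructor <;> [linarith; linarith]
      have hbδ : b - δ ∈ Ioo 0 a := (hmem (b-δ) (le_refl _) (by linarith)).1.2
      have hcont : ContinuousOn w (Icc (b-δ) b) := by
        refine hwcont.mono (fun y hy => ?_)
        exact ⟨lt_of_lt_of_le hbδ.1 hy.1, lt_of_le_of_lt hy.2 hb.2⟩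
      have hderivs : ∀ y ∈ Ioo (b-δ) b, HasDerivAt w (w' y) y := by
        intro y hy
        have h := hmem y (le_of_lt hy.1) (le_of_lt hy.2)
        have hyP : y ∉ P := fun hp => h.2 ⟨hp, ne_of_lt hy.2⟩
        exact (hwderiv y h.1.2 hyP).1
      obtain ⟨ξ, hξ, heq⟩ := exists_hasDerivAt_eq_slope w w' (by linarith : b - δ < b)
        hcont hderivs
      have h := hmem ξ (le_of_lt hξ.1) (le_of_lt hξ.2)
      have hξP : ξ ∉ P := fun hp => h.2 ⟨hp, ne_of_lt hξ.2⟩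
      have hw'ξ : w' ξ ≤ ρ ξ := (hwderiv ξ h.1.2 hξP).2
      have hneg : w' ξ < 0 := lt_of_le_of_lt hw'ξ (by linarith [h.1.1])
      rw [heq] at hneg
      have hwbδ : w (b-δ) ≤ 0 := hA (b-δ) hbδ
      have hden : (0:ℝ) < b - (b - δ) := by linarith
      have := (div_neg_iff.mp hneg)
      rcases this with ⟨h1, h2⟩ | ⟨h1, h2⟩
      · linarith
      · linarith
  -- conclusion
  intro b hb
  have hwb : w b < 0 := hB b hb
  have hSb : 0 < S b := (hS2 b hb).1
  have hb0 : 0 < b := hb.1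
  have hwb_eq : w b = deriv S b + 1 - S b / b - (S b / b)^2 := rfl
  have key : b + S b - b ^ 2 * (1 + deriv S b) / S b
      = (-(b^2 * (deriv S b + 1 - S b / b - (S b / b)^2))) / S b := by
    field_simp
    ring
  rw [key, ← hwb_eq]
  apply div_pos _ hSb
  have h2 : 0 < b^2 := by positivity
  nlinarith
end

section
/- Let a ∈ (0,∞), let P be a finite subset of (0,a), and let S : ℝ → ℝ satisfy conditions (S1)–(S4): (S1) S(−x) = −S(x) and S(a+x) = −S(x) for x ∈ [0,∞); (S2) 0 < S(x) < x for x ∈ (0,a); (S3) S ∈ C([0,a]) ∩ C¹([0,a)) ∩ C²([0,a) \ P); (S4) S'(x)² − S''(x)·S(x) ≥ 1 for x ∈ [0,a) \ P. Then for all x ∈ (0,a), the strict inequality (a² − x²)/(a² + x²) < S(x)/x holds. -/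
open Real Set Filter Topology

/-! ### Auxiliary facts about the comparison function `R(x) = x(a²-x²)/(a²+x²)` -/

private noncomputable def Rf (a x : ℝ) : ℝ := x * (a^2 - x^2) / (a^2 + x^2)
private noncomputable def R1 (a x : ℝ) : ℝ := (a^4 - 4*a^2*x^2 - x^4) / (a^2 + x^2)^2
private noncomputable def R2 (a x : ℝ) : ℝ := 4*a^2*x*(x^2 - 3*a^2) / (a^2 + x^2)^3

private lemma hden {a : ℝ} (ha : 0 < a) (x : ℝ) : 0 < a^2 + x^2 := by positivity

private lemma Rf_hasDeriv {a : ℝ} (ha : 0 < a) (x : ℝ) : HasDerivAt (Rf a) (R1 a x) x := by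
  have h1 : HasDerivAt (fun y : ℝ => y * (a^2 - y^2)) (1 * (a^2 - x^2) + x * (0 - 2*x)) x := by
    refine (hasDerivAt_id x).mul (((hasDerivAt_const x (a^2)).sub ?_))
    simpa using hasDerivAt_pow 2 x
  have h2 : HasDerivAt (fun y : ℝ => a^2 + y^2) (0 + 2*x) x := by
    refine (hasDerivAt_const x (a^2)).add ?_
    simpa using hasDerivAt_pow 2 x
  have := h1.fun_div h2 (hden ha x).ne'
  refine this.congr_deriv ?_
  have h3 := (hden ha x).ne'
  rw [R1]; field_simp
  ring

private lemma R1_hasDeriv {a : ℝ} (ha : 0 < a) (x : ℝ) : HasDerivAt (R1 a) (R2 a x) x := by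
  have h1 : HasDerivAt (fun y : ℝ => a^4 - 4*a^2*y^2 - y^4)
      (0 - 4*a^2*(2*x) - 4*x^3) x := by
    refine ((hasDerivAt_const x (a^4)).sub (((hasDerivAt_pow 2 x).const_mul (4*a^2)).congr_deriv ?_)).sub ?_
    · ring
    · simpa using hasDerivAt_pow 4 x
  have h2 : HasDerivAt (fun y : ℝ => (a^2 + y^2)^2) (2*(a^2+x^2)*(2*x)) x := by
    have hb : HasDerivAt (fun y : ℝ => a^2 + y^2) (2*x) x := by
      simpa using ((hasDerivAt_pow 2 x).const_add (a^2))
    refine (hb.fun_pow 2).congr_deriv ?_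
    push_cast
    ring
  have hne : ((a^2 + x^2)^2) ≠ 0 := by positivity
  have := h1.fun_div h2 hne
  refine this.congr_deriv ?_
  have h3 := (hden ha x).ne'
  rw [R2]; field_simp
  ring

private lemma Rf_pos {a x : ℝ} (ha : 0 < a) (hx : x ∈ Ioo 0 a) : 0 < Rf a x := by
  have h1 : 0 < a^2 - x^2 := by nlinarith [hx.1, hx.2]
  have h2 := hden ha x
  have hx0 : (0:ℝ) < x := hx.1
  unfold Rf
  positivity

private lemma Rf_le_x {a x : ℝ} (ha : 0 < a) (hx : 0 ≤ x) : Rf a x ≤ x := by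
  rw [Rf, div_le_iff₀ (hden ha x)]
  nlinarith [sq_nonneg x, mul_nonneg hx (sq_nonneg x)]

private lemma Rf_le_lin {a x : ℝ} (ha : 0 < a) (hx0 : 0 ≤ x) (hxa : x ≤ a) :
    Rf a x ≤ a - x := by
  rw [Rf, div_le_iff₀ (hden ha x)]
  nlinarith [mul_nonneg (sub_nonneg.2 hxa) (mul_nonneg (sub_nonneg.2 hxa) ha.le)]

private lemma key_eq {a : ℝ} (ha : 0 < a) (x : ℝ) :
    (R1 a x)^2 - Rf a x * R2 a x = 1 - 8*a^2*x^4*(a^2 - x^2) / (a^2 + x^2)^4 := by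
  have h3 := (hden ha x).ne'
  unfold Rf R1 R2
  field_simp
  ring

private lemma key_pos_s9 {a x : ℝ} (ha : 0 < a) (hx : x ∈ Ioo 0 a) :
    (R1 a x)^2 - Rf a x * R2 a x < 1 := by
  rw [key_eq ha x]
  have h1 : 0 < a^2 - x^2 := by nlinarith [hx.1, hx.2]
  have h2 : 0 < 8*a^2*x^4*(a^2 - x^2) / (a^2 + x^2)^4 := by
    have h3 := hden ha x
    have hx0 := hx.1
    positivity
  linarith

/-! ### Monotonicity off a finite exceptional set -/

private lemma antitoneOn_Icc_of_finite {T : Set ℝ} (hT : T.Finite) :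
    ∀ (f : ℝ → ℝ) (u v : ℝ), ContinuousOn f (Icc u v) →
      (∀ x ∈ Ioo u v \ T, DifferentiableAt ℝ f x) →
      (∀ x ∈ Ioo u v \ T, deriv f x ≤ 0) → AntitoneOn f (Icc u v) := by
  refine Set.Finite.induction_on (motive := fun T _ => ∀ (f : ℝ → ℝ) (u v : ℝ),
      ContinuousOn f (Icc u v) → (∀ x ∈ Ioo u v \ T, DifferentiableAt ℝ f x) →
      (∀ x ∈ Ioo u v \ T, deriv f x ≤ 0) → AntitoneOn f (Icc u v)) T hT ?_ ?_
  · intro f u v hc hd h0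
    refine antitoneOn_of_deriv_nonpos (convex_Icc u v) hc ?_ ?_
    · rw [interior_Icc]
      exact fun x hx => (hd x ⟨hx, notMem_empty x⟩).differentiableWithinAt
    · rw [interior_Icc]
      exact fun x hx => h0 x ⟨hx, notMem_empty x⟩
  · intro t T' htT' hT' IH f u v hc hd h0
    by_cases hto : t ∈ Ioo u v
    · have h1 : AntitoneOn f (Icc u t) := by
        refine IH f u t (hc.mono (Icc_subset_Icc le_rfl hto.2.le)) ?_ ?_
        · intro x hx
          exact hd x ⟨⟨hx.1.1, hx.1.2.trans hto.2⟩, by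
            simp only [mem_insert_iff, not_or]; exact ⟨ne_of_lt hx.1.2, hx.2⟩⟩
        · intro x hx
          exact h0 x ⟨⟨hx.1.1, hx.1.2.trans hto.2⟩, by
            simp only [mem_insert_iff, not_or]; exact ⟨ne_of_lt hx.1.2, hx.2⟩⟩
      have h2 : AntitoneOn f (Icc t v) := by
        refine IH f t v (hc.mono (Icc_subset_Icc hto.1.le le_rfl)) ?_ ?_
        · intro x hx
          exact hd x ⟨⟨hto.1.trans hx.1.1, hx.1.2⟩, by
            simp only [mem_insert_iff, not_or]; exact ⟨(ne_of_gt hx.1.1), hx.2⟩⟩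
        · intro x hx
          exact h0 x ⟨⟨hto.1.trans hx.1.1, hx.1.2⟩, by
            simp only [mem_insert_iff, not_or]; exact ⟨(ne_of_gt hx.1.1), hx.2⟩⟩
      intro x hx y hy hxy
      rcases le_total y t with h | h
      · exact h1 ⟨hx.1, hxy.trans h⟩ ⟨hy.1, h⟩ hxy
      · rcases le_total x t with h' | h'
        · calc f y ≤ f t := h2 ⟨le_rfl, hto.2.le⟩ ⟨h, hy.2⟩ h
            _ ≤ f x := h1 ⟨hx.1, h'⟩ ⟨hto.1.le, le_rfl⟩ h'
        · exact h2 ⟨h', hx.2⟩ ⟨h'.trans hxy, hy.2⟩ hxy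
    · refine IH f u v hc ?_ ?_
      · intro x hx
        refine hd x ⟨hx.1, ?_⟩
        simp only [mem_insert_iff, not_or]
        exact ⟨fun he => hto (he ▸ hx.1), hx.2⟩
      · intro x hx
        refine h0 x ⟨hx.1, ?_⟩
        simp only [mem_insert_iff, not_or]
        exact ⟨fun he => hto (he ▸ hx.1), hx.2⟩

private lemma monotoneOn_Icc_of_finite {T : Set ℝ} (hT : T.Finite)
    (f : ℝ → ℝ) (u v : ℝ) (hc : ContinuousOn f (Icc u v))
    (hd : ∀ x ∈ Ioo u v \ T, DifferentiableAt ℝ f x)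
    (h0 : ∀ x ∈ Ioo u v \ T, 0 ≤ deriv f x) : MonotoneOn f (Icc u v) := by
  have := antitoneOn_Icc_of_finite hT (fun y => -f y) u v hc.neg
    (fun x hx => (hd x hx).neg)
    (fun x hx => by
      rw [deriv.fun_neg]
      linarith [h0 x hx])
  intro x hx y hy hxy
  have := this hx hy hxy
  simpa using this

/-! ### The slope of `S` at `0` tends to `1` -/

private lemma slope_lim {a : ℝ} (ha : 0 < a) {S : ℝ → ℝ} (S0 : S 0 = 0)
    (hS2 : ∀ x ∈ Ioo 0 a, 0 < S x ∧ S x < x)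
    (h4 : (deriv S 0) ^ 2 - deriv (deriv S) 0 * S 0 ≥ 1) :
    Tendsto (fun x => S x / x) (𝓝[>] (0:ℝ)) (𝓝 1) := by
  rw [S0, mul_zero, sub_zero] at h4
  by_cases hd : DifferentiableAt ℝ S 0
  · have hD := hd.hasDerivAt
    rw [hasDerivAt_iff_tendsto_slope] at hD
    have hDr : Tendsto (slope S 0) (𝓝[>] (0:ℝ)) (𝓝 (deriv S 0)) :=
      hD.mono_left (nhdsWithin_mono 0 (fun y hy => ne_of_gt hy))
    have heq : ∀ᶠ y in 𝓝[>] (0:ℝ), slope S 0 y = S y / y :=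
      eventually_of_mem self_mem_nhdsWithin (fun y _ => by
        rw [slope_def_field, S0, sub_zero, sub_zero])
    have hDr' : Tendsto (fun y => S y / y) (𝓝[>] (0:ℝ)) (𝓝 (deriv S 0)) :=
      hDr.congr' heq
    have hucb : ∀ᶠ y in 𝓝[>] (0:ℝ), S y / y ≤ 1 ∧ 0 ≤ S y / y :=
      eventually_of_mem (Ioo_mem_nhdsGT_of_mem ⟨le_rfl, ha⟩) (fun y hy =>
        ⟨(div_le_one hy.1).2 (hS2 y hy).2.le, (div_pos (hS2 y hy).1 hy.1).le⟩)
    have h1 : deriv S 0 ≤ 1 := le_of_tendsto hDr' (hucb.mono fun y hy => hy.1)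
    have h2 : 0 ≤ deriv S 0 := ge_of_tendsto hDr' (hucb.mono fun y hy => hy.2)
    have hone : deriv S 0 = 1 := by nlinarith
    rw [hone] at hDr'
    exact hDr'
  · exfalso
    rw [deriv_zero_of_not_differentiableAt hd] at h4
    norm_num at h4

/-! ### Main theorem -/

set_option maxHeartbeats 2000000 in
/-- Under (S1)–(S4), the strict Redheffer inequality
`(a² − x²)/(a² + x²) < S(x)/x` holds for all `x ∈ (0,a)`. -/
theorem redheffer_strict_on_Ioo (a : ℝ) (ha : 0 < a) (P : Set ℝ)
    (hPfin : P.Finite) (hPsub : P ⊆ Ioo 0 a) (S : ℝ → ℝ)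
    (hS1 : ∀ x ∈ Ici (0:ℝ), S (-x) = -S x ∧ S (a + x) = -S x)
    (hS2 : ∀ x ∈ Ioo 0 a, 0 < S x ∧ S x < x)
    (hS3 : ContinuousOn S (Icc 0 a) ∧ ContDiffOn ℝ 1 S (Ico 0 a) ∧
      ContDiffOn ℝ 2 S (Ico 0 a \ P))
    (hS4 : ∀ x ∈ Ico 0 a \ P, (deriv S x) ^ 2 - deriv (deriv S) x * S x ≥ 1) :
    ∀ x ∈ Ioo 0 a, (a ^ 2 - x ^ 2) / (a ^ 2 + x ^ 2) < S x / x := by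
  obtain ⟨hScont, hSC1, hSC2⟩ := hS3
  -- ## basic facts
  have S0 : S 0 = 0 := by
    have := (hS1 0 self_mem_Ici).1
    rw [neg_zero] at this
    linarith
  have Sa : S a = 0 := by
    have := (hS1 0 self_mem_Ici).2
    rw [add_zero] at this
    rw [this, S0, neg_zero]
  have Spos : ∀ x ∈ Ioo 0 a, 0 < S x := fun x hx => (hS2 x hx).1
  have Sltx : ∀ x ∈ Ioo 0 a, S x < x := fun x hx => (hS2 x hx).2
  have hP0 : (0:ℝ) ∉ P := fun hmem => lt_irrefl 0 (hPsub hmem).1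
  have hUsub : Ioo 0 a \ P ⊆ Ico 0 a \ P := fun x hx =>
    ⟨⟨hx.1.1.le, hx.1.2⟩, hx.2⟩
  -- ## differentiability facts
  have hdiff : ∀ x ∈ Ioo 0 a, DifferentiableAt ℝ S x := by
    intro x hx
    have hmem : Ico 0 a ∈ 𝓝 x :=
      mem_nhds_iff.2 ⟨Ioo 0 a, Ioo_subset_Ico_self, isOpen_Ioo, hx⟩
    exact ((hSC1.differentiableOn one_ne_zero) x (Ioo_subset_Ico_self hx)).differentiableAt hmem
  have hasD1 : ∀ x ∈ Ioo 0 a, HasDerivAt S (deriv S x) x :=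
    fun x hx => (hdiff x hx).hasDerivAt
  have hD2cont : ContinuousOn (deriv S) (Ioo 0 a) :=
    (hSC1.mono Ioo_subset_Ico_self).continuousOn_deriv_of_isOpen isOpen_Ioo le_rfl
  have hUopen : IsOpen (Ioo 0 a \ P) := by
    rw [diff_eq]
    exact isOpen_Ioo.inter hPfin.isClosed.isOpen_compl
  have hasD3 : ∀ x ∈ Ioo 0 a \ P, HasDerivAt (deriv S) (deriv (deriv S) x) x := by
    intro x hx
    have h2 : ContDiffOn ℝ 2 S (Ioo 0 a \ P) := hSC2.mono hUsub
    have h1 : ContDiffOn ℝ 1 (deriv S) (Ioo 0 a \ P) :=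
      h2.deriv_of_isOpen hUopen (by norm_num)
    exact (((h1.differentiableOn one_ne_zero) x hx).differentiableAt
      (hUopen.mem_nhds hx)).hasDerivAt
  have hS4b : ∀ x ∈ Ioo 0 a \ P, deriv (deriv S) x * S x - (deriv S x)^2 ≤ -1 := by
    intro x hx
    have := hS4 x (hUsub hx)
    linarith
  -- ## the slope limit at 0
  have Slim : Tendsto (fun x => S x / x) (𝓝[>] (0:ℝ)) (𝓝 1) :=
    slope_lim ha S0 hS2 (hS4 0 ⟨⟨le_rfl, ha⟩, hP0⟩)
  -- ## p = S'/S is antitone on closed subintervals of (0,a)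
  have hp_anti : ∀ u v : ℝ, 0 < u → v < a →
      AntitoneOn (fun y => deriv S y / S y) (Icc u v) := by
    intro u v hu hva
    by_cases huv : u ≤ v
    · have hsub : Icc u v ⊆ Ioo 0 a := fun y hy =>
        ⟨lt_of_lt_of_le hu hy.1, lt_of_le_of_lt hy.2 hva⟩
      have hsub' : Ioo u v ⊆ Ioo 0 a := fun y hy => hsub (Ioo_subset_Icc_self hy)
      refine antitoneOn_Icc_of_finite hPfin _ u v ?_ ?_ ?_
      · exact (hD2cont.mono hsub).div ((hScont.mono Ioo_subset_Icc_self).mono hsub)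
          (fun y hy => (Spos y (hsub hy)).ne')
      · intro x hx
        have hxI : x ∈ Ioo 0 a := hsub' hx.1
        exact ((hasD3 x ⟨hxI, hx.2⟩).div (hasD1 x hxI) (Spos x hxI).ne').differentiableAt
      · intro x hx
        have hxI : x ∈ Ioo 0 a := hsub' hx.1
        have hdd := (hasD3 x ⟨hxI, hx.2⟩).fun_div (hasD1 x hxI) (Spos x hxI).ne'
        rw [hdd.deriv]
        apply div_nonpos_of_nonpos_of_nonneg
        · nlinarith [hS4b x ⟨hxI, hx.2⟩]
        · positivity
    · intro x hx y hy _
      exact absurd (hx.1.trans hx.2) huv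
  -- ## a point b beyond which S' < 0
  obtain ⟨b, hb, hSb'⟩ : ∃ b ∈ Ioo 0 a, ∀ x ∈ Ioo b a, deriv S x < 0 := by
    by_cases hcon : ∃ b ∈ Ioo 0 a, deriv S b < 0
    · obtain ⟨b, hbmem, hbneg⟩ := hcon
      refine ⟨b, hbmem, ?_⟩
      intro x hx
      have hxI : x ∈ Ioo 0 a := ⟨lt_trans hbmem.1 hx.1, hx.2⟩
      have hanti := hp_anti b x hbmem.1 hx.2
      have hple := hanti ⟨le_rfl, hx.1.le⟩ ⟨hx.1.le, le_rfl⟩ hx.1.le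
      have hpb : deriv S b / S b < 0 := div_neg_of_neg_of_pos hbneg (Spos b hbmem)
      have hpx : deriv S x / S x < 0 := lt_of_le_of_lt hple hpb
      by_contra hge
      push_neg at hge
      exact absurd (div_nonneg hge (Spos x hxI).le) (not_le.2 hpx)
    · push_neg at hcon
      exfalso
      have hmono := monotoneOn_Icc_of_finite finite_empty S (a/2) a
        (hScont.mono (Icc_subset_Icc (by linarith) le_rfl))
        (fun x hx => hdiff x ⟨by linarith [hx.1.1], hx.1.2⟩)
        (fun x hx => hcon x ⟨by linarith [hx.1.1], hx.1.2⟩)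
      have h34 : (3*a/4) ∈ Ioo 0 a := ⟨by linarith, by linarith⟩
      have hle := hmono (⟨by linarith, by linarith⟩ : (3*a/4) ∈ Icc (a/2) a)
        (⟨by linarith, le_rfl⟩ : a ∈ Icc (a/2) a) (by linarith)
      rw [Sa] at hle
      linarith [Spos _ h34]
  -- ## near-a lower bound
  have hnear : ∀ η : ℝ, 0 < η → η < 1 →
      ∃ l ∈ Ico b a, ∀ x ∈ Ioo l a, (1-η)*(a-x) ≤ S x := by
    intro η hη0 hη1
    set x₁ := (b + a)/2 with hx₁def
    have hx₁b : b < x₁ := by rw [hx₁def]; linarith [hb.2]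
    have hx₁a : x₁ < a := by rw [hx₁def]; linarith [hb.2]
    have hx₁I : x₁ ∈ Ioo 0 a := ⟨lt_trans hb.1 hx₁b, hx₁a⟩
    -- monotonicity of ψ = (S'² - 1)/S² on (x₁, a)
    have hψmono : ∀ ξ ∈ Ioo x₁ a,
        ((deriv S x₁)^2 - 1)/(S x₁)^2 ≤ ((deriv S ξ)^2 - 1)/(S ξ)^2 := by
      intro ξ hξ
      have hsub : Icc x₁ ξ ⊆ Ioo 0 a := fun y hy =>
        ⟨lt_of_lt_of_le hx₁I.1 hy.1, lt_of_le_of_lt hy.2 hξ.2⟩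
      have hsub' : Ioo x₁ ξ ⊆ Ioo 0 a := fun y hy => hsub (Ioo_subset_Icc_self hy)
      have hmono := monotoneOn_Icc_of_finite hPfin
        (fun y => ((deriv S y)^2 - 1)/(S y)^2) x₁ ξ ?_ ?_ ?_
      · exact hmono ⟨le_rfl, hξ.1.le⟩ ⟨hξ.1.le, le_rfl⟩ hξ.1.le
      · exact (((hD2cont.mono hsub).pow 2).sub continuousOn_const).div
          (((hScont.mono Ioo_subset_Icc_self).mono hsub).pow 2)
          (fun y hy => by have := Spos y (hsub hy); positivity)
      · intro y hy
        have hyI : y ∈ Ioo 0 a := hsub' hy.1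
        have hnum : HasDerivAt (fun z => (deriv S z)^2 - 1)
            ((2:ℕ) * (deriv S y)^1 * deriv (deriv S) y) y :=
          ((hasD3 y ⟨hyI, hy.2⟩).pow 2).sub_const 1
        have hden2 : HasDerivAt (fun z => (S z)^2) ((2:ℕ) * (S y)^1 * deriv S y) y :=
          (hasD1 y hyI).pow 2
        exact (hnum.div hden2 (by have := Spos y hyI; positivity)).differentiableAt
      · intro y hy
        have hyI : y ∈ Ioo 0 a := hsub' hy.1
        have hnum : HasDerivAt (fun z => (deriv S z)^2 - 1)
            ((2:ℕ) * (deriv S y)^1 * deriv (deriv S) y) y :=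
          ((hasD3 y ⟨hyI, hy.2⟩).pow 2).sub_const 1
        have hden2 : HasDerivAt (fun z => (S z)^2) ((2:ℕ) * (S y)^1 * deriv S y) y :=
          (hasD1 y hyI).pow 2
        have hdd := hnum.fun_div hden2 (by have := Spos y hyI; positivity)
        rw [hdd.deriv]
        apply div_nonneg _ (by positivity)
        have hS'neg : deriv S y < 0 := hSb' y ⟨lt_trans hx₁b hy.1.1, hyI.2⟩
        have hSy := Spos y hyI
        have hkey : deriv (deriv S) y * S y - (deriv S y)^2 + 1 ≤ 0 := by
          linarith [hS4b y ⟨hyI, hy.2⟩]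
        have hu : 0 ≤ -(2 * S y * deriv S y) := by nlinarith
        have hprod : 0 ≤ (2 * S y * deriv S y) *
            (deriv (deriv S) y * S y - (deriv S y)^2 + 1) := by
          nlinarith [mul_nonneg hu (neg_nonneg.2 hkey)]
        push_cast
        nlinarith [hprod]
    set c₀ := ((deriv S x₁)^2 - 1)/(S x₁)^2 with hc₀def
    -- S tends to 0 from the left at a
    have hSafar : Tendsto S (𝓝[<] a) (𝓝 0) := by
      have h1 : ContinuousWithinAt S (Icc 0 a) a := hScont a (right_mem_Icc.2 ha.le)
      have h2 : Tendsto S (𝓝[Ioo 0 a] a) (𝓝 (S a)) :=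
        h1.mono_left (nhdsWithin_mono a Ioo_subset_Icc_self)
      rw [nhdsWithin_Ioo_eq_nhdsLT ha, Sa] at h2
      exact h2
    have hε₀ : 0 < 1 - (1-η)^2 := by nlinarith
    have hev : ∀ᶠ ξ in 𝓝[<] a, |c₀| * (S ξ)^2 < 1 - (1-η)^2 := by
      have hcomp : Tendsto (fun ξ => |c₀| * (S ξ)^2) (𝓝[<] a) (𝓝 (|c₀| * 0^2)) :=
        tendsto_const_nhds.mul (hSafar.pow 2)
      rw [show |c₀| * (0:ℝ)^2 = 0 by ring] at hcomp
      exact hcomp.eventually_lt_const hε₀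
    obtain ⟨l0, hl0, hsub0⟩ := mem_nhdsLT_iff_exists_Ioo_subset.1 hev
    refine ⟨max l0 x₁, ⟨le_trans hx₁b.le (le_max_right _ _), max_lt hl0 hx₁a⟩, ?_⟩
    intro x hx
    have hS'le : ∀ ξ ∈ Ioo (max l0 x₁) a, deriv S ξ ≤ -(1-η) := by
      intro ξ hξ
      have hξx₁ : ξ ∈ Ioo x₁ a := ⟨lt_of_le_of_lt (le_max_right _ _) hξ.1, hξ.2⟩
      have hξI : ξ ∈ Ioo 0 a := ⟨lt_trans hx₁I.1 hξx₁.1, hξ.2⟩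
      have h1 := hψmono ξ hξx₁
      have hSξ2 : 0 < (S ξ)^2 := by have := Spos ξ hξI; positivity
      have h2 : 1 + c₀ * (S ξ)^2 ≤ (deriv S ξ)^2 := by
        have := (le_div_iff₀ hSξ2).1 h1
        linarith
      have h3 : |c₀| * (S ξ)^2 < 1 - (1-η)^2 :=
        hsub0 ⟨lt_of_le_of_lt (le_max_left _ _) hξ.1, hξ.2⟩
      have h4 : (1-η)^2 ≤ (deriv S ξ)^2 := by
        nlinarith [neg_abs_le c₀, sq_nonneg (S ξ)]
      have h5 : deriv S ξ < 0 := hSb' ξ ⟨lt_trans hx₁b hξx₁.1, hξ.2⟩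
      nlinarith [h4, h5]
    have hx0 : 0 < x := lt_trans hx₁I.1 (lt_of_le_of_lt (le_max_right _ _) hx.1)
    have hanti : AntitoneOn (fun t => S t + (1-η)*t) (Icc x a) := by
      refine antitoneOn_Icc_of_finite finite_empty _ x a ?_ ?_ ?_
      · exact (hScont.mono (Icc_subset_Icc hx0.le le_rfl)).add (continuous_const.mul continuous_id).continuousOn
      · intro y hy
        have hyI : y ∈ Ioo 0 a := ⟨lt_trans hx0 hy.1.1, hy.1.2⟩
        have hlin : HasDerivAt (fun t:ℝ => (1-η)*t) (1-η) y := by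
          simpa using (hasDerivAt_id y).const_mul (1-η)
        exact ((hasD1 y hyI).add hlin).differentiableAt
      · intro y hy
        have hyI : y ∈ Ioo 0 a := ⟨lt_trans hx0 hy.1.1, hy.1.2⟩
        have hlin : HasDerivAt (fun t:ℝ => (1-η)*t) (1-η) y := by
          simpa using (hasDerivAt_id y).const_mul (1-η)
        rw [((hasD1 y hyI).fun_add hlin).deriv]
        have := hS'le y ⟨lt_trans hx.1 hy.1.1, hy.1.2⟩
        linarith
    have hfin := hanti (left_mem_Icc.2 hx.2.le) (right_mem_Icc.2 hx.2.le) hx.2.le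
    simp only [Sa, zero_add] at hfin
    linarith
  -- ## the comparison function g = log S - log Rf
  set g : ℝ → ℝ := fun y => Real.log (S y) - Real.log (Rf a y) with hgdef
  set g' : ℝ → ℝ := fun y => deriv S y / S y - R1 a y / Rf a y with hg'def
  have hasDg : ∀ x ∈ Ioo 0 a, HasDerivAt g (g' x) x := by
    intro x hx
    exact ((hasD1 x hx).log (Spos x hx).ne').sub
      ((Rf_hasDeriv ha x).log (Rf_pos ha hx).ne')
  have hcontg : ContinuousOn g (Ioo 0 a) :=
    fun x hx => ((hasDg x hx).continuousAt).continuousWithinAt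
  have hexp : ∀ x ∈ Ioo 0 a, S x = Real.exp (g x) * Rf a x := by
    intro x hx
    rw [hgdef]
    simp only
    rw [Real.exp_sub, Real.exp_log (Spos x hx), Real.exp_log (Rf_pos ha hx)]
    rw [div_mul_cancel₀ _ (Rf_pos ha hx).ne']
  have hRfcont : Continuous (Rf a) :=
    Differentiable.continuous (fun x => (Rf_hasDeriv ha x).differentiableAt)
  have hR1cont : Continuous (R1 a) :=
    Differentiable.continuous (fun x => (R1_hasDeriv ha x).differentiableAt)
  have hcontg' : ContinuousOn g' (Ioo 0 a) := by
    apply ContinuousOn.sub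
    · exact hD2cont.div (hScont.mono Ioo_subset_Icc_self)
        (fun y hy => (Spos y hy).ne')
    · exact (hR1cont.continuousOn).div (hRfcont.continuousOn)
        (fun y hy => (Rf_pos ha hy).ne')
  have hasDg' : ∀ x ∈ Ioo 0 a \ P, HasDerivAt g'
      ((deriv (deriv S) x * S x - deriv S x * deriv S x) / (S x)^2
        - (R2 a x * Rf a x - R1 a x * R1 a x) / (Rf a x)^2) x := by
    intro x hx
    exact ((hasD3 x hx).div (hasD1 x hx.1) (Spos x hx.1).ne').sub
      ((R1_hasDeriv ha x).div (Rf_hasDeriv ha x) (Rf_pos ha hx.1).ne')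
  have hdiffg' : ∀ x ∈ Ioo 0 a \ P, DifferentiableAt ℝ g' x :=
    fun x hx => (hasDg' x hx).differentiableAt
  have hqbound : ∀ x ∈ Ioo 0 a \ P,
      deriv g' x ≤ -(1/(S x)^2) + ((R1 a x)^2 - Rf a x * R2 a x)/(Rf a x)^2 := by
    intro x hx
    rw [(hasDg' x hx).deriv]
    have hS2pos : (0:ℝ) < (S x)^2 := by have := Spos x hx.1; positivity
    have hR2pos : (0:ℝ) < (Rf a x)^2 := by have := Rf_pos ha hx.1; positivity
    have e1 : (deriv (deriv S) x * S x - deriv S x * deriv S x) / (S x)^2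
        ≤ -(1/(S x)^2) := by
      rw [div_le_iff₀ hS2pos]
      have h5 := hS4b x hx
      have hcancel : -(1/(S x)^2) * (S x)^2 = -1 := by have := (Spos x hx.1).ne'; field_simp
      nlinarith [h5, hcancel]
    have e2 : -((R2 a x * Rf a x - R1 a x * R1 a x) / (Rf a x)^2)
        = ((R1 a x)^2 - Rf a x * R2 a x)/(Rf a x)^2 := by ring
    linarith [e1, e2.ge, e2.le]
  have hq0 : ∀ x ∈ Ioo 0 a \ P, S x ≤ Rf a x → deriv g' x ≤ 0 := by
    intro x hx hSR
    have h1 := hqbound x hx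
    have h2 := key_pos_s9 ha hx.1
    have hS := Spos x hx.1
    have hR := Rf_pos ha hx.1
    have h3 : ((R1 a x)^2 - Rf a x * R2 a x)/(Rf a x)^2 ≤ 1/(Rf a x)^2 := by
      apply div_le_div_of_nonneg_right h2.le (by positivity) |>.trans_eq rfl
    have h4 : 1/(Rf a x)^2 ≤ 1/(S x)^2 := by
      apply one_div_le_one_div_of_le (by positivity)
      nlinarith
    linarith
  -- translations between g and S/Rf comparisons
  have hgca : ∀ x ∈ Ioo 0 a, ContinuousAt g x := fun x hx => (hasDg x hx).continuousAt
  have hglt : ∀ c ∈ Ioo 0 a, ∀ x ∈ Ioo 0 a, g x ≤ g c → S x ≤ Real.exp (g c) * Rf a x := by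
    intro c hc x hx hle
    rw [hexp x hx]
    exact mul_le_mul_of_nonneg_right (Real.exp_le_exp.2 hle) (Rf_pos ha hx).le
  have hSled : ∀ x ∈ Ioo 0 a, g x < 0 → S x ≤ Rf a x := by
    intro x hx hlt
    rw [hexp x hx]
    have h1 : Real.exp (g x) < 1 := Real.exp_lt_one_iff.2 hlt
    nlinarith [Rf_pos ha hx, Real.exp_pos (g x)]
  -- ## main part : g ≥ 0 on (0,a)
  have hmain : ∀ c ∈ Ioo 0 a, 0 ≤ g c := by
    by_contra hcon
    push_neg at hcon
    obtain ⟨c, hc, hgc⟩ := hcon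
    have hq₀ : Real.exp (g c) < 1 := Real.exp_lt_one_iff.2 hgc
    rcases le_or_gt (g' c) 0 with hle | hlt
    · -- right-side argument
      set Wr : Set ℝ := insert a {x | x ∈ Ioo c a ∧ 0 ≤ g x} with hWrdef
      have hWrne : Wr.Nonempty := ⟨a, mem_insert _ _⟩
      have hWrbdd : BddBelow Wr := ⟨c, by
        rintro y (rfl | ⟨hy, _⟩)
        · exact hc.2.le
        · exact hy.1.le⟩
      set β := sInf Wr with hβdef
      have hβle : ∀ y ∈ Wr, β ≤ y := fun y hy => csInf_le hWrbdd hy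
      have hβa : β ≤ a := hβle a (mem_insert _ _)
      have hβc : c < β := by
        have hev : ∀ᶠ y in 𝓝 c, g y < 0 :=
          ((hgca c hc).tendsto).eventually_lt_const hgc
        obtain ⟨ε, hε, hball⟩ := Metric.eventually_nhds_iff.1 hev
        have hlow : min (c + ε/2) a ≤ β := by
          apply le_csInf hWrne
          rintro y (rfl | ⟨hy1, hy2⟩)
          · exact min_le_right _ _
          · refine le_trans (min_le_left _ _) ?_
            by_contra hlt2
            push_neg at hlt2
            have : dist y c < ε := by
              rw [Real.dist_eq, abs_of_pos (sub_pos.2 hy1.1)]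
              linarith
            exact absurd hy2 (not_le.2 (hball this))
        exact lt_of_lt_of_le (lt_min (by linarith) hc.2) hlow
      have hneg : ∀ x, c < x → x < β → x ∈ Ioo c a ∧ g x < 0 := by
        intro x h1 h2
        have hxa : x < a := lt_of_lt_of_le h2 hβa
        refine ⟨⟨h1, hxa⟩, ?_⟩
        by_contra hge
        push_neg at hge
        exact absurd (hβle x (mem_insert_of_mem _ ⟨⟨h1, hxa⟩, hge⟩)) (not_le.2 h2)
      have hcI : ∀ x, c ≤ x → x < β → x ∈ Ioo 0 a := fun x h1 h2 =>
        ⟨lt_of_lt_of_le hc.1 h1, lt_of_lt_of_le h2 hβa⟩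
      have hg'le : ∀ t, c < t → t < β → g' t ≤ g' c := by
        intro t h1 h2
        have hanti := antitoneOn_Icc_of_finite hPfin g' c t
          (hcontg'.mono (fun y hy => hcI y hy.1 (lt_of_le_of_lt hy.2 h2)))
          (fun y hy => hdiffg' y ⟨hcI y hy.1.1.le (lt_trans hy.1.2 h2), hy.2⟩)
          (fun y hy => by
            have h3 := hneg y hy.1.1 (lt_trans hy.1.2 h2)
            have hyI : y ∈ Ioo 0 a := hcI y hy.1.1.le (lt_trans hy.1.2 h2)
            exact hq0 y ⟨hyI, hy.2⟩ (hSled y hyI h3.2))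
        exact hanti ⟨le_rfl, h1.le⟩ ⟨h1.le, le_rfl⟩ h1.le
      have hgle : ∀ x, c ≤ x → x < β → g x ≤ g c := by
        intro x h1 h2
        rcases eq_or_lt_of_le h1 with rfl | h1'
        · exact le_rfl
        · have hanti := antitoneOn_Icc_of_finite finite_empty g c x
            (hcontg.mono (fun y hy => hcI y hy.1 (lt_of_le_of_lt hy.2 h2)))
            (fun y hy => (hasDg y (hcI y hy.1.1.le (lt_trans hy.1.2 h2))).differentiableAt)
            (fun y hy => by
              rw [(hasDg y (hcI y hy.1.1.le (lt_trans hy.1.2 h2))).deriv]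
              exact le_trans (hg'le y hy.1.1 (lt_trans hy.1.2 h2)) hle)
          exact hanti ⟨le_rfl, h1'.le⟩ ⟨h1'.le, le_rfl⟩ h1'.le
      rcases lt_or_eq_of_le hβa with hβlt | hβeq
      · -- β < a
        have hβI : β ∈ Ioo 0 a := ⟨lt_trans hc.1 hβc, hβlt⟩
        have hca := hgca β hβI
        have hne1 : (𝓝[Ioo c β] β).NeBot := by
          apply mem_closure_iff_nhdsWithin_neBot.1
          rw [closure_Ioo hβc.ne]
          exact ⟨hβc.le, le_rfl⟩
        have ht1 : Tendsto g (𝓝[Ioo c β] β) (𝓝 (g β)) :=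
          hca.tendsto.mono_left nhdsWithin_le_nhds
        have hgβ1 : g β ≤ g c := le_of_tendsto ht1 (eventually_of_mem self_mem_nhdsWithin
          (fun y hy => hgle y hy.1.le hy.2))
        have hβcl : β ∈ closure {x | x ∈ Ioo c a ∧ 0 ≤ g x} := by
          have h1 := csInf_mem_closure hWrne hWrbdd
          rw [hWrdef, Set.insert_eq, closure_union, closure_singleton] at h1
          rcases h1 with h1 | h1
          · exact absurd (mem_singleton_iff.1 h1) hβlt.ne
          · exact h1
        have hne2 : (𝓝[{x | x ∈ Ioo c a ∧ 0 ≤ g x}] β).NeBot :=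
          mem_closure_iff_nhdsWithin_neBot.1 hβcl
        have ht2 : Tendsto g (𝓝[{x | x ∈ Ioo c a ∧ 0 ≤ g x}] β) (𝓝 (g β)) :=
          hca.tendsto.mono_left nhdsWithin_le_nhds
        have hgβ2 : 0 ≤ g β := ge_of_tendsto ht2 (eventually_of_mem self_mem_nhdsWithin
          (fun y hy => hy.2))
        linarith
      · -- β = a
        set η := (1 - Real.exp (g c))/2 with hηdef
        have hη0 : 0 < η := by rw [hηdef]; linarith
        have hη1 : η < 1 := by
          rw [hηdef]
          nlinarith [Real.exp_pos (g c)]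
        obtain ⟨l, hl, hlb⟩ := hnear η hη0 hη1
        set x₀ := (max l c + a)/2 with hx₀def
        have hmlt : max l c < a := max_lt hl.2 hc.2
        have hx₀1 : max l c < x₀ := by rw [hx₀def]; linarith
        have hx₀2 : x₀ < a := by rw [hx₀def]; linarith
        have hc_x₀ : c < x₀ := lt_of_le_of_lt (le_max_right l c) hx₀1
        have hl_x₀ : l < x₀ := lt_of_le_of_lt (le_max_left l c) hx₀1
        have hx₀I : x₀ ∈ Ioo 0 a := ⟨lt_trans hc.1 hc_x₀, hx₀2⟩
        have h1 : (1-η)*(a-x₀) ≤ S x₀ := hlb x₀ ⟨hl_x₀, hx₀2⟩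
        have h2 : S x₀ ≤ Real.exp (g c) * Rf a x₀ :=
          hglt c hc x₀ hx₀I (hgle x₀ hc_x₀.le (hβeq ▸ hx₀2))
        have h3 : Rf a x₀ ≤ a - x₀ := Rf_le_lin ha hx₀I.1.le hx₀2.le
        have h5 : Real.exp (g c) * Rf a x₀ ≤ Real.exp (g c) * (a - x₀) :=
          mul_le_mul_of_nonneg_left h3 (Real.exp_pos _).le
        have h6 : (1-η)*(a-x₀) ≤ Real.exp (g c) * (a-x₀) := le_trans h1 (h2.trans h5)
        have h7 : 1-η ≤ Real.exp (g c) :=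
          le_of_mul_le_mul_right (by linarith [h6]) (sub_pos.2 hx₀2)
        rw [hηdef] at h7
        linarith
    · -- left-side argument
      set Wl : Set ℝ := insert 0 {x | x ∈ Ioo 0 c ∧ 0 ≤ g x} with hWldef
      have hWlne : Wl.Nonempty := ⟨0, mem_insert _ _⟩
      have hWlbdd : BddAbove Wl := ⟨c, by
        rintro y (rfl | ⟨hy, _⟩)
        · exact hc.1.le
        · exact hy.2.le⟩
      set α := sSup Wl with hαdef
      have hαge : ∀ y ∈ Wl, y ≤ α := fun y hy => le_csSup hWlbdd hy
      have hα0 : 0 ≤ α := hαge 0 (mem_insert _ _)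
      have hαc : α < c := by
        have hev : ∀ᶠ y in 𝓝 c, g y < 0 :=
          ((hgca c hc).tendsto).eventually_lt_const hgc
        obtain ⟨ε, hε, hball⟩ := Metric.eventually_nhds_iff.1 hev
        have hup : α ≤ max (c - ε/2) 0 := by
          apply csSup_le hWlne
          rintro y (rfl | ⟨hy1, hy2⟩)
          · exact le_max_right _ _
          · refine le_trans ?_ (le_max_left _ _)
            by_contra hlt2
            push_neg at hlt2
            have : dist y c < ε := by
              rw [Real.dist_eq, abs_of_neg (sub_neg.2 hy1.2)]
              linarith
            exact absurd hy2 (not_le.2 (hball this))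
        exact lt_of_le_of_lt hup (max_lt (by linarith) hc.1)
      have hneg : ∀ x, α < x → x < c → x ∈ Ioo 0 c ∧ g x < 0 := by
        intro x h1 h2
        have hx0 : 0 < x := lt_of_le_of_lt hα0 h1
        refine ⟨⟨hx0, h2⟩, ?_⟩
        by_contra hge
        push_neg at hge
        exact absurd (hαge x (mem_insert_of_mem _ ⟨⟨hx0, h2⟩, hge⟩)) (not_le.2 h1)
      have hcI : ∀ x, α < x → x ≤ c → x ∈ Ioo 0 a := fun x h1 h2 =>
        ⟨lt_of_le_of_lt hα0 h1, lt_of_le_of_lt h2 hc.2⟩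
      have hg'ge : ∀ t, α < t → t < c → g' c ≤ g' t := by
        intro t h1 h2
        have hanti := antitoneOn_Icc_of_finite hPfin g' t c
          (hcontg'.mono (fun y hy => hcI y (lt_of_lt_of_le h1 hy.1) hy.2))
          (fun y hy => hdiffg' y ⟨hcI y (lt_trans h1 hy.1.1) hy.1.2.le, hy.2⟩)
          (fun y hy => by
            have h3 := hneg y (lt_trans h1 hy.1.1) hy.1.2
            have hyI : y ∈ Ioo 0 a := hcI y (lt_trans h1 hy.1.1) hy.1.2.le
            exact hq0 y ⟨hyI, hy.2⟩ (hSled y hyI h3.2))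
        exact hanti ⟨le_rfl, h2.le⟩ ⟨h2.le, le_rfl⟩ h2.le
      have hgle : ∀ x, α < x → x ≤ c → g x ≤ g c := by
        intro x h1 h2
        rcases eq_or_lt_of_le h2 with rfl | h2'
        · exact le_rfl
        · have hmono := monotoneOn_Icc_of_finite finite_empty g x c
            (hcontg.mono (fun y hy => hcI y (lt_of_lt_of_le h1 hy.1) hy.2))
            (fun y hy => (hasDg y (hcI y (lt_trans h1 hy.1.1) hy.1.2.le)).differentiableAt)
            (fun y hy => by
              rw [(hasDg y (hcI y (lt_trans h1 hy.1.1) hy.1.2.le)).deriv]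
              exact le_trans hlt.le (hg'ge y (lt_trans h1 hy.1.1) hy.1.2))
          exact hmono ⟨le_rfl, h2'.le⟩ ⟨h2'.le, le_rfl⟩ h2'.le
      rcases eq_or_lt_of_le hα0 with hzero | hpos
      · -- α = 0 : contradicts the slope limit at 0
        have hev : ∀ᶠ x in 𝓝[>] (0:ℝ), S x / x ≤ Real.exp (g c) := by
          apply eventually_of_mem (Ioo_mem_nhdsGT_of_mem ⟨le_rfl, hc.1⟩)
          intro y hy
          have hyI : y ∈ Ioo 0 a := ⟨hy.1, lt_trans hy.2 hc.2⟩
          have h1 : g y ≤ g c := hgle y (hzero ▸ hy.1) hy.2.le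
          have h2 : S y ≤ Real.exp (g c) * Rf a y := hglt c hc y hyI h1
          have h3 : Rf a y ≤ y := Rf_le_x ha hy.1.le
          rw [div_le_iff₀ hy.1]
          nlinarith [Real.exp_pos (g c)]
        have := le_of_tendsto Slim hev
        linarith
      · -- α > 0
        have hαI : α ∈ Ioo 0 a := ⟨hpos, lt_trans hαc hc.2⟩
        have hca := hgca α hαI
        have hne1 : (𝓝[Ioo α c] α).NeBot := by
          apply mem_closure_iff_nhdsWithin_neBot.1
          rw [closure_Ioo hαc.ne]
          exact ⟨le_rfl, hαc.le⟩
        have ht1 : Tendsto g (𝓝[Ioo α c] α) (𝓝 (g α)) :=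
          hca.tendsto.mono_left nhdsWithin_le_nhds
        have hgα1 : g α ≤ g c := le_of_tendsto ht1 (eventually_of_mem self_mem_nhdsWithin
          (fun y hy => hgle y hy.1 hy.2.le))
        have hαcl : α ∈ closure {x | x ∈ Ioo 0 c ∧ 0 ≤ g x} := by
          have h1 := csSup_mem_closure hWlne hWlbdd
          rw [hWldef, Set.insert_eq, closure_union, closure_singleton] at h1
          rcases h1 with h1 | h1
          · exact absurd (mem_singleton_iff.1 h1).symm hpos.ne
          · exact h1
        have hne2 : (𝓝[{x | x ∈ Ioo 0 c ∧ 0 ≤ g x}] α).NeBot :=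
          mem_closure_iff_nhdsWithin_neBot.1 hαcl
        have ht2 : Tendsto g (𝓝[{x | x ∈ Ioo 0 c ∧ 0 ≤ g x}] α) (𝓝 (g α)) :=
          hca.tendsto.mono_left nhdsWithin_le_nhds
        have hgα2 : 0 ≤ g α := ge_of_tendsto ht2 (eventually_of_mem self_mem_nhdsWithin
          (fun y hy => hy.2))
        linarith
  -- ## strictness : Rf < S on (0,a)
  have hstrict : ∀ c ∈ Ioo 0 a, Rf a c < S c := by
    intro c hc
    have hge : Rf a c ≤ S c := by
      have h0 := hmain c hc
      have h1 : (1:ℝ) ≤ Real.exp (g c) := by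
        have := Real.exp_le_exp.2 h0
        rwa [Real.exp_zero] at this
      rw [hexp c hc]
      nlinarith [Rf_pos ha hc]
    rcases lt_or_eq_of_le hge with h | heq
    · exact h
    exfalso
    have hgc0 : g c = 0 := by
      rw [hgdef]
      simp only
      rw [heq, sub_self]
    have hmin : IsLocalMin g c := by
      filter_upwards [isOpen_Ioo.mem_nhds hc] with y hy
      rw [hgc0]
      exact hmain y hy
    have hg'c : g' c = 0 := hmin.hasDerivAt_eq_zero (hasDg c hc)
    -- the quantity G bounding deriv g'
    set G : ℝ → ℝ := fun x => -(1/(S x)^2)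
      + (1 - 8*a^2*x^4*(a^2 - x^2) / (a^2 + x^2)^4)/(Rf a x)^2 with hGdef
    have hGbound : ∀ x ∈ Ioo 0 a \ P, deriv g' x ≤ G x := by
      intro x hx
      have := hqbound x hx
      rwa [key_eq ha x] at this
    have hGc : G c < 0 := by
      rw [hGdef]
      simp only
      rw [← heq]
      have hR := Rf_pos ha hc
      have hF : 0 < 8*a^2*c^4*(a^2 - c^2) / (a^2 + c^2)^4 := by
        have h1 : 0 < a^2 - c^2 := by nlinarith [hc.1, hc.2]
        have h2 := hden ha c
        have h3 := hc.1
        positivity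
      have : (-(1/(Rf a c)^2) + (1 - 8*a^2*c^4*(a^2 - c^2) / (a^2 + c^2)^4)/(Rf a c)^2)
          = -(8*a^2*c^4*(a^2 - c^2) / (a^2 + c^2)^4)/(Rf a c)^2 := by ring
      rw [this]
      apply div_neg_of_neg_of_pos (by linarith) (by positivity)
    have hGcont : ContinuousAt G c := by
      have hSca : ContinuousAt S c := (hasD1 c hc).continuousAt
      have hFc : ContinuousAt (fun x : ℝ => 8*a^2*x^4*(a^2 - x^2) / (a^2 + x^2)^4) c := by
        have hnum : Continuous (fun x : ℝ => 8*a^2*x^4*(a^2 - x^2)) :=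
          (continuous_const.mul (continuous_pow 4)).mul
            (continuous_const.sub (continuous_pow 2))
        have hden4 : Continuous (fun x : ℝ => (a^2 + x^2)^4) :=
          (continuous_const.add (continuous_pow 2)).pow 4
        exact (hnum.continuousAt).div (hden4.continuousAt)
          (by have := hden ha c; positivity)
      have hS2 : ContinuousAt (fun x => -(1/(S x)^2)) c := by
        apply ContinuousAt.neg
        apply ContinuousAt.div continuousAt_const (hSca.fun_pow 2)
        have := Spos c hc
        positivity
      have hR2 : ContinuousAt (fun x => (1 - 8*a^2*x^4*(a^2 - x^2) / (a^2 + x^2)^4)/(Rf a x)^2) c := by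
        apply ContinuousAt.div (continuousAt_const.sub hFc) ((hRfcont.continuousAt).fun_pow 2)
        have := Rf_pos ha hc
        positivity
      exact hS2.add hR2
    have hevG : ∀ᶠ y in 𝓝 c, G y < 0 := (hGcont.tendsto).eventually_lt_const hGc
    obtain ⟨ε, hε, hball⟩ := Metric.eventually_nhds_iff.1 hevG
    set d := min (c + ε/2) ((c+a)/2) with hddef
    have hcd : c < d := lt_min (by linarith) (by linarith [hc.2])
    have hda : d < a := lt_of_le_of_lt (min_le_right _ _) (by linarith [hc.2])
    have hIccsub : Icc c d ⊆ Ioo 0 a := fun y hy =>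
      ⟨lt_of_lt_of_le hc.1 hy.1, lt_of_le_of_lt hy.2 hda⟩
    have hGneg : ∀ y ∈ Icc c d, G y < 0 := by
      intro y hy
      apply hball
      rw [Real.dist_eq, abs_of_nonneg (sub_nonneg.2 hy.1)]
      have : y ≤ c + ε/2 := le_trans hy.2 (min_le_left _ _)
      linarith
    -- g' is antitone on [c,d], hence g' ≤ 0 there
    have hanti1 := antitoneOn_Icc_of_finite hPfin g' c d
      (hcontg'.mono hIccsub)
      (fun y hy => hdiffg' y ⟨hIccsub (Ioo_subset_Icc_self hy.1), hy.2⟩)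
      (fun y hy => le_of_lt (lt_of_le_of_lt
        (hGbound y ⟨hIccsub (Ioo_subset_Icc_self hy.1), hy.2⟩)
        (hGneg y (Ioo_subset_Icc_self hy.1))))
    have hg'le : ∀ y ∈ Icc c d, g' y ≤ 0 := by
      intro y hy
      rw [← hg'c]
      exact hanti1 (left_mem_Icc.2 hcd.le) hy hy.1
    -- hence g is antitone on [c,d], so g ≡ 0 there
    have hanti2 := antitoneOn_Icc_of_finite finite_empty g c d
      (hcontg.mono hIccsub)
      (fun y hy => (hasDg y (hIccsub (Ioo_subset_Icc_self hy.1))).differentiableAt)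
      (fun y hy => by
        rw [(hasDg y (hIccsub (Ioo_subset_Icc_self hy.1))).deriv]
        exact hg'le y (Ioo_subset_Icc_self hy.1))
    have hzero : ∀ y ∈ Icc c d, g y = 0 := by
      intro y hy
      refine le_antisymm ?_ (hmain y (hIccsub hy))
      have := hanti2 (left_mem_Icc.2 hcd.le) hy hy.1
      rwa [hgc0] at this
    -- pick a point of (c,d) off P and derive a contradiction
    obtain ⟨xb, hxb⟩ : (Ioo c d \ P).Nonempty := ((Ioo_infinite hcd).diff hPfin).nonempty
    have hxbI : xb ∈ Ioo 0 a := hIccsub (Ioo_subset_Icc_self hxb.1)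
    have hg'zero : ∀ᶠ y in 𝓝 xb, g' y = 0 := by
      filter_upwards [isOpen_Ioo.mem_nhds hxb.1] with y hy
      have h0 : HasDerivAt g 0 y := by
        have heq0 : g =ᶠ[𝓝 y] (fun _ => (0:ℝ)) := by
          filter_upwards [isOpen_Ioo.mem_nhds hy] with z hz
          exact hzero z (Ioo_subset_Icc_self hz)
        exact (hasDerivAt_const y (0:ℝ)).congr_of_eventuallyEq heq0
      have hyI : y ∈ Ioo 0 a := hIccsub (Ioo_subset_Icc_self hy)
      exact (h0.unique (hasDg y hyI)).symm
    have hd0 : deriv g' xb = 0 := by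
      have h1 : deriv g' xb = deriv (fun _ => (0:ℝ)) xb :=
        Filter.EventuallyEq.deriv_eq hg'zero
      rw [h1, deriv_const]
    have hcontra := hGbound xb ⟨hxbI, hxb.2⟩
    rw [hd0] at hcontra
    exact absurd hcontra (not_le.2 (hGneg xb (Ioo_subset_Icc_self hxb.1)))
  -- ## conclusion
  intro x hx
  have h1 := hstrict x hx
  have h2 : x * (a^2 - x^2) < S x * (a^2 + x^2) := by
    rw [Rf, div_lt_iff₀ (hden ha x)] at h1
    exact h1
  rw [div_lt_div_iff₀ (hden ha x) hx.1]
  nlinarith [h2]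
end

section
/- Let 2 ≤ p < ∞ and 2 ≤ q < ∞. Then S := sin_{p,q} satisfies S'(x)² − S''(x)·S(x) ≥ 1 for all x ∈ [0, π_{p,q}) with x ≠ π_{p,q}/2. -/
open Real Set
open MeasureTheory Topology Filter

namespace S4aux

noncomputable def g (p q t : ℝ) : ℝ := (1 - t ^ q) ^ (-(1 / p))
noncomputable def phi (p q s : ℝ) : ℝ := (1 - s ^ q) ^ (1 / p)

variable {p q : ℝ}

lemma hp0 (hp : 2 ≤ p) : (0:ℝ) < p := by linarith
lemma hq0 (hq : 2 ≤ q) : (0:ℝ) < q := by linarith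

lemma one_sub_pos (hq : 2 ≤ q) {t : ℝ} (h : |t| < 1) : 0 < 1 - t ^ q := by
  have h1 : |t ^ q| ≤ |t| ^ q := Real.abs_rpow_le_abs_rpow t q
  have h2 : |t| ^ q < 1 := Real.rpow_lt_one (abs_nonneg t) h (hq0 hq)
  have h3 : t ^ q ≤ |t ^ q| := le_abs_self _
  linarith

lemma g_contAt (hp : 2 ≤ p) (hq : 2 ≤ q) {t : ℝ} (h : |t| < 1) : ContinuousAt (g p q) t := by
  have h1 : ContinuousAt (fun t : ℝ => 1 - t ^ q) t :=
    continuousAt_const.sub (Real.continuousAt_rpow_const t q (Or.inr (by linarith)))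
  exact h1.rpow_const (Or.inl (ne_of_gt (one_sub_pos hq h)))

lemma g_pos (hq : 2 ≤ q) {t : ℝ} (h0 : 0 ≤ t) (h1 : t < 1) : 0 < g p q t :=
  Real.rpow_pos_of_pos (one_sub_pos hq (by rwa [abs_of_nonneg h0])) _

lemma g_nonneg (hq : 2 ≤ q) {t : ℝ} (h : |t| ≤ 1) : 0 ≤ g p q t := by
  refine Real.rpow_nonneg ?_ _
  have h1 : |t ^ q| ≤ |t| ^ q := Real.abs_rpow_le_abs_rpow t q
  have h2 : |t| ^ q ≤ 1 := Real.rpow_le_one (abs_nonneg t) h (by linarith)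
  have h3 : t ^ q ≤ |t ^ q| := le_abs_self _
  linarith

lemma g_intInt01 (hp : 2 ≤ p) (hq : 2 ≤ q) : IntervalIntegrable (g p q) volume 0 1 := by
  have hpp := hp0 hp
  have hr : (-1 : ℝ) < -(1/p) := by
    have h1 : 1/p ≤ 1/2 := by
      rw [div_le_div_iff₀ hpp two_pos]; linarith
    linarith
  have h1 : IntervalIntegrable (fun x : ℝ => x ^ (-(1/p))) volume 0 1 :=
    intervalIntegral.intervalIntegrable_rpow' hr
  have h2 : IntervalIntegrable (fun x : ℝ => (1 - x) ^ (-(1/p))) volume 0 1 := by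
    simpa using (h1.comp_sub_left 1).symm
  refine h2.mono_fun ?_ ?_
  · have hco : ContinuousOn (g p q) (Ioo (0:ℝ) 1) := fun t ht =>
      (g_contAt hp hq (abs_lt.2 ⟨by linarith [ht.1], ht.2⟩)).continuousWithinAt
    have hm := hco.aestronglyMeasurable (μ := volume) measurableSet_Ioo
    rw [uIoc_of_le (zero_le_one' ℝ)]
    rwa [← Measure.restrict_congr_set Ioo_ae_eq_Ioc]
  · rw [uIoc_of_le (zero_le_one' ℝ)]
    refine Filter.eventually_of_mem (self_mem_ae_restrict measurableSet_Ioc) (fun t ht => ?_)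
    rcases eq_or_lt_of_le ht.2 with h1 | h1
    · have : g p q t = 0 := by
        rw [g, h1, Real.one_rpow, sub_self,
          Real.zero_rpow (neg_ne_zero.2 (by positivity))]
      simp only [this, norm_zero]
      positivity
    · have ht0 : 0 < t := ht.1
      have hb : 1 - t ≤ 1 - t ^ q := by
        have : t ^ q ≤ t := by
          have := Real.rpow_le_rpow_of_exponent_ge ht0 h1.le (by linarith : (1:ℝ) ≤ q)
          rwa [Real.rpow_one] at this
        linarith
      have hkey : g p q t ≤ (1 - t) ^ (-(1/p)) :=
        Real.rpow_le_rpow_of_nonpos (by linarith) hb (neg_nonpos.2 (by positivity))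
      have habs : |t| ≤ 1 := by rw [abs_of_nonneg ht0.le]; exact ht.2
      have hn1 : ‖g p q t‖ = g p q t := Real.norm_of_nonneg (g_nonneg hq habs)
      have hn2 : ‖(1 - t) ^ (-(1/p))‖ = (1 - t) ^ (-(1/p)) :=
        Real.norm_of_nonneg (Real.rpow_nonneg (by linarith) _)
      show ‖g p q t‖ ≤ ‖(1 - t) ^ (-(1/p))‖
      rw [hn1, hn2]; exact hkey

lemma genF_eq (p q x : ℝ) : genF p q x = ∫ t in (0:ℝ)..x, g p q t := rfl

lemma g_intInt (hp : 2 ≤ p) (hq : 2 ≤ q) {x : ℝ} (hx1 : -1 < x) (hx2 : x ≤ 1) :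
    IntervalIntegrable (g p q) volume 0 x := by
  rcases le_or_gt 0 x with h | h
  · exact (g_intInt01 hp hq).mono_set (by
      rw [uIcc_of_le h, uIcc_of_le (zero_le_one' ℝ)]
      exact Icc_subset_Icc le_rfl hx2)
  · refine ContinuousOn.intervalIntegrable ?_
    intro t ht
    rw [uIcc_of_ge h.le] at ht
    exact (g_contAt hp hq (abs_lt.2 ⟨lt_of_lt_of_le hx1 ht.1,
      lt_of_le_of_lt ht.2 one_pos⟩)).continuousWithinAt

lemma F_hasDerivAt (hp : 2 ≤ p) (hq : 2 ≤ q) {s : ℝ} (hs0 : -1 < s) (hs1 : s < 1) :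
    HasDerivAt (genF p q) (g p q s) s := by
  have hmeas : StronglyMeasurableAtFilter (g p q) (𝓝 s) volume :=
    ContinuousAt.stronglyMeasurableAtFilter (isOpen_Ioo (a := (-1:ℝ)) (b := (1:ℝ)))
      (fun t ht => g_contAt hp hq (abs_lt.2 ⟨ht.1, ht.2⟩)) s ⟨hs0, hs1⟩
  exact intervalIntegral.integral_hasDerivAt_right (g_intInt hp hq hs0 hs1.le) hmeas
    (g_contAt hp hq (abs_lt.2 ⟨hs0, hs1⟩))

lemma F0 (p q : ℝ) : genF p q 0 = 0 := intervalIntegral.integral_same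

lemma F_strictMonoOn (hp : 2 ≤ p) (hq : 2 ≤ q) : StrictMonoOn (genF p q) (Icc 0 1) := by
  intro a ha b hb hab
  have hint : IntervalIntegrable (g p q) volume a b := (g_intInt01 hp hq).mono_set (by
    rw [uIcc_of_le hab.le, uIcc_of_le (zero_le_one' ℝ)]
    exact Icc_subset_Icc ha.1 hb.2)
  have h0a : IntervalIntegrable (g p q) volume 0 a := g_intInt hp hq (by linarith [ha.1]) ha.2
  have key : genF p q b = genF p q a + ∫ t in a..b, g p q t := by
    rw [genF_eq, genF_eq, intervalIntegral.integral_add_adjacent_intervals h0a hint]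
  have pos : 0 < ∫ t in a..b, g p q t :=
    intervalIntegral.intervalIntegral_pos_of_pos_on hint
      (fun x hx => g_pos hq (le_of_lt (lt_of_le_of_lt ha.1 hx.1)) (lt_of_lt_of_le hx.2 hb.2)) hab
  linarith

lemma F1_pos (hp : 2 ≤ p) (hq : 2 ≤ q) : 0 < genF p q 1 := by
  have := F_strictMonoOn hp hq (left_mem_Icc.2 zero_le_one) (right_mem_Icc.2 zero_le_one) one_pos
  rwa [F0] at this

lemma F_nonneg (hp : 2 ≤ p) (hq : 2 ≤ q) {s : ℝ} (hs : s ∈ Icc (0:ℝ) 1) : 0 ≤ genF p q s := by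
  rcases eq_or_lt_of_le hs.1 with h | h
  · rw [← h, F0]
  · have := F_strictMonoOn hp hq (left_mem_Icc.2 zero_le_one) hs h
    rw [F0] at this; exact this.le

lemma F_contOn (hp : 2 ≤ p) (hq : 2 ≤ q) : ContinuousOn (genF p q) (Icc 0 1) := by
  have h := intervalIntegral.continuousOn_primitive_interval' (g_intInt01 hp hq)
    (left_mem_uIcc (a := (0:ℝ)) (b := 1))
  rwa [uIcc_of_le (zero_le_one' ℝ)] at h


lemma A_bdd (p q x : ℝ) : BddAbove {s : ℝ | s ∈ Icc (0:ℝ) 1 ∧ genF p q s ≤ x} :=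
  bddAbove_Icc.mono (fun s hs => hs.1)

lemma sinBase_nonneg (p q : ℝ) {x : ℝ} (hx : 0 ≤ x) : 0 ≤ sinBase p q x :=
  le_csSup (A_bdd p q x) ⟨⟨le_rfl, zero_le_one⟩, by rw [F0]; exact hx⟩

lemma sinBase_le_one (p q x : ℝ) : sinBase p q x ≤ 1 :=
  Real.sSup_le (fun s hs => hs.1.2) zero_le_one

lemma sinBase_mono (hp : 2 ≤ p) (hq : 2 ≤ q) {x y : ℝ} (hx : 0 ≤ x) (hxy : x ≤ y) :
    sinBase p q x ≤ sinBase p q y :=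
  csSup_le_csSup (A_bdd p q y) ⟨0, ⟨le_rfl, zero_le_one⟩, by rw [F0]; exact hx⟩
    (fun s hs => ⟨hs.1, hs.2.trans hxy⟩)

lemma sinBase_comp_F (hp : 2 ≤ p) (hq : 2 ≤ q) {s : ℝ} (hs : s ∈ Icc (0:ℝ) 1) :
    sinBase p q (genF p q s) = s := by
  have hset : {s' : ℝ | s' ∈ Icc (0:ℝ) 1 ∧ genF p q s' ≤ genF p q s} = Icc 0 s := by
    ext s'
    constructor
    · rintro ⟨hs', hle⟩
      refine ⟨hs'.1, ?_⟩
      by_contra hcon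
      push_neg at hcon
      exact absurd hle (not_le.2 (F_strictMonoOn hp hq hs hs' hcon))
    · rintro ⟨h0, h1⟩
      exact ⟨⟨h0, h1.trans hs.2⟩,
        (F_strictMonoOn hp hq).monotoneOn ⟨h0, h1.trans hs.2⟩ hs h1⟩
  rw [sinBase, hset, csSup_Icc hs.1]

lemma sinBase_zero (hp : 2 ≤ p) (hq : 2 ≤ q) : sinBase p q 0 = 0 := by
  have := sinBase_comp_F hp hq (left_mem_Icc.2 zero_le_one)
  rwa [F0] at this

lemma F_comp_sinBase (hp : 2 ≤ p) (hq : 2 ≤ q) {x : ℝ} (hx : x ∈ Icc 0 (genF p q 1)) :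
    genF p q (sinBase p q x) = x ∧ sinBase p q x ∈ Icc (0:ℝ) 1 := by
  obtain ⟨s₀, hs₀, hFs₀⟩ := intermediate_value_Icc zero_le_one (F_contOn hp hq)
    (by rw [F0]; exact hx)
  rw [← hFs₀, sinBase_comp_F hp hq hs₀]
  exact ⟨rfl, hs₀⟩

lemma sinBase_mem_Ioo (hp : 2 ≤ p) (hq : 2 ≤ q) {x : ℝ} (hx : x ∈ Ioo 0 (genF p q 1)) :
    sinBase p q x ∈ Ioo (0:ℝ) 1 := by
  obtain ⟨hFs, hmem⟩ := F_comp_sinBase hp hq ⟨hx.1.le, hx.2.le⟩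
  constructor
  · rcases eq_or_lt_of_le hmem.1 with h | h
    · exfalso
      rw [← h, F0] at hFs
      exact absurd hFs.symm (ne_of_gt hx.1)
    · exact h
  · rcases eq_or_lt_of_le hmem.2 with h | h
    · exfalso
      rw [h] at hFs
      exact absurd hFs (ne_of_gt hx.2)
    · exact h

lemma sinBase_contAt (hp : 2 ≤ p) (hq : 2 ≤ q) {x : ℝ} (hx : x ∈ Ioo 0 (genF p q 1)) :
    ContinuousAt (sinBase p q) x := by
  obtain ⟨hFs, hmem⟩ := F_comp_sinBase hp hq ⟨hx.1.le, hx.2.le⟩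
  obtain ⟨hs0, hs1⟩ := sinBase_mem_Ioo hp hq hx
  rw [ContinuousAt]
  refine tendsto_order.2 ⟨?_, ?_⟩
  · intro b hb
    rcases lt_or_ge b 0 with hb0 | hb0
    · filter_upwards [eventually_gt_nhds hx.1] with y hy
      exact lt_of_lt_of_le hb0 (sinBase_nonneg p q hy.le)
    · set b' := (b + sinBase p q x) / 2 with hb'def
      have hb'1 : b < b' := by rw [hb'def]; linarith
      have hb'2 : b' < sinBase p q x := by rw [hb'def]; linarith
      have hb'mem : b' ∈ Icc (0:ℝ) 1 := ⟨by linarith, by linarith [hmem.2]⟩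
      have hF : genF p q b' < x := by
        rw [← hFs]
        exact F_strictMonoOn hp hq hb'mem hmem hb'2
      filter_upwards [eventually_gt_nhds hF] with y hy
      have hkey : b' ≤ sinBase p q y := by
        rw [← sinBase_comp_F hp hq hb'mem]
        exact sinBase_mono hp hq (F_nonneg hp hq hb'mem) hy.le
      linarith
  · intro b hb
    rcases le_or_gt b 1 with hb1 | hb1
    · set b' := (sinBase p q x + b) / 2 with hb'def
      have hb'1 : sinBase p q x < b' := by rw [hb'def]; linarith
      have hb'2 : b' < b := by rw [hb'def]; linarith
      have hb'mem : b' ∈ Icc (0:ℝ) 1 := ⟨by linarith, by linarith⟩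
      have hF : x < genF p q b' := by
        rw [← hFs]
        exact F_strictMonoOn hp hq hmem hb'mem hb'1
      filter_upwards [eventually_lt_nhds hF, eventually_gt_nhds hx.1] with y hy hy0
      have hkey : sinBase p q y ≤ b' := by
        rw [← sinBase_comp_F hp hq hb'mem]
        exact sinBase_mono hp hq hy0.le hy.le
      linarith
    · filter_upwards with y
      exact lt_of_le_of_lt (sinBase_le_one p q y) hb1

lemma sinBase_contWithin0 (hp : 2 ≤ p) (hq : 2 ≤ q) :
    ContinuousWithinAt (sinBase p q) (Ici 0) 0 := by
  rw [ContinuousWithinAt, sinBase_zero hp hq]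
  refine tendsto_order.2 ⟨?_, ?_⟩
  · intro b hb
    filter_upwards [self_mem_nhdsWithin] with y hy
    exact lt_of_lt_of_le hb (sinBase_nonneg p q hy)
  · intro b hb
    rcases le_or_gt b 1 with hb1 | hb1
    · set b' := b / 2 with hb'def
      have hb'mem : b' ∈ Icc (0:ℝ) 1 := ⟨by rw [hb'def]; linarith, by rw [hb'def]; linarith⟩
      have hF : 0 < genF p q b' := by
        have := F_strictMonoOn hp hq (left_mem_Icc.2 zero_le_one) hb'mem
          (by rw [hb'def]; linarith)
        rwa [F0] at this
      filter_upwards [(eventually_lt_nhds hF).filter_mono nhdsWithin_le_nhds,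
        self_mem_nhdsWithin] with y hy hy0
      have hkey : sinBase p q y ≤ b' := by
        rw [← sinBase_comp_F hp hq hb'mem]
        exact sinBase_mono hp hq hy0 hy.le
      have : b' < b := by rw [hb'def]; linarith
      linarith
    · filter_upwards with y
      exact lt_of_le_of_lt (sinBase_le_one p q y) hb1


lemma phi_eq_inv_g (hq : 2 ≤ q) {s : ℝ} (h0 : 0 ≤ s) (h1 : s < 1) :
    phi p q s = (g p q s)⁻¹ := by
  rw [phi, g, Real.rpow_neg (one_sub_pos hq (by rwa [abs_of_nonneg h0])).le, inv_inv]

lemma phi_pos (hq : 2 ≤ q) {s : ℝ} (h0 : 0 ≤ s) (h1 : s < 1) : 0 < phi p q s :=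
  Real.rpow_pos_of_pos (one_sub_pos hq (by rwa [abs_of_nonneg h0])) _

lemma phi_zero (hp : 2 ≤ p) (hq : 2 ≤ q) : phi p q 0 = 1 := by
  rw [phi, Real.zero_rpow (ne_of_gt (hq0 hq)), sub_zero, Real.one_rpow]

lemma sinBase_hasDerivAt (hp : 2 ≤ p) (hq : 2 ≤ q) {x : ℝ} (hx : x ∈ Ioo 0 (genF p q 1)) :
    HasDerivAt (sinBase p q) (phi p q (sinBase p q x)) x := by
  obtain ⟨hFs, _⟩ := F_comp_sinBase hp hq ⟨hx.1.le, hx.2.le⟩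
  obtain ⟨hs0, hs1⟩ := sinBase_mem_Ioo hp hq hx
  have hF' : HasDerivAt (genF p q) (g p q (sinBase p q x)) (sinBase p q x) :=
    F_hasDerivAt hp hq (by linarith) hs1
  have hfg : ∀ᶠ y in 𝓝 x, genF p q (sinBase p q y) = y := by
    filter_upwards [isOpen_Ioo.mem_nhds hx] with y hy
    exact (F_comp_sinBase hp hq ⟨hy.1.le, hy.2.le⟩).1
  have h := HasDerivAt.of_local_left_inverse (sinBase_contAt hp hq hx) hF'
    (ne_of_gt (g_pos hq hs0.le hs1)) hfg
  rwa [← phi_eq_inv_g hq hs0.le hs1] at h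

lemma phi_hasDerivAt (hp : 2 ≤ p) (hq : 2 ≤ q) {s : ℝ} (h0 : 0 < s) (h1 : s < 1) :
    HasDerivAt (phi p q) (-(q / p) * s ^ (q - 1) * (1 - s ^ q) ^ (1 / p - 1)) s := by
  have hbase : 0 < 1 - s ^ q := one_sub_pos hq (by rwa [abs_of_nonneg h0.le])
  have hin : HasDerivAt (fun u : ℝ => 1 - u ^ q) (-(q * s ^ (q - 1))) s := by
    have h := Real.hasDerivAt_rpow_const (x := s) (p := q) (Or.inl (ne_of_gt h0))
    simpa [Pi.sub_def] using (hasDerivAt_const s (1:ℝ)).sub h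
  have hout : HasDerivAt (fun v : ℝ => v ^ (1 / p)) ((1 / p) * (1 - s ^ q) ^ (1 / p - 1))
      (1 - s ^ q) := Real.hasDerivAt_rpow_const (Or.inl (ne_of_gt hbase))
  have h := hout.comp s hin
  have heq : phi p q = (fun v : ℝ => v ^ (1 / p)) ∘ (fun u : ℝ => 1 - u ^ q) := rfl
  rw [heq]
  exact h.congr_deriv (by ring)

lemma phi_hasDerivAt_zero (hp : 2 ≤ p) (hq : 2 ≤ q) : HasDerivAt (phi p q) 0 0 := by
  have hq1 : (0:ℝ) ^ (q - 1) = 0 := Real.zero_rpow (by intro h; linarith [(sub_eq_zero.1 h).symm] : q - 1 ≠ 0)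
  have hin : HasDerivAt (fun u : ℝ => 1 - u ^ q) 0 0 := by
    have h := Real.hasDerivAt_rpow_const (x := (0:ℝ)) (p := q) (Or.inr (by linarith))
    have h2 := (hasDerivAt_const (0:ℝ) (1:ℝ)).sub h
    simpa [hq1, Pi.sub_def] using h2
  have h00 : (1:ℝ) - (0:ℝ) ^ q = 1 := by rw [Real.zero_rpow (ne_of_gt (hq0 hq)), sub_zero]
  have hout : HasDerivAt (fun v : ℝ => v ^ (1 / p)) ((1 / p) * (1:ℝ) ^ (1 / p - 1))
      ((1:ℝ) - (0:ℝ) ^ q) := by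
    rw [h00]
    exact Real.hasDerivAt_rpow_const (Or.inl one_ne_zero)
  have h := hout.comp 0 hin
  have heq : phi p q = (fun v : ℝ => v ^ (1 / p)) ∘ (fun u : ℝ => 1 - u ^ q) := rfl
  rw [heq]
  simpa using h


lemma half_genPi (p q : ℝ) : genPi p q / 2 = genF p q 1 := by rw [genPi]; ring

lemma genSin_eq_on_main (hp : 2 ≤ p) (hq : 2 ≤ q) {y : ℝ} (h0 : 0 ≤ y)
    (h1 : y < genF p q 1) : genSin p q y = sinBase p q y := by
  have hF1 : 0 < genF p q 1 := F1_pos hp hq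
  have ha : 0 < genPi p q := by rw [genPi]; linarith
  have hfloor : ⌊y / (2 * genPi p q)⌋ = 0 := by
    rw [Int.floor_eq_zero_iff]
    constructor
    · positivity
    · rw [div_lt_one (by positivity)]
      rw [genPi]; linarith
  rw [genSin]
  simp only [hfloor, Int.cast_zero, mul_zero, sub_zero]
  rw [if_pos (by rw [genPi]; linarith : y ≤ genPi p q), sinHalf,
    if_pos (by rw [half_genPi]; exact h1.le)]

lemma genSin_eq_on_neg (hp : 2 ≤ p) (hq : 2 ≤ q) {y : ℝ} (h0 : -genF p q 1 < y)
    (h1 : y < 0) : genSin p q y = -(sinBase p q (-y)) := by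
  have hF1 : 0 < genF p q 1 := F1_pos hp hq
  have ha : 0 < genPi p q := by rw [genPi]; linarith
  have haF : genPi p q = 2 * genF p q 1 := rfl
  have hfloor : ⌊y / (2 * genPi p q)⌋ = -1 := by
    rw [Int.floor_eq_iff]
    push_cast
    constructor
    · rw [le_div_iff₀ (by positivity)]
      rw [haF] at *
      linarith
    · rw [div_lt_iff₀ (by positivity)]
      linarith
  rw [genSin]
  simp only [hfloor, Int.cast_neg, Int.cast_one, mul_neg, mul_one, sub_neg_eq_add]
  rw [if_neg (by rw [haF] at *; push_neg; linarith : ¬ (y + 2 * genPi p q ≤ genPi p q))]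
  have harg : 2 * genPi p q - (y + 2 * genPi p q) = -y := by ring
  rw [harg, sinHalf, if_pos (by rw [half_genPi]; linarith)]

lemma genSin_eq_on_upper (hp : 2 ≤ p) (hq : 2 ≤ q) {y : ℝ} (h0 : genF p q 1 < y)
    (h1 : y < genPi p q) : genSin p q y = sinBase p q (genPi p q - y) := by
  have hF1 : 0 < genF p q 1 := F1_pos hp hq
  have ha : 0 < genPi p q := by rw [genPi]; linarith
  have hfloor : ⌊y / (2 * genPi p q)⌋ = 0 := by
    rw [Int.floor_eq_zero_iff]
    constructor
    · have : 0 < y := lt_trans hF1 h0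
      positivity
    · rw [div_lt_one (by positivity)]
      linarith
  rw [genSin]
  simp only [hfloor, Int.cast_zero, mul_zero, sub_zero]
  rw [if_pos h1.le, sinHalf, if_neg (by rw [half_genPi]; linarith)]


lemma genSin_hasDerivAt_main (hp : 2 ≤ p) (hq : 2 ≤ q) {x : ℝ} (hx : x ∈ Ioo 0 (genF p q 1)) :
    HasDerivAt (genSin p q) (phi p q (sinBase p q x)) x := by
  have hev : genSin p q =ᶠ[𝓝 x] sinBase p q := by
    filter_upwards [isOpen_Ioo.mem_nhds hx] with y hy
    exact genSin_eq_on_main hp hq hy.1.le hy.2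
  exact (sinBase_hasDerivAt hp hq hx).congr_of_eventuallyEq hev

lemma genSin_hasDerivAt_upper (hp : 2 ≤ p) (hq : 2 ≤ q) {x : ℝ}
    (hx : x ∈ Ioo (genF p q 1) (genPi p q)) :
    HasDerivAt (genSin p q) (-(phi p q (sinBase p q (genPi p q - x)))) x := by
  have haF : genPi p q = 2 * genF p q 1 := rfl
  have hw : genPi p q - x ∈ Ioo 0 (genF p q 1) :=
    ⟨by linarith [hx.2], by rw [haF] at *; linarith [hx.1]⟩
  have hS := sinBase_hasDerivAt hp hq hw
  have hlin : HasDerivAt (fun y : ℝ => genPi p q - y) (-1) x := by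
    simpa [Pi.sub_def] using (hasDerivAt_const x (genPi p q)).sub (hasDerivAt_id x)
  have hcomp := hS.comp x hlin
  have hev : genSin p q =ᶠ[𝓝 x] (sinBase p q ∘ fun y : ℝ => genPi p q - y) := by
    filter_upwards [isOpen_Ioo.mem_nhds hx] with y hy
    exact genSin_eq_on_upper hp hq hy.1 hy.2
  have h := hcomp.congr_of_eventuallyEq hev
  exact h.congr_deriv (by ring)

lemma genSin_hasDerivAt_neg (hp : 2 ≤ p) (hq : 2 ≤ q) {x : ℝ}
    (hx : x ∈ Ioo (-(genF p q 1)) 0) :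
    HasDerivAt (genSin p q) (phi p q (sinBase p q (-x))) x := by
  have hw : -x ∈ Ioo 0 (genF p q 1) := ⟨by linarith [hx.2], by linarith [hx.1]⟩
  have hS := sinBase_hasDerivAt hp hq hw
  have hcomp := (hS.comp x (hasDerivAt_neg x)).neg
  have hev : genSin p q =ᶠ[𝓝 x] fun y : ℝ => -((sinBase p q ∘ Neg.neg) y) := by
    filter_upwards [isOpen_Ioo.mem_nhds hx] with y hy
    exact genSin_eq_on_neg hp hq hy.1 hy.2
  have h := hcomp.congr_of_eventuallyEq hev
  exact h.congr_deriv (by ring)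

lemma g_zero (hp : 2 ≤ p) (hq : 2 ≤ q) : g p q 0 = 1 := by
  rw [g, Real.zero_rpow (ne_of_gt (hq0 hq)), sub_zero, Real.one_rpow]

/-- The odd extension of `genF`. -/
noncomputable def Fo (p q : ℝ) (s : ℝ) : ℝ := if 0 ≤ s then genF p q s else -(genF p q (-s))

lemma Fo_hasDerivAt_zero (hp : 2 ≤ p) (hq : 2 ≤ q) : HasDerivAt (Fo p q) 1 0 := by
  have hF := F_hasDerivAt hp hq (by norm_num) (by norm_num : (0:ℝ) < 1)
  rw [g_zero hp hq] at hF
  have hright : HasDerivWithinAt (Fo p q) 1 (Ici 0) 0 :=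
    hF.hasDerivWithinAt.congr (fun y hy => if_pos hy) (if_pos le_rfl)
  have hG : HasDerivAt (fun y : ℝ => -(genF p q (-y))) 1 0 := by
    have hF' : HasDerivAt (genF p q) 1 (-(0:ℝ)) := by simpa using hF
    have h1 := (hF'.comp 0 (hasDerivAt_neg 0)).neg
    simpa [Pi.neg_def, Function.comp_def] using h1
  have hleft : HasDerivWithinAt (Fo p q) 1 (Iic 0) 0 := by
    refine hG.hasDerivWithinAt.congr (fun y hy => ?_) ?_
    · rcases eq_or_lt_of_le (mem_Iic.1 hy) with h | h
      · rw [h, Fo, if_pos le_rfl, F0, neg_zero, F0, neg_zero]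
      · rw [Fo, if_neg (not_le.2 h)]
    · rw [Fo, if_pos le_rfl, F0, neg_zero, F0, neg_zero]
  have h2 := hleft.union hright
  rwa [Iic_union_Ici, hasDerivWithinAt_univ] at h2

lemma genSin_contAt_zero (hp : 2 ≤ p) (hq : 2 ≤ q) : ContinuousAt (genSin p q) 0 := by
  have hF1 : 0 < genF p q 1 := F1_pos hp hq
  have hright : ContinuousWithinAt (genSin p q) (Ici 0) 0 := by
    refine (sinBase_contWithin0 hp hq).congr_of_eventuallyEq ?_ ?_
    · have hmem : Ico (0:ℝ) (genF p q 1) ∈ 𝓝[Ici 0] 0 := by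
        rw [show Ico (0:ℝ) (genF p q 1) = Ici 0 ∩ Iio (genF p q 1) from rfl]
        exact inter_mem self_mem_nhdsWithin (nhdsWithin_le_nhds (Iio_mem_nhds hF1))
      filter_upwards [hmem] with y hy
      exact genSin_eq_on_main hp hq hy.1 hy.2
    · rw [genSin_eq_on_main hp hq le_rfl hF1]
  have hleft : ContinuousWithinAt (genSin p q) (Iic 0) 0 := by
    have hneg : ContinuousWithinAt (fun y : ℝ => -(sinBase p q (-y))) (Iic 0) 0 := by
      refine ContinuousWithinAt.neg ?_
      have hS0 : ContinuousWithinAt (sinBase p q) (Ici 0) (-(0:ℝ)) := by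
        simpa using sinBase_contWithin0 hp hq
      have := hS0.comp (f := fun y : ℝ => -y) (continuous_neg.continuousWithinAt)
        (fun y (hy : y ∈ Iic 0) => by simpa using hy)
      simpa [Function.comp_def] using this
    refine hneg.congr_of_eventuallyEq ?_ ?_
    · have hmem : Ioc (-(genF p q 1)) (0:ℝ) ∈ 𝓝[Iic 0] 0 := by
        rw [show Ioc (-(genF p q 1)) (0:ℝ) = Iic 0 ∩ Ioi (-(genF p q 1)) from by
          ext z; simp [and_comm]]
        exact inter_mem self_mem_nhdsWithin (nhdsWithin_le_nhds (Ioi_mem_nhds (by linarith)))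
      filter_upwards [hmem] with y hy
      rcases eq_or_lt_of_le hy.2 with h | h
      · rw [h]
        rw [genSin_eq_on_main hp hq le_rfl hF1, neg_zero, sinBase_zero hp hq, neg_zero]
      · exact genSin_eq_on_neg hp hq hy.1 h
    · rw [genSin_eq_on_main hp hq le_rfl hF1, neg_zero, sinBase_zero hp hq, neg_zero]
  have h2 := hleft.union hright
  rwa [Iic_union_Ici, continuousWithinAt_univ] at h2

lemma genSin_zero (hp : 2 ≤ p) (hq : 2 ≤ q) : genSin p q 0 = 0 := by
  rw [genSin_eq_on_main hp hq le_rfl (F1_pos hp hq), sinBase_zero hp hq]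

lemma genSin_hasDerivAt_zero (hp : 2 ≤ p) (hq : 2 ≤ q) : HasDerivAt (genSin p q) 1 0 := by
  have hF1 : 0 < genF p q 1 := F1_pos hp hq
  have hfg : ∀ᶠ y in 𝓝 0, Fo p q (genSin p q y) = y := by
    filter_upwards [isOpen_Ioo.mem_nhds (show (0:ℝ) ∈ Ioo (-(genF p q 1)) (genF p q 1) from
      ⟨by linarith, hF1⟩)] with y hy
    rcases le_or_gt 0 y with h | h
    · rw [genSin_eq_on_main hp hq h hy.2, Fo, if_pos (sinBase_nonneg p q h)]
      exact (F_comp_sinBase hp hq ⟨h, hy.2.le⟩).1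
    · have hw : -y ∈ Ioo 0 (genF p q 1) := ⟨by linarith, by linarith [hy.1]⟩
      have hpos := (sinBase_mem_Ioo hp hq hw).1
      rw [genSin_eq_on_neg hp hq hy.1 h, Fo, if_neg (by linarith), neg_neg]
      rw [(F_comp_sinBase hp hq ⟨hw.1.le, hw.2.le⟩).1]
      ring
  have hFo : HasDerivAt (Fo p q) 1 (genSin p q 0) := by
    rw [genSin_zero hp hq]
    exact Fo_hasDerivAt_zero hp hq
  have h := HasDerivAt.of_local_left_inverse (genSin_contAt_zero hp hq) hFo one_ne_zero hfg
  simpa using h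


lemma deriv2_main (hp : 2 ≤ p) (hq : 2 ≤ q) {x : ℝ} (hx : x ∈ Ioo 0 (genF p q 1)) :
    HasDerivAt (deriv (genSin p q))
      ((-(q / p) * (sinBase p q x) ^ (q - 1) * (1 - (sinBase p q x) ^ q) ^ (1 / p - 1))
        * phi p q (sinBase p q x)) x := by
  have hev : deriv (genSin p q) =ᶠ[𝓝 x] (phi p q ∘ sinBase p q) := by
    filter_upwards [isOpen_Ioo.mem_nhds hx] with y hy
    exact (genSin_hasDerivAt_main hp hq hy).deriv
  obtain ⟨hs0, hs1⟩ := sinBase_mem_Ioo hp hq hx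
  have hcomp := (phi_hasDerivAt hp hq hs0 hs1).comp x (sinBase_hasDerivAt hp hq hx)
  exact hcomp.congr_of_eventuallyEq hev

lemma deriv2_upper (hp : 2 ≤ p) (hq : 2 ≤ q) {x : ℝ}
    (hx : x ∈ Ioo (genF p q 1) (genPi p q)) :
    HasDerivAt (deriv (genSin p q))
      ((-(q / p) * (sinBase p q (genPi p q - x)) ^ (q - 1)
          * (1 - (sinBase p q (genPi p q - x)) ^ q) ^ (1 / p - 1))
        * phi p q (sinBase p q (genPi p q - x))) x := by
  have haF : genPi p q = 2 * genF p q 1 := rfl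
  have hw : genPi p q - x ∈ Ioo 0 (genF p q 1) :=
    ⟨by linarith [hx.2], by rw [haF] at *; linarith [hx.1]⟩
  obtain ⟨hs0, hs1⟩ := sinBase_mem_Ioo hp hq hw
  have hev : deriv (genSin p q) =ᶠ[𝓝 x]
      (fun y : ℝ => -(((phi p q ∘ sinBase p q) ∘ fun z : ℝ => genPi p q - z) y)) := by
    filter_upwards [isOpen_Ioo.mem_nhds hx] with y hy
    exact (genSin_hasDerivAt_upper hp hq hy).deriv
  have hlin : HasDerivAt (fun y : ℝ => genPi p q - y) (-1) x := by
    simpa [Pi.sub_def] using (hasDerivAt_const x (genPi p q)).sub (hasDerivAt_id x)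
  have hcomp := (((phi_hasDerivAt hp hq hs0 hs1).comp (genPi p q - x)
    (sinBase_hasDerivAt hp hq hw)).comp x hlin).neg
  have h := hcomp.congr_of_eventuallyEq hev
  exact h.congr_deriv (by ring)

/-- Auxiliary even function around `0` equal to `deriv (genSin p q)` near `0`. -/
noncomputable def E (p q : ℝ) (y : ℝ) : ℝ := phi p q (sinBase p q |y|)

lemma deriv_genSin_eventually_E (hp : 2 ≤ p) (hq : 2 ≤ q) :
    deriv (genSin p q) =ᶠ[𝓝 0] E p q := by
  have hF1 : 0 < genF p q 1 := F1_pos hp hq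
  filter_upwards [isOpen_Ioo.mem_nhds (show (0:ℝ) ∈ Ioo (-(genF p q 1)) (genF p q 1) from
    ⟨by linarith, hF1⟩)] with y hy
  rcases lt_trichotomy y 0 with h | h | h
  · rw [(genSin_hasDerivAt_neg hp hq ⟨hy.1, h⟩).deriv, E, abs_of_neg h]
  · rw [h, (genSin_hasDerivAt_zero hp hq).deriv, E, abs_zero, sinBase_zero hp hq,
      phi_zero hp hq]
  · rw [(genSin_hasDerivAt_main hp hq ⟨h, hy.2⟩).deriv, E, abs_of_pos h]

lemma sinBase_hasDerivWithinAt_zero (hp : 2 ≤ p) (hq : 2 ≤ q) :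
    HasDerivWithinAt (sinBase p q) 1 (Ici 0) 0 := by
  have hF1 : 0 < genF p q 1 := F1_pos hp hq
  refine ((genSin_hasDerivAt_zero hp hq).hasDerivWithinAt).congr_of_eventuallyEq ?_ ?_
  · have hmem : Ico (0:ℝ) (genF p q 1) ∈ 𝓝[Ici 0] 0 := by
      rw [show Ico (0:ℝ) (genF p q 1) = Ici 0 ∩ Iio (genF p q 1) from rfl]
      exact inter_mem self_mem_nhdsWithin (nhdsWithin_le_nhds (Iio_mem_nhds hF1))
    filter_upwards [hmem] with y hy
    exact (genSin_eq_on_main hp hq hy.1 hy.2).symm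
  · rw [genSin_zero hp hq, sinBase_zero hp hq]

lemma E_hasDerivAt_zero (hp : 2 ≤ p) (hq : 2 ≤ q) : HasDerivAt (E p q) 0 0 := by
  have hphi0 : HasDerivAt (phi p q) 0 (sinBase p q 0) := by
    rw [sinBase_zero hp hq]; exact phi_hasDerivAt_zero hp hq
  have hright : HasDerivWithinAt (E p q) 0 (Ici 0) 0 := by
    have h := (hphi0.comp_hasDerivWithinAt 0 (sinBase_hasDerivWithinAt_zero hp hq))
    have h0 : HasDerivWithinAt (phi p q ∘ sinBase p q) 0 (Ici 0) 0 := by simpa using h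
    refine h0.congr (fun y hy => ?_) ?_
    · rw [E, abs_of_nonneg (mem_Ici.1 hy)]; rfl
    · rw [E, abs_zero]; rfl
  have hleft : HasDerivWithinAt (E p q) 0 (Iic 0) 0 := by
    have hS' : HasDerivWithinAt (sinBase p q) 1 (Ici 0) (-(0:ℝ)) := by
      simpa using sinBase_hasDerivWithinAt_zero hp hq
    have hinner : HasDerivWithinAt (fun y : ℝ => sinBase p q (-y)) (1 * (-1)) (Iic 0) 0 := by
      exact hS'.comp 0 ((hasDerivAt_neg (0:ℝ)).hasDerivWithinAt)
        (fun y (hy : y ∈ Iic 0) => by simpa using hy) |>.congr (fun y _ => rfl) rfl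
    have hphi0' : HasDerivAt (phi p q) 0 (sinBase p q (-(0:ℝ))) := by
      rw [neg_zero, sinBase_zero hp hq]; exact phi_hasDerivAt_zero hp hq
    have h := hphi0'.comp_hasDerivWithinAt 0 hinner
    have h0 : HasDerivWithinAt (fun y : ℝ => phi p q (sinBase p q (-y))) 0 (Iic 0) 0 := by
      simpa [Function.comp_def] using h
    refine h0.congr (fun y hy => ?_) ?_
    · rw [E, abs_of_nonpos (mem_Iic.1 hy)]
    · rw [E, abs_zero, neg_zero]
  have h2 := hleft.union hright
  rwa [Iic_union_Ici, hasDerivWithinAt_univ] at h2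

lemma deriv2_zero (hp : 2 ≤ p) (hq : 2 ≤ q) : deriv (deriv (genSin p q)) 0 = 0 := by
  rw [(deriv_genSin_eventually_E hp hq).deriv_eq]
  exact (E_hasDerivAt_zero hp hq).deriv

lemma key_ineq (hp : 2 ≤ p) (hq : 2 ≤ q) {s : ℝ} (h0 : 0 < s) (h1 : s < 1) :
    (phi p q s) ^ 2
      - ((-(q / p) * s ^ (q - 1) * (1 - s ^ q) ^ (1 / p - 1)) * phi p q s) * s ≥ 1 := by
  have hpp := hp0 hp
  have hqq := hq0 hq
  have hu0 : 0 < s ^ q := Real.rpow_pos_of_pos h0 q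
  have hu1 : s ^ q < 1 := Real.rpow_lt_one h0.le h1 hqq
  set u := s ^ q with hu
  set v := 1 - u with hv
  have hv0 : 0 < v := by rw [hv]; linarith
  have hphi : phi p q s = v ^ (1/p) := rfl
  have hsq : s ^ (q - 1) * s = u := by
    rw [hu]
    nth_rewrite 2 [← Real.rpow_one s]
    rw [← Real.rpow_add h0]
    ring_nf
  have hsq2 : v ^ (1/p) * v ^ (1/p) = v ^ (2/p) := by
    rw [← Real.rpow_add hv0]; ring_nf
  have hsq3 : v ^ (1/p - 1) * v ^ (1/p) = v ^ (2/p - 1) := by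
    rw [← Real.rpow_add hv0]; ring_nf
  have transform : (phi p q s) ^ 2
      - ((-(q / p) * s ^ (q - 1) * v ^ (1 / p - 1)) * phi p q s) * s
      = v ^ (2/p) + (q/p) * u * v ^ (2/p - 1) := by
    rw [hphi]
    linear_combination hsq2 + (q/p) * (v ^ (1/p - 1) * v ^ (1/p)) * hsq + (q/p) * u * hsq3
  rw [ge_iff_le, transform]
  set P := v ^ ((2:ℝ)/p) with hP
  have hP0 : 0 < P := Real.rpow_pos_of_pos hv0 _
  have hQ : v ^ ((2:ℝ)/p - 1) = P / v := by
    rw [hP, Real.rpow_sub hv0, Real.rpow_one]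
  have hα1 : (2:ℝ)/p ≤ 1 := (div_le_one hpp).2 hp
  have amgm : v ^ (1 - 2/p) ≤ (1 - 2/p) * v + (2/p) * 1 := by
    refine Real.geom_mean_le_arith_mean2_weighted (by linarith) (by positivity) hv0.le
      zero_le_one (by ring) |>.trans_eq' ?_
    rw [Real.one_rpow, mul_one]
  have hPv : P * v ^ (1 - 2/p) = v := by
    rw [hP, ← Real.rpow_add hv0, show (2:ℝ)/p + (1 - 2/p) = 1 by ring, Real.rpow_one]
  have hqp : (2:ℝ)/p ≤ q/p := by gcongr
  have keystep : v ≤ P * (v + (q/p) * u) := by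
    calc v = P * v ^ (1 - 2/p) := hPv.symm
    _ ≤ P * ((1 - 2/p) * v + (2/p) * 1) := mul_le_mul_of_nonneg_left amgm hP0.le
    _ ≤ P * (v + (q/p) * u) := by
        refine mul_le_mul_of_nonneg_left ?_ hP0.le
        have h2 : (2:ℝ)/p * u ≤ q/p * u := mul_le_mul_of_nonneg_right hqp hu0.le
        have hvu : v = 1 - u := hv
        nlinarith [h2]
  rw [hQ]
  rw [show P + q/p * u * (P/v) = P * (v + (q/p) * u) / v from by field_simp]
  rw [le_div_iff₀ hv0, one_mul]
  exact keystep

end S4aux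

/-- For `2 ≤ p, q < ∞`, `S = sin_{p,q}` satisfies condition (S4):
`S'(x)² − S''(x) S(x) ≥ 1` on `[0, π_{p,q}) \ {π_{p,q}/2}`. -/
theorem genSin_satisfies_S4 (p q : ℝ) (hp : 2 ≤ p) (hq : 2 ≤ q) :
    ∀ x ∈ Ico 0 (genPi p q), x ≠ genPi p q / 2 →
      (deriv (genSin p q) x) ^ 2
        - deriv (deriv (genSin p q)) x * genSin p q x ≥ 1 := by
  intro x hx hxne
  have hF1 : 0 < genF p q 1 := S4aux.F1_pos hp hq
  have hhalf : genPi p q / 2 = genF p q 1 := S4aux.half_genPi p q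
  rcases eq_or_lt_of_le hx.1 with h0 | h0
  · rw [← h0]
    rw [(S4aux.genSin_hasDerivAt_zero hp hq).deriv, S4aux.deriv2_zero hp hq,
      S4aux.genSin_zero hp hq]
    norm_num
  rcases lt_trichotomy x (genF p q 1) with hlt | heq | hgt
  · have hx' : x ∈ Ioo 0 (genF p q 1) := ⟨h0, hlt⟩
    rw [(S4aux.genSin_hasDerivAt_main hp hq hx').deriv, (S4aux.deriv2_main hp hq hx').deriv,
      S4aux.genSin_eq_on_main hp hq h0.le hlt]
    obtain ⟨hs0, hs1⟩ := S4aux.sinBase_mem_Ioo hp hq hx'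
    exact S4aux.key_ineq hp hq hs0 hs1
  · exact absurd (by rw [hhalf]; exact heq) hxne
  · have hx' : x ∈ Ioo (genF p q 1) (genPi p q) := ⟨hgt, hx.2⟩
    rw [(S4aux.genSin_hasDerivAt_upper hp hq hx').deriv, (S4aux.deriv2_upper hp hq hx').deriv,
      S4aux.genSin_eq_on_upper hp hq hgt hx.2, neg_sq]
    have hw : genPi p q - x ∈ Ioo 0 (genF p q 1) :=
      ⟨by linarith [hx.2], by rw [show genPi p q = 2 * genF p q 1 from rfl] at *; linarith⟩
    obtain ⟨hs0, hs1⟩ := S4aux.sinBase_mem_Ioo hp hq hw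
    exact S4aux.key_ineq hp hq hs0 hs1
end

section
/- Let 2 ≤ p < ∞ and 2 ≤ q < ∞, and define h(t) := (1 − q/p) t² + (q/p) t^{2−p} − 1 for t ∈ (0,1]. Then h is nonincreasing on (0,1]; in particular h(t) ≥ h(1) = 0 for all t ∈ (0,1]. -/
open Real Set

/-- For `2 ≤ p, q < ∞`, the function `h(t) = (1 − q/p)t² + (q/p)t^{2−p} − 1` is
nonincreasing on `(0,1]`; in particular `h(1) = 0` and `h(t) ≥ 0` on `(0,1]`. -/
theorem h_antitone (p q : ℝ) (hp : 2 ≤ p) (hq : 2 ≤ q) :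
    AntitoneOn (fun t : ℝ => (1 - q / p) * t ^ 2 + (q / p) * t ^ (2 - p) - 1)
        (Ioc 0 1) ∧
      (1 - q / p) * (1:ℝ) ^ 2 + (q / p) * (1:ℝ) ^ (2 - p) - 1 = 0 ∧
      ∀ t ∈ Ioc (0:ℝ) 1,
        0 ≤ (1 - q / p) * t ^ 2 + (q / p) * t ^ (2 - p) - 1 := by
  have hp0 : (0:ℝ) < p := by linarith
  have hq0 : (0:ℝ) < q := by linarith
  set c := q / p with hc
  have hc0 : 0 < c := div_pos hq0 hp0
  have hcp : c * p = q := div_mul_cancel₀ q (ne_of_gt hp0)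
  have hderiv : ∀ t : ℝ, 0 < t →
      HasDerivAt (fun t : ℝ => (1 - c) * t ^ 2 + c * t ^ (2 - p) - 1)
        ((1 - c) * (2 * t) + c * ((2 - p) * t ^ (1 - p))) t := by
    intro t ht
    have h1 : HasDerivAt (fun x : ℝ => x ^ 2) (2 * t) t := by
      simpa using (hasDerivAt_pow 2 t)
    have h2 : HasDerivAt (fun x : ℝ => x ^ (2 - p)) ((2 - p) * t ^ (1 - p)) t := by
      have := Real.hasDerivAt_rpow_const (x := t) (p := 2 - p) (Or.inl (ne_of_gt ht))
      convert this using 2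
      ring_nf
    exact (((h1.const_mul (1 - c)).add (h2.const_mul c)).sub_const 1)
  have hanti : AntitoneOn (fun t : ℝ => (1 - c) * t ^ 2 + c * t ^ (2 - p) - 1)
      (Ioc 0 1) := by
    apply antitoneOn_of_deriv_nonpos (convex_Ioc 0 1)
    · apply ContinuousOn.sub _ continuousOn_const
      apply ContinuousOn.add
      · exact continuousOn_const.mul (continuousOn_pow 2)
      · apply continuousOn_const.mul
        intro t ht
        exact (Real.continuousAt_rpow_const t (2 - p)
          (Or.inl (ne_of_gt ht.1))).continuousWithinAt
    · intro t ht
      rw [interior_Ioc] at ht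
      exact (hderiv t ht.1).differentiableAt.differentiableWithinAt
    · intro t ht
      rw [interior_Ioc] at ht
      rw [(hderiv t ht.1).deriv]
      have ht0 := ht.1
      have ht1 := ht.2.le
      have hpow : t ^ (1:ℝ) ≤ t ^ (1 - p) :=
        Real.rpow_le_rpow_of_exponent_ge ht0 ht1 (by linarith)
      rw [Real.rpow_one] at hpow
      have h2p : 2 - p ≤ 0 := by linarith
      have hmul : (2 - p) * t ^ (1 - p) ≤ (2 - p) * t :=
        mul_le_mul_of_nonpos_left hpow h2p
      nlinarith [mul_le_mul_of_nonneg_left hmul hc0.le, ht0.le]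
  refine ⟨hanti, by simp, ?_⟩
  intro t ht
  have := hanti ht (by constructor <;> norm_num) ht.2
  simpa using this
end
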